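/- arXiv:1804.04108 — 5 statements merged into one kernel-verified Lean document; each statement's English description precedes it below -/
import Mathlib

section
/- Let H ∈ (1/4,1/2) and let c̃ : [0,∞) → [0,∞) be measurable with c̃(t) ≤ C for all t ≥ 0 and c̃(t) ≤ C·t^{H−3/2} for all t ≥ 1, for some C > 0. Then lim_{T→∞} T^{−2} ∫₀^T ∫₀^T ∫₀^{t₁} ∫₀^{t₁} ∫₀^{t₂} ∫₀^{t₂} c̃(|r₁−r₂|) · (t₁−r₁)^{−H−1/2} (t₁−u₁)^{−H−1/2} (t₂−r₂)^{−H−1/2} (t₂−u₂)^{−H−1/2} du₂ dr₂ du₁ dr₁ dt₂ dt₁ = 0. -/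
open MeasureTheory Set

set_option maxHeartbeats 1000000
noncomputable section


namespace S11

variable {a b : ℝ}

/-- integrability of `y^a * (max 1 y)^b` on `(0,∞)`. -/
lemma mixed_intOn_Ioi (ha : -1 < a) (hab : a + b < -1) :
    IntegrableOn (fun y : ℝ => y ^ a * (max 1 y) ^ b) (Ioi 0) := by
  have h01 : IntegrableOn (fun y : ℝ => y ^ a * (max 1 y) ^ b) (Ioc 0 1) := by
    refine (intervalIntegral.intervalIntegrable_rpow' (a := 0) (b := 1) ha).1.congr_fun ?_ measurableSet_Ioc
    intro y hy
    simp only [max_eq_left hy.2, Real.one_rpow, mul_one]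
  have h1i : IntegrableOn (fun y : ℝ => y ^ a * (max 1 y) ^ b) (Ioi 1) := by
    refine (integrableOn_Ioi_rpow_of_lt hab one_pos).congr_fun ?_ measurableSet_Ioi
    intro y hy
    have hy0 : (0:ℝ) < y := lt_trans one_pos hy
    simp only [max_eq_right (le_of_lt (mem_Ioi.mp hy)), ← Real.rpow_add hy0]
  simpa [Ioc_union_Ioi_eq_Ioi (zero_le_one : (0:ℝ) ≤ 1)] using h01.union h1i

lemma mixed_int_Ioi_le (ha : -1 < a) (hab : a + b < -1) :
    ∫ y in Ioi (0:ℝ), y ^ a * (max 1 y) ^ b ≤ 1/(a+1) + 1/(-(a+b)-1) := by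
  have h01 : IntegrableOn (fun y : ℝ => y ^ a * (max 1 y) ^ b) (Ioc 0 1) :=
    (mixed_intOn_Ioi ha hab).mono_set Ioc_subset_Ioi_self
  have h1i : IntegrableOn (fun y : ℝ => y ^ a * (max 1 y) ^ b) (Ioi 1) :=
    (mixed_intOn_Ioi ha hab).mono_set (Ioi_subset_Ioi zero_le_one)
  rw [← Ioc_union_Ioi_eq_Ioi (zero_le_one : (0:ℝ) ≤ 1),
    setIntegral_union Ioc_disjoint_Ioi_same measurableSet_Ioi h01 h1i]
  have e1 : ∫ y in Ioc (0:ℝ) 1, y ^ a * (max 1 y) ^ b = 1/(a+1) := by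
    rw [setIntegral_congr_fun measurableSet_Ioc
      (g := fun y : ℝ => y ^ a) (by intro y hy; simp [max_eq_left hy.2])]
    rw [← intervalIntegral.integral_of_le (zero_le_one : (0:ℝ) ≤ 1),
      integral_rpow (Or.inl ha)]
    rw [Real.one_rpow, Real.zero_rpow (by linarith)]
    ring
  have e2 : ∫ y in Ioi (1:ℝ), y ^ a * (max 1 y) ^ b = 1/(-(a+b)-1) := by
    rw [setIntegral_congr_fun measurableSet_Ioi
      (g := fun y : ℝ => y ^ (a+b)) ?_]
    · rw [integral_Ioi_rpow_of_lt hab one_pos, Real.one_rpow]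
      rw [div_eq_div_iff (by linarith) (by linarith)]
      ring
    · intro y hy
      have hy0 : (0:ℝ) < y := lt_trans one_pos hy
      simp [max_eq_right (le_of_lt (mem_Ioi.mp hy)), ← Real.rpow_add hy0]
  rw [e1, e2]

end S11

namespace S11
open intervalIntegral
variable {a b t x : ℝ}

lemma mixed_intOn_Ioc (ha : -1 < a) (hab : a + b < -1) {t : ℝ} :
    IntegrableOn (fun y : ℝ => y ^ a * (max 1 y) ^ b) (Ioc 0 t) :=
  (mixed_intOn_Ioi ha hab).mono_set Ioc_subset_Ioi_self

lemma mixed_int_Ioc_le (ha : -1 < a) (hab : a + b < -1) {t : ℝ} :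
    ∫ y in Ioc (0:ℝ) t, y ^ a * (max 1 y) ^ b ≤ 1/(a+1) + 1/(-(a+b)-1) := by
  refine le_trans (setIntegral_mono_set (mixed_intOn_Ioi ha hab) ?_
    (HasSubset.Subset.eventuallyLE Ioc_subset_Ioi_self)) (mixed_int_Ioi_le ha hab)
  exact (ae_restrict_iff' measurableSet_Ioi).2 (Filter.Eventually.of_forall
    (fun y hy => by have h0 : (0:ℝ) < y := hy; positivity))

lemma mixed_intervalIntegrable (ha : -1 < a) (hab : a + b < -1) (ht : 0 ≤ t) :
    IntervalIntegrable (fun y : ℝ => y ^ a * (max 1 y) ^ b) volume 0 t :=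
  ⟨mixed_intOn_Ioc ha hab, by rw [Ioc_eq_empty (by simpa using ht)]; exact integrableOn_empty⟩

/-- the `G₁` piece: `r ↦ (t-r)^a (max 1 (t-r))^b` on `(0,t]`. -/
lemma G1_intOn (ha : -1 < a) (hab : a + b < -1) (ht : 0 ≤ t) :
    IntegrableOn (fun r : ℝ => (t - r) ^ a * (max 1 (t - r)) ^ b) (Ioc 0 t) := by
  have h := ((mixed_intervalIntegrable ha hab ht).comp_sub_left t).symm
  rw [sub_self, sub_zero] at h
  exact (intervalIntegrable_iff_integrableOn_Ioc_of_le ht).1 h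

lemma G1_int_le (ha : -1 < a) (hab : a + b < -1) (ht : 0 ≤ t) :
    ∫ r in Ioc (0:ℝ) t, (t - r) ^ a * (max 1 (t - r)) ^ b ≤ 1/(a+1) + 1/(-(a+b)-1) := by
  rw [← intervalIntegral.integral_of_le ht,
    intervalIntegral.integral_comp_sub_left (fun y : ℝ => y ^ a * (max 1 y) ^ b) t]
  simp only [sub_zero, sub_self]
  rw [intervalIntegral.integral_of_le ht]
  exact mixed_int_Ioc_le ha hab

lemma abs_mixed_integrable (ha : -1 < a) (hab : a + b < -1) :
    Integrable (fun s : ℝ => |s| ^ a * (max 1 |s|) ^ b) := by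
  have hIoi : IntegrableOn (fun s : ℝ => |s| ^ a * (max 1 |s|) ^ b) (Ioi 0) := by
    refine (mixed_intOn_Ioi ha hab).congr_fun ?_ measurableSet_Ioi
    intro y hy; simp [abs_of_pos (mem_Ioi.mp hy)]
  have hIio : IntegrableOn (fun s : ℝ => |s| ^ a * (max 1 |s|) ^ b) (Iio 0) := by
    have := (MeasurePreserving.integrableOn_comp_preimage
      (Measure.measurePreserving_neg (volume : Measure ℝ))
      (Homeomorph.neg ℝ).measurableEmbedding).2 hIoi
    have e : (Neg.neg ⁻¹' Ioi (0:ℝ)) = Iio 0 := by ext s; simp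
    simpa [Function.comp_def, abs_neg, e] using this
  have hc : IntegrableOn (fun s : ℝ => |s| ^ a * (max 1 |s|) ^ b) ({(0:ℝ)}ᶜ) := by
    rw [← Iio_union_Ioi]; exact hIio.union hIoi
  rw [← integrableOn_univ]
  exact hc.congr_set_ae (ae_eq_univ.2 (by simp [compl_compl])).symm

lemma abs_mixed_int_le (ha : -1 < a) (hab : a + b < -1) :
    ∫ s : ℝ, |s| ^ a * (max 1 |s|) ^ b ≤ 2 * (1/(a+1) + 1/(-(a+b)-1)) := by
  rw [integral_comp_abs (f := fun y : ℝ => y ^ a * (max 1 y) ^ b)]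
  have := mixed_int_Ioi_le ha hab
  linarith

/-- the `G₂` piece: `r ↦ |x-r|^a (max 1 |x-r|)^b` on `(0,t]`. -/
lemma G2_integrable (ha : -1 < a) (hab : a + b < -1) (x : ℝ) :
    Integrable (fun r : ℝ => |x - r| ^ a * (max 1 |x - r|) ^ b) :=
  (abs_mixed_integrable ha hab).comp_sub_left x

lemma G2_int_le (ha : -1 < a) (hab : a + b < -1) (x t : ℝ) :
    ∫ r in Ioc (0:ℝ) t, |x - r| ^ a * (max 1 |x - r|) ^ b
      ≤ 2 * (1/(a+1) + 1/(-(a+b)-1)) := by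
  refine le_trans (setIntegral_le_integral (G2_integrable ha hab x)
    (Filter.Eventually.of_forall (fun r => by positivity))) ?_
  have e : ∫ r : ℝ, |x - r| ^ a * (max 1 |x - r|) ^ b
      = ∫ s : ℝ, |s| ^ a * (max 1 |s|) ^ b :=
    integral_sub_left_eq_self (fun s : ℝ => |s| ^ a * (max 1 |s|) ^ b) volume x
  rw [e]; exact abs_mixed_int_le ha hab

end S11

namespace S11
lemma pointwise_core {α β θ θ' X Y Δ : ℝ}
    (hα0 : α < 0) (hβ : β ≤ 0)
    (hθ : 0 ≤ θ) (hθ1 : θ ≤ 1) (hθ'0 : 0 ≤ θ') (hθ'1 : θ' ≤ 1)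
    (hX : 0 < X) (hY : 0 < Y) (hΔ : 0 ≤ Δ) (htri : Δ ≤ X + Y) :
    X ^ α * (max 1 Y) ^ β ≤
      (2 ^ (min (-(α*θ)) (-(β*θ'))) * (2 ^ (-(α*θ)) + 2 ^ (-(β*θ')))) *
        (max 1 Δ) ^ (-(min (-(α*θ)) (-(β*θ')))) *
      (X ^ α * (max 1 X) ^ (β*(1-θ')) + Y ^ (α*(1-θ)) * (max 1 Y) ^ β) := by
  set γ := min (-(α*θ)) (-(β*θ')) with hγdef
  have hαθ : α * θ ≤ 0 := mul_nonpos_iff.2 (Or.inr ⟨hα0.le, hθ⟩)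
  have hβθ : β * θ' ≤ 0 := mul_nonpos_iff.2 (Or.inr ⟨hβ, hθ'0⟩)
  have hγ0 : 0 ≤ γ := le_min (by linarith) (by linarith)
  set M := max 1 Δ with hMdef
  have hM1 : (1:ℝ) ≤ M := le_max_left _ _
  have hMpos : (0:ℝ) < M := lt_of_lt_of_le one_pos hM1
  have h2γ : (1:ℝ) ≤ 2 ^ γ := Real.one_le_rpow one_le_two hγ0
  have h2αθ : (1:ℝ) ≤ 2 ^ (-(α*θ)) := Real.one_le_rpow one_le_two (by linarith)
  have h2βθ : (0:ℝ) < 2 ^ (-(β*θ')) := Real.rpow_pos_of_pos two_pos _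
  have hG1 : 0 ≤ X ^ α * (max 1 X) ^ (β*(1-θ')) := by positivity
  have hG2 : 0 ≤ Y ^ (α*(1-θ)) * (max 1 Y) ^ β := by positivity
  have hKp1 : (1:ℝ) ≤ 2 ^ γ * (2 ^ (-(α*θ)) + 2 ^ (-(β*θ'))) := by nlinarith
  rcases le_or_gt X Y with hBcase | hAcase
  · -- Case B : X ≤ Y
    have hM2 : M / 2 ≤ max 1 Y := by
      rcases le_total Δ 1 with h | h
      · have hM : M = 1 := max_eq_left h
        have := le_max_left 1 Y; linarith
      · have hM : M = Δ := max_eq_right h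
        have := le_max_right 1 Y; linarith
    have hsplit : (max 1 Y) ^ β = (max 1 Y) ^ (β*θ') * (max 1 Y) ^ (β*(1-θ')) := by
      rw [← Real.rpow_add (by positivity)]; ring_nf
    have h₁ : (max 1 Y) ^ (β*θ') ≤ (M/2) ^ (β*θ') :=
      Real.rpow_le_rpow_of_nonpos (by positivity) hM2 hβθ
    have h₂ : (max 1 Y) ^ (β*(1-θ')) ≤ (max 1 X) ^ (β*(1-θ')) :=
      Real.rpow_le_rpow_of_nonpos (by positivity) (max_le_max le_rfl hBcase)
        (mul_nonpos_iff.2 (Or.inr ⟨hβ, by linarith⟩))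
    have h₃ : (M/2) ^ (β*θ') = 2 ^ (-(β*θ')) * M ^ (β*θ') := by
      rw [Real.div_rpow hMpos.le (by norm_num), div_eq_mul_inv, ← Real.rpow_neg (by norm_num)]
      ring
    have h₄ : M ^ (β*θ') ≤ M ^ (-γ) :=
      Real.rpow_le_rpow_of_exponent_le hM1 (by have := min_le_right (-(α*θ)) (-(β*θ')); linarith)
    have hXα : 0 ≤ X ^ α := (Real.rpow_pos_of_pos hX _).le
    calc X ^ α * (max 1 Y) ^ β
        = X ^ α * ((max 1 Y) ^ (β*θ') * (max 1 Y) ^ (β*(1-θ'))) := by rw [← hsplit]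
      _ ≤ X ^ α * ((2 ^ (-(β*θ')) * M ^ (-γ)) * (max 1 X) ^ (β*(1-θ'))) := by
          apply mul_le_mul_of_nonneg_left _ hXα
          have hb1 : (max 1 Y) ^ (β*θ') ≤ 2 ^ (-(β*θ')) * M ^ (-γ) := by
            refine le_trans (le_trans h₁ (le_of_eq h₃)) ?_
            exact mul_le_mul_of_nonneg_left h₄ (le_of_lt h2βθ)
          exact mul_le_mul hb1 h₂ (by positivity) (by positivity)
      _ = (2 ^ (-(β*θ')) * M ^ (-γ)) * (X ^ α * (max 1 X) ^ (β*(1-θ'))) := by ring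
      _ ≤ (2 ^ γ * (2 ^ (-(α*θ)) + 2 ^ (-(β*θ'))) * M ^ (-γ)) *
            (X ^ α * (max 1 X) ^ (β*(1-θ')) + Y ^ (α*(1-θ)) * (max 1 Y) ^ β) := by
          have hMn : (0:ℝ) ≤ M ^ (-γ) := (Real.rpow_pos_of_pos hMpos _).le
          have hc : 2 ^ (-(β*θ')) * M ^ (-γ) ≤ 2 ^ γ * (2 ^ (-(α*θ)) + 2 ^ (-(β*θ'))) * M ^ (-γ) := by
            apply mul_le_mul_of_nonneg_right _ hMn
            nlinarith
          refine le_trans (mul_le_mul_of_nonneg_right hc hG1) ?_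
          have h0 : (0:ℝ) ≤ 2 ^ γ * (2 ^ (-(α*θ)) + 2 ^ (-(β*θ'))) * M ^ (-γ) := by positivity
          nlinarith
  · -- Case A : Y < X
    rcases lt_or_ge X 1 with hA2 | hA1
    · -- A2 : X < 1
      have hM2 : M ≤ 2 := by
        have : Δ ≤ 2 := by linarith
        exact max_le (by norm_num) this
      have hMg : (2:ℝ) ^ (-γ) ≤ M ^ (-γ) :=
        Real.rpow_le_rpow_of_nonpos hMpos hM2 (by linarith)
      have hKM : (1:ℝ) ≤ 2 ^ γ * (2 ^ (-(α*θ)) + 2 ^ (-(β*θ'))) * M ^ (-γ) := by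
        have h22 : (2:ℝ) ^ γ * 2 ^ (-γ) = 1 := by
          rw [← Real.rpow_add two_pos]; simp
        calc (1:ℝ) = 2 ^ γ * 2 ^ (-γ) := h22.symm
          _ ≤ 2 ^ γ * M ^ (-γ) := mul_le_mul_of_nonneg_left hMg (by positivity)
          _ = 2 ^ γ * 1 * M ^ (-γ) := by ring
          _ ≤ 2 ^ γ * (2 ^ (-(α*θ)) + 2 ^ (-(β*θ'))) * M ^ (-γ) := by
              refine mul_le_mul_of_nonneg_right ?_ (by positivity)
              refine mul_le_mul_of_nonneg_left (by linarith) (by positivity)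
      have hLHS : X ^ α * (max 1 Y) ^ β ≤ X ^ α * (max 1 X) ^ (β*(1-θ')) := by
        have hmx : max 1 X = 1 := max_eq_left hA2.le
        rw [hmx, Real.one_rpow]
        have : (max 1 Y) ^ β ≤ 1 :=
          Real.rpow_le_one_of_one_le_of_nonpos (le_max_left _ _) hβ
        nlinarith [Real.rpow_pos_of_pos hX α]
      calc X ^ α * (max 1 Y) ^ β
          ≤ X ^ α * (max 1 X) ^ (β*(1-θ')) := hLHS
        _ ≤ X ^ α * (max 1 X) ^ (β*(1-θ')) + Y ^ (α*(1-θ)) * (max 1 Y) ^ β :=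
            le_add_of_nonneg_right hG2
        _ ≤ 2 ^ γ * (2 ^ (-(α*θ)) + 2 ^ (-(β*θ'))) * M ^ (-γ) *
              (X ^ α * (max 1 X) ^ (β*(1-θ')) + Y ^ (α*(1-θ)) * (max 1 Y) ^ β) :=
            le_mul_of_one_le_left (by positivity) hKM
    · -- A1 : 1 ≤ X
      have hXM : M / 2 ≤ X := by
        rcases le_total Δ 1 with h | h
        · have hM : M = 1 := max_eq_left h; linarith
        · have hM : M = Δ := max_eq_right h; linarith
      have hsplit : X ^ α = X ^ (α*θ) * X ^ (α*(1-θ)) := by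
        rw [← Real.rpow_add hX]; ring_nf
      have h₁ : X ^ (α*θ) ≤ (M/2) ^ (α*θ) :=
        Real.rpow_le_rpow_of_nonpos (by positivity) hXM hαθ
      have h₃ : (M/2) ^ (α*θ) = 2 ^ (-(α*θ)) * M ^ (α*θ) := by
        rw [Real.div_rpow hMpos.le (by norm_num), div_eq_mul_inv, ← Real.rpow_neg (by norm_num)]
        ring
      have h₄ : M ^ (α*θ) ≤ M ^ (-γ) :=
        Real.rpow_le_rpow_of_exponent_le hM1 (by have := min_le_left (-(α*θ)) (-(β*θ')); linarith)
      have h₂ : X ^ (α*(1-θ)) ≤ Y ^ (α*(1-θ)) :=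
        Real.rpow_le_rpow_of_nonpos hY hAcase.le
          (mul_nonpos_iff.2 (Or.inr ⟨hα0.le, by linarith⟩))
      calc X ^ α * (max 1 Y) ^ β
          = (X ^ (α*θ) * X ^ (α*(1-θ))) * (max 1 Y) ^ β := by rw [← hsplit]
        _ ≤ ((2 ^ (-(α*θ)) * M ^ (-γ)) * Y ^ (α*(1-θ))) * (max 1 Y) ^ β := by
            refine mul_le_mul_of_nonneg_right ?_ (by positivity)
            refine mul_le_mul (le_trans h₁ ?_) h₂ (by positivity) (by positivity)
            rw [h₃]
            exact mul_le_mul_of_nonneg_left h₄ (by positivity)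
        _ = (2 ^ (-(α*θ)) * M ^ (-γ)) * (Y ^ (α*(1-θ)) * (max 1 Y) ^ β) := by ring
        _ ≤ (2 ^ γ * (2 ^ (-(α*θ)) + 2 ^ (-(β*θ'))) * M ^ (-γ)) *
              (Y ^ (α*(1-θ)) * (max 1 Y) ^ β) := by
            refine mul_le_mul_of_nonneg_right ?_ hG2
            refine mul_le_mul_of_nonneg_right ?_ (by positivity)
            nlinarith
        _ ≤ (2 ^ γ * (2 ^ (-(α*θ)) + 2 ^ (-(β*θ'))) * M ^ (-γ)) *
              (X ^ α * (max 1 X) ^ (β*(1-θ')) + Y ^ (α*(1-θ)) * (max 1 Y) ^ β) := by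
            refine mul_le_mul_of_nonneg_left (le_add_of_nonneg_left hG1) (by positivity)
end S11
namespace S11

lemma rpow_sub_intOn {α t : ℝ} (hα1 : -1 < α) (ht : 0 ≤ t) :
    IntegrableOn (fun r : ℝ => (t - r) ^ α) (Ioc 0 t) := by
  have h := ((intervalIntegral.intervalIntegrable_rpow' (a := 0) (b := t) hα1).comp_sub_left
    t).symm
  rw [sub_self, sub_zero] at h
  exact (intervalIntegrable_iff_integrableOn_Ioc_of_le ht).1 h

lemma rpow_sub_int {α t : ℝ} (hα1 : -1 < α) (hα0 : α < 0) (ht : 0 ≤ t) :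
    ∫ r in Ioc (0:ℝ) t, (t - r) ^ α = t ^ (α+1) / (α+1) := by
  rw [← intervalIntegral.integral_of_le ht,
    intervalIntegral.integral_comp_sub_left (fun y : ℝ => y ^ α) t]
  rw [sub_self, sub_zero, integral_rpow (Or.inl hα1), Real.zero_rpow (by linarith), sub_zero]

lemma conv_integrand_intOn {α β t x : ℝ} (hα1 : -1 < α) (hβ : β ≤ 0) (ht : 0 ≤ t) :
    IntegrableOn (fun r : ℝ => (t - r) ^ α * (max 1 |x - r|) ^ β) (Ioc 0 t) := by
  have hmeas : Measurable (fun r : ℝ => (max 1 |x - r|) ^ β) := by fun_prop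
  have h := (rpow_sub_intOn hα1 ht).bdd_mul (c := 1) hmeas.aestronglyMeasurable ?_
  · exact h.congr (Filter.Eventually.of_forall (fun r => mul_comm _ _))
  · refine Filter.Eventually.of_forall (fun r => ?_)
    rw [Real.norm_eq_abs, abs_of_nonneg (by positivity)]
    exact Real.rpow_le_one_of_one_le_of_nonpos (le_max_left _ _) hβ

end S11

namespace S11
lemma conv_bound {α β θ θ' : ℝ} (hα1 : -1 < α) (hα0 : α < 0) (hβ : β ≤ 0)
    (hθ : 0 ≤ θ) (hθ1 : θ ≤ 1) (hθ'0 : 0 ≤ θ') (hθ'1 : θ' ≤ 1)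
    (h1 : -1 < α*(1-θ)) (h2 : α*(1-θ) + β < -1) (h3 : α + β*(1-θ') < -1)
    {t : ℝ} (ht : 0 ≤ t) (x : ℝ) :
    ∫ r in Ioc (0:ℝ) t, (t - r) ^ α * (max 1 |x - r|) ^ β ≤
      ((2 ^ (min (-(α*θ)) (-(β*θ'))) * (2 ^ (-(α*θ)) + 2 ^ (-(β*θ')))) *
        ((1/(α+1) + 1/(-(α + β*(1-θ'))-1)) + 2*(1/(α*(1-θ)+1) + 1/(-(α*(1-θ)+β)-1)))) *
      (max 1 |t - x|) ^ (-(min (-(α*θ)) (-(β*θ')))) := by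
  set γ := min (-(α*θ)) (-(β*θ')) with hγdef
  set Kp := (2:ℝ) ^ γ * (2 ^ (-(α*θ)) + 2 ^ (-(β*θ'))) with hKp
  set M := max 1 |t - x| with hM
  have hG1i : IntegrableOn
      (fun r : ℝ => (t - r) ^ α * (max 1 (t - r)) ^ (β*(1-θ'))) (Ioc 0 t) :=
    G1_intOn hα1 h3 ht
  have hG2i : IntegrableOn
      (fun r : ℝ => |x - r| ^ (α*(1-θ)) * (max 1 |x - r|) ^ β) (Ioc 0 t) :=
    (G2_integrable h1 h2 x).integrableOn
  have hKpM : (0:ℝ) ≤ Kp * M ^ (-γ) := by positivity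
  have hmajint : IntegrableOn (fun r : ℝ => Kp * M ^ (-γ) *
      ((t - r) ^ α * (max 1 (t - r)) ^ (β*(1-θ')) +
        |x - r| ^ (α*(1-θ)) * (max 1 |x - r|) ^ β)) (Ioc 0 t) :=
    (hG1i.add hG2i).const_mul _
  have hnn : 0 ≤ᵐ[volume.restrict (Ioc 0 t)]
      (fun r : ℝ => (t - r) ^ α * (max 1 |x - r|) ^ β) := by
    refine (ae_restrict_iff' measurableSet_Ioc).2
      (Filter.Eventually.of_forall (fun r hr => ?_))
    have h1' : (0:ℝ) ≤ t - r := by linarith [hr.2]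
    positivity
  have hne : ∀ᵐ r ∂(volume.restrict (Ioc 0 t)), r ≠ x := by
    refine Filter.Eventually.filter_mono (ae_mono Measure.restrict_le_self) ?_
    have : volume {x} = 0 := measure_singleton x
    rw [ae_iff]
    convert this using 2
    ext r; simp
  have hmem : ∀ᵐ r ∂(volume.restrict (Ioc 0 t)), r ∈ Ioc (0:ℝ) t :=
    ae_restrict_mem measurableSet_Ioc
  have hle : (fun r : ℝ => (t - r) ^ α * (max 1 |x - r|) ^ β) ≤ᵐ[volume.restrict (Ioc 0 t)]
      (fun r : ℝ => Kp * M ^ (-γ) *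
        ((t - r) ^ α * (max 1 (t - r)) ^ (β*(1-θ')) +
          |x - r| ^ (α*(1-θ)) * (max 1 |x - r|) ^ β)) := by
    filter_upwards [hne, hmem] with r hrx hr
    rcases eq_or_lt_of_le hr.2 with hrt | hrt
    · have hz : t - r = 0 := by linarith
      rw [hz, Real.zero_rpow (ne_of_lt hα0), zero_mul]
      have h1' : (0:ℝ) ≤ t - r := le_of_eq hz.symm
      positivity
    · have hX : (0:ℝ) < t - r := by linarith
      have hY : (0:ℝ) < |x - r| := abs_pos.2 (sub_ne_zero.mpr (Ne.symm hrx))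
      have htri : |t - x| ≤ (t - r) + |x - r| := by
        have h0 := abs_sub_le t r x
        rw [abs_of_nonneg (by linarith : (0:ℝ) ≤ t - r), abs_sub_comm r x] at h0
        exact h0
      exact pointwise_core hα0 hβ hθ hθ1 hθ'0 hθ'1 hX hY (abs_nonneg _) htri
  refine le_trans (integral_mono_of_nonneg hnn hmajint hle) ?_
  rw [integral_const_mul, integral_add hG1i hG2i]
  calc Kp * M ^ (-γ) *
      ((∫ r in Ioc (0:ℝ) t, (t - r) ^ α * (max 1 (t - r)) ^ (β*(1-θ'))) +
        ∫ r in Ioc (0:ℝ) t, |x - r| ^ (α*(1-θ)) * (max 1 |x - r|) ^ β)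
      ≤ Kp * M ^ (-γ) *
        ((1/(α+1) + 1/(-(α + β*(1-θ'))-1)) + 2*(1/(α*(1-θ)+1) + 1/(-(α*(1-θ)+β)-1))) := by
        refine mul_le_mul_of_nonneg_left ?_ hKpM
        exact add_le_add (G1_int_le hα1 h3 ht) (G2_int_le h1 h2 x t)
    _ = (Kp * ((1/(α+1) + 1/(-(α + β*(1-θ'))-1)) +
          2*(1/(α*(1-θ)+1) + 1/(-(α*(1-θ)+β)-1)))) * M ^ (-γ) := by ring
end S11

namespace S11

/-- ctil is dominated by `C * (max 1 y)^(H-3/2)` for `y ≥ 0`. -/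
lemma ctil_le {H C : ℝ} {ctil : ℝ → ℝ} (hb0 : ∀ t : ℝ, 0 ≤ t → ctil t ≤ C)
    (hb1 : ∀ t : ℝ, 1 ≤ t → ctil t ≤ C * t ^ (H - 3/2))
    {y : ℝ} (hy : 0 ≤ y) : ctil y ≤ C * (max 1 y) ^ (H - 3/2) := by
  rcases le_total y 1 with h | h
  · rw [max_eq_left h, Real.one_rpow, mul_one]; exact hb0 y hy
  · rw [max_eq_right h]; exact hb1 y h

lemma Jb {H C : ℝ} {ctil : ℝ → ℝ} (hH1 : 1/4 < H) (hH2 : H < 1/2)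
    (hnn : ∀ t : ℝ, 0 ≤ ctil t) (hC : 0 < C)
    (hb0 : ∀ t : ℝ, 0 ≤ t → ctil t ≤ C)
    (hb1 : ∀ t : ℝ, 1 ≤ t → ctil t ≤ C * t ^ (H - 3/2)) :
    ∃ K : ℝ, 0 ≤ K ∧ ∀ {t : ℝ}, 0 ≤ t → ∀ x : ℝ,
      (∫ r in Ioc (0:ℝ) t, ctil |x - r| * (t - r) ^ (-H - 1/2)) ≤
        K * (max 1 |t - x|) ^ (-H - 1/2) := by
  set α := -H - 1/2 with hαd
  set β := H - 3/2 with hβd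
  set θ' : ℝ := (H + 1/2)/(3/2 - H) with hθ'd
  have h32H : (0:ℝ) < 3/2 - H := by linarith
  have hα1 : -1 < α := by rw [hαd]; linarith
  have hα0 : α < 0 := by rw [hαd]; linarith
  have hβ : β ≤ 0 := by rw [hβd]; linarith
  have hθ'0 : 0 ≤ θ' := by rw [hθ'd]; positivity
  have hθ'1 : θ' ≤ 1 := by rw [hθ'd, div_le_one h32H]; linarith
  have hβθ' : β * θ' = -(H + 1/2) := by
    rw [hβd, hθ'd, mul_div_assoc', div_eq_iff h32H.ne']; ring
  have h1 : -1 < α * (1 - (1:ℝ)) := by norm_num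
  have h2 : α * (1 - (1:ℝ)) + β < -1 := by rw [hβd]; norm_num; linarith
  have h3 : α + β * (1 - θ') < -1 := by
    have h' : β * (1 - θ') = β - β * θ' := by ring
    rw [h', hβθ', hαd, hβd]; linarith
  have hmin : min (-(α * 1)) (-(β * θ')) = -α := by
    have e1 : -(α * 1) = H + 1/2 := by rw [hαd]; ring
    have e2 : -(β * θ') = H + 1/2 := by rw [hβθ']; ring
    rw [e1, e2, min_self, hαd]; ring
  set K0 := ((2 ^ (min (-(α*1)) (-(β*θ'))) * (2 ^ (-(α*1)) + 2 ^ (-(β*θ')))) *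
    ((1/(α+1) + 1/(-(α + β*(1-θ'))-1)) + 2*(1/(α*(1-(1:ℝ))+1) + 1/(-(α*(1-(1:ℝ))+β)-1))))
    with hK0d
  refine ⟨C * max K0 0, mul_nonneg hC.le (le_max_right _ _), ?_⟩
  intro t ht x
  have hmono : (∫ r in Ioc (0:ℝ) t, ctil |x - r| * (t - r) ^ α) ≤
      ∫ r in Ioc (0:ℝ) t, C * ((t - r) ^ α * (max 1 |x - r|) ^ β) := by
    refine integral_mono_of_nonneg ?_ ((conv_integrand_intOn hα1 hβ ht (x := x)).const_mul C) ?_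
    · refine (ae_restrict_iff' measurableSet_Ioc).2
        (Filter.Eventually.of_forall (fun r hr => ?_))
      have h1' : (0:ℝ) ≤ t - r := by linarith [hr.2]
      have := hnn |x - r|
      positivity
    · refine (ae_restrict_iff' measurableSet_Ioc).2
        (Filter.Eventually.of_forall (fun r hr => ?_))
      have h1' : (0:ℝ) ≤ t - r := by linarith [hr.2]
      calc ctil |x - r| * (t - r) ^ α
          ≤ (C * (max 1 |x - r|) ^ β) * (t - r) ^ α :=
            mul_le_mul_of_nonneg_right
              (ctil_le hb0 hb1 (abs_nonneg _)) (Real.rpow_nonneg h1' _)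
        _ = C * ((t - r) ^ α * (max 1 |x - r|) ^ β) := by ring
  refine le_trans hmono ?_
  rw [integral_const_mul]
  have hcb := conv_bound hα1 hα0 hβ zero_le_one le_rfl hθ'0 hθ'1 h1 h2 h3 ht x
  rw [← hK0d] at hcb
  rw [hmin, neg_neg] at hcb
  have hm : (0:ℝ) ≤ (max 1 |t - x|) ^ α := Real.rpow_nonneg (by positivity) _
  calc C * ∫ r in Ioc (0:ℝ) t, (t - r) ^ α * (max 1 |x - r|) ^ β
      ≤ C * (K0 * (max 1 |t - x|) ^ α) := mul_le_mul_of_nonneg_left hcb hC.le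
    _ ≤ C * (max K0 0 * (max 1 |t - x|) ^ α) :=
        mul_le_mul_of_nonneg_left
          (mul_le_mul_of_nonneg_right (le_max_left K0 0) hm) hC.le
    _ = C * max K0 0 * (max 1 |t - x|) ^ α := by ring

lemma Db {H : ℝ} (hH1 : 1/4 < H) (hH2 : H < 1/2) :
    ∃ K : ℝ, 0 ≤ K ∧ ∀ {t : ℝ}, 0 ≤ t → ∀ x : ℝ,
      (∫ r in Ioc (0:ℝ) t, (t - r) ^ (-H - 1/2) * (max 1 |x - r|) ^ (-H - 1/2)) ≤
        K * (max 1 |t - x|) ^ (-(1/2) : ℝ) := by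
  set α := -H - 1/2 with hαd
  set θ : ℝ := 1/(2*H+1) with hθd
  have h2H1 : (0:ℝ) < 2*H + 1 := by linarith
  have hα1 : -1 < α := by rw [hαd]; linarith
  have hα0 : α < 0 := by rw [hαd]; linarith
  have hθ0 : 0 ≤ θ := by rw [hθd]; positivity
  have hθ1 : θ ≤ 1 := by rw [hθd, div_le_one h2H1]; linarith
  have hαθ : α * θ = -(1/2) := by
    rw [hαd, hθd]; field_simp; ring
  have hα1θ : α * (1 - θ) = -H := by
    rw [hαd, hθd]; field_simp; ring
  have h1 : -1 < α * (1 - θ) := by rw [hα1θ]; linarith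
  have h2 : α * (1 - θ) + α < -1 := by rw [hα1θ, hαd]; linarith
  have hmin : min (-(α * θ)) (-(α * θ)) = (1/2 : ℝ) := by
    rw [min_self, hαθ]; norm_num
  set K0 := ((2 ^ (min (-(α*θ)) (-(α*θ))) * (2 ^ (-(α*θ)) + 2 ^ (-(α*θ)))) *
    ((1/(α+1) + 1/(-(α + α*(1-θ))-1)) + 2*(1/(α*(1-θ)+1) + 1/(-(α*(1-θ)+α)-1)))) with hK0d
  refine ⟨max K0 0, le_max_right _ _, ?_⟩
  intro t ht x
  have hcb := conv_bound hα1 hα0 hα0.le hθ0 hθ1 hθ0 hθ1 h1 h2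
    (by rw [add_comm] at h2; exact h2) ht x
  rw [← hK0d] at hcb
  rw [hmin] at hcb
  refine le_trans hcb ?_
  have hm : (0:ℝ) ≤ (max 1 |t - x|) ^ (-(1/2):ℝ) := Real.rpow_nonneg (by positivity) _
  exact mul_le_mul_of_nonneg_right (le_max_left K0 0) hm

end S11

namespace S11
lemma L4 {T x : ℝ} (hT : 1 ≤ T) (hx0 : 0 ≤ x) (hxT : x ≤ T) :
    ∫ s in Ioc (0:ℝ) T, (max 1 |x - s|) ^ (-(1/2) : ℝ) ≤ 4 * T ^ ((1/2) : ℝ) := by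
  set g := fun u : ℝ => (max 1 |u|) ^ (-(1/2) : ℝ) with hg
  have hgc : Continuous g := by
    refine Continuous.rpow_const (continuous_const.max continuous_abs) (fun u => Or.inl ?_)
    exact ne_of_gt (lt_of_lt_of_le one_pos (le_max_left _ _))
  have hgnn : ∀ u, 0 ≤ g u := fun u => Real.rpow_nonneg (by positivity) _
  have hT0 : (0:ℝ) ≤ T := by linarith
  have e1 : ∫ s in Ioc (0:ℝ) T, g (x - s) = ∫ u in Ioc (x - T) x, g u := by
    rw [← intervalIntegral.integral_of_le hT0,
      intervalIntegral.integral_comp_sub_left g x, sub_zero,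
      intervalIntegral.integral_of_le (by linarith : x - T ≤ x)]
  have hIoc : IntegrableOn g (Ioc (-T) T) := hgc.integrableOn_Ioc
  have e2 : ∫ u in Ioc (x - T) x, g u ≤ ∫ u in Ioc (-T) T, g u := by
    refine setIntegral_mono_set hIoc
      (Filter.Eventually.of_forall (fun u => hgnn u))
      (HasSubset.Subset.eventuallyLE (Ioc_subset_Ioc (by linarith) hxT))
  have hI1 : IntegrableOn g (Ioc (-T) 0) := hIoc.mono_set (Ioc_subset_Ioc le_rfl hT0)
  have hI2 : IntegrableOn g (Ioc 0 T) := hIoc.mono_set (Ioc_subset_Ioc (by linarith) le_rfl)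
  have e3 : ∫ u in Ioc (-T) T, g u = (∫ u in Ioc (-T) 0, g u) + ∫ u in Ioc 0 T, g u := by
    rw [← setIntegral_union (Ioc_disjoint_Ioc_of_le le_rfl) measurableSet_Ioc hI1 hI2,
      Ioc_union_Ioc_eq_Ioc (by linarith) hT0]
  have e4 : ∫ u in Ioc (-T) 0, g u = ∫ u in Ioc 0 T, g u := by
    have h := intervalIntegral.integral_comp_neg (a := (0:ℝ)) (b := T) (f := g)
    rw [neg_zero] at h
    have h2 : ∫ u in (0:ℝ)..T, g (-u) = ∫ u in (0:ℝ)..T, g u := by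
      congr 1; funext u; rw [hg]; simp [abs_neg]
    rw [← intervalIntegral.integral_of_le (by linarith : -T ≤ (0:ℝ)), ← h, h2,
      intervalIntegral.integral_of_le hT0]
  have e5 : ∫ u in Ioc (0:ℝ) T, g u ≤ 2 * T ^ ((1/2):ℝ) := by
    have hI21 : IntegrableOn g (Ioc 0 1) := hI2.mono_set (Ioc_subset_Ioc le_rfl hT)
    have hI22 : IntegrableOn g (Ioc 1 T) := hI2.mono_set (Ioc_subset_Ioc zero_le_one le_rfl)
    rw [← Ioc_union_Ioc_eq_Ioc zero_le_one hT,
      setIntegral_union (Ioc_disjoint_Ioc_of_le le_rfl) measurableSet_Ioc hI21 hI22]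
    have v1 : ∫ u in Ioc (0:ℝ) 1, g u = 1 := by
      rw [setIntegral_congr_fun measurableSet_Ioc (g := fun _ : ℝ => (1:ℝ))
        (fun u hu => by rw [hg]; simp only; rw [abs_of_pos hu.1, max_eq_left hu.2,
          Real.one_rpow])]
      simp
    have v2 : ∫ u in Ioc (1:ℝ) T, g u = 2*T^((1/2):ℝ) - 2 := by
      rw [setIntegral_congr_fun measurableSet_Ioc (g := fun u : ℝ => u ^ (-(1/2):ℝ))
        (fun u hu => by rw [hg]; simp only; rw [abs_of_pos (lt_trans one_pos hu.1),
          max_eq_right hu.1.le])]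
      rw [← intervalIntegral.integral_of_le hT, integral_rpow (Or.inl (by norm_num))]
      have he : (-(1/2):ℝ) + 1 = 1/2 := by norm_num
      rw [he, Real.one_rpow]
      ring
    rw [v1, v2]
    have h0 : (0:ℝ) ≤ T^((1/2):ℝ) := Real.rpow_nonneg hT0 _
    linarith
  have h0 : (0:ℝ) ≤ T^((1/2):ℝ) := Real.rpow_nonneg hT0 _
  calc ∫ s in Ioc (0:ℝ) T, (max 1 |x - s|) ^ (-(1/2) : ℝ)
      = ∫ u in Ioc (x - T) x, g u := e1
    _ ≤ ∫ u in Ioc (-T) T, g u := e2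
    _ = (∫ u in Ioc (-T) 0, g u) + ∫ u in Ioc 0 T, g u := e3
    _ = 2 * ∫ u in Ioc (0:ℝ) T, g u := by rw [e4]; ring
    _ ≤ 4 * T ^ ((1/2):ℝ) := by linarith
end S11

open MeasureTheory

theorem stmt11 (H : ℝ) (hH : H ∈ Set.Ioo (1/4 : ℝ) (1/2)) (ctil : ℝ → ℝ)
    (hmeas : Measurable ctil) (hnn : ∀ t : ℝ, 0 ≤ ctil t)
    (C : ℝ) (hC : 0 < C) (hb0 : ∀ t : ℝ, 0 ≤ t → ctil t ≤ C)
    (hb1 : ∀ t : ℝ, 1 ≤ t → ctil t ≤ C * t ^ (H - 3/2)) :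
    Filter.Tendsto (fun T : ℝ => T ^ (-2 : ℝ) *
        ∫ t₁ in Set.Ioc (0:ℝ) T, ∫ t₂ in Set.Ioc (0:ℝ) T,
          ∫ r₁ in Set.Ioc (0:ℝ) t₁, ∫ u₁ in Set.Ioc (0:ℝ) t₁,
            ∫ r₂ in Set.Ioc (0:ℝ) t₂, ∫ u₂ in Set.Ioc (0:ℝ) t₂,
              ctil (|r₁ - r₂|) * ((t₁ - r₁) ^ (-H - 1/2) * (t₁ - u₁) ^ (-H - 1/2) *
                (t₂ - r₂) ^ (-H - 1/2) * (t₂ - u₂) ^ (-H - 1/2)))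
      Filter.atTop (nhds 0) := by
  obtain ⟨hH1, hH2⟩ := hH
  obtain ⟨KJ, hKJ0, hKJ⟩ := S11.Jb hH1 hH2 hnn hC hb0 hb1
  obtain ⟨KD, hKD0, hKD⟩ := S11.Db hH1 hH2
  obtain ⟨p, hpd⟩ : ∃ p : ℝ, p = -H - 1/2 := ⟨-H - 1/2, rfl⟩
  simp only [← hpd] at hKJ hKD ⊢
  have hp1 : (-1:ℝ) < p := by rw [hpd]; linarith
  have hp0 : p < 0 := by rw [hpd]; linarith
  have hq : (0:ℝ) < p + 1 := by rw [hpd]; linarith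
  -- nonnegativity of the inner quadruple integral
  have nnQ : ∀ t₁ t₂ : ℝ, 0 ≤ ∫ r₁ in Set.Ioc (0:ℝ) t₁, ∫ u₁ in Set.Ioc (0:ℝ) t₁,
      ∫ r₂ in Set.Ioc (0:ℝ) t₂, ∫ u₂ in Set.Ioc (0:ℝ) t₂,
        ctil (|r₁ - r₂|) * ((t₁ - r₁) ^ p * (t₁ - u₁) ^ p *
          (t₂ - r₂) ^ p * (t₂ - u₂) ^ p) := by
    intro t₁ t₂
    refine setIntegral_nonneg measurableSet_Ioc fun r₁ hr₁ => ?_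
    refine setIntegral_nonneg measurableSet_Ioc fun u₁ hu₁ => ?_
    refine setIntegral_nonneg measurableSet_Ioc fun r₂ hr₂ => ?_
    refine setIntegral_nonneg measurableSet_Ioc fun u₂ hu₂ => ?_
    have h1 : (0:ℝ) ≤ t₁ - r₁ := sub_nonneg.2 hr₁.2
    have h2 : (0:ℝ) ≤ t₁ - u₁ := sub_nonneg.2 hu₁.2
    have h3 : (0:ℝ) ≤ t₂ - r₂ := sub_nonneg.2 hr₂.2
    have h4 : (0:ℝ) ≤ t₂ - u₂ := sub_nonneg.2 hu₂.2
    exact mul_nonneg (hnn _) (mul_nonneg (mul_nonneg (mul_nonneg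
      (Real.rpow_nonneg h1 _) (Real.rpow_nonneg h2 _))
      (Real.rpow_nonneg h3 _)) (Real.rpow_nonneg h4 _))
  -- nonnegativity of J
  have nnJ : ∀ t x : ℝ, 0 ≤ ∫ r in Set.Ioc (0:ℝ) t, ctil |x - r| * (t - r) ^ p :=
    fun t x => setIntegral_nonneg measurableSet_Ioc fun r hr =>
      mul_nonneg (hnn _) (Real.rpow_nonneg (sub_nonneg.2 hr.2) _)
  -- exact computation of the three innermost integrals
  have EA : ∀ t₁ t₂ r₁ : ℝ, 0 ≤ t₁ → 0 ≤ t₂ →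
      (∫ u₁ in Set.Ioc (0:ℝ) t₁, ∫ r₂ in Set.Ioc (0:ℝ) t₂, ∫ u₂ in Set.Ioc (0:ℝ) t₂,
        ctil (|r₁ - r₂|) * ((t₁ - r₁) ^ p * (t₁ - u₁) ^ p *
          (t₂ - r₂) ^ p * (t₂ - u₂) ^ p))
      = ((t₁ ^ (p+1)/(p+1)) * (t₂ ^ (p+1)/(p+1))) * ((t₁ - r₁) ^ p *
          ∫ r₂ in Set.Ioc (0:ℝ) t₂, ctil |r₁ - r₂| * (t₂ - r₂) ^ p) := by
    intro t₁ t₂ r₁ ht₁ ht₂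
    have h5 : ∀ u₁ r₂ : ℝ, (∫ u₂ in Set.Ioc (0:ℝ) t₂,
        ctil (|r₁ - r₂|) * ((t₁ - r₁) ^ p * (t₁ - u₁) ^ p *
          (t₂ - r₂) ^ p * (t₂ - u₂) ^ p))
        = (ctil |r₁ - r₂| * ((t₁ - r₁) ^ p * (t₁ - u₁) ^ p * (t₂ - r₂) ^ p)) *
            (t₂ ^ (p+1)/(p+1)) := by
      intro u₁ r₂
      rw [show (fun u₂ : ℝ => ctil (|r₁ - r₂|) * ((t₁ - r₁) ^ p * (t₁ - u₁) ^ p *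
            (t₂ - r₂) ^ p * (t₂ - u₂) ^ p))
          = fun u₂ : ℝ => (ctil |r₁ - r₂| * ((t₁ - r₁) ^ p * (t₁ - u₁) ^ p *
            (t₂ - r₂) ^ p)) * (t₂ - u₂) ^ p from funext fun u₂ => by ring]
      rw [integral_const_mul, S11.rpow_sub_int hp1 hp0 ht₂]
    have h4 : ∀ u₁ : ℝ, (∫ r₂ in Set.Ioc (0:ℝ) t₂, ∫ u₂ in Set.Ioc (0:ℝ) t₂,
        ctil (|r₁ - r₂|) * ((t₁ - r₁) ^ p * (t₁ - u₁) ^ p *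
          (t₂ - r₂) ^ p * (t₂ - u₂) ^ p))
        = ((t₁ - r₁) ^ p * (t₁ - u₁) ^ p * (t₂ ^ (p+1)/(p+1))) *
            (∫ r₂ in Set.Ioc (0:ℝ) t₂, ctil |r₁ - r₂| * (t₂ - r₂) ^ p) := by
      intro u₁
      simp_rw [h5 u₁]
      rw [show (fun r₂ : ℝ => (ctil |r₁ - r₂| * ((t₁ - r₁) ^ p * (t₁ - u₁) ^ p *
            (t₂ - r₂) ^ p)) * (t₂ ^ (p+1)/(p+1)))
          = fun r₂ : ℝ => ((t₁ - r₁) ^ p * (t₁ - u₁) ^ p * (t₂ ^ (p+1)/(p+1))) *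
            (ctil |r₁ - r₂| * (t₂ - r₂) ^ p) from funext fun r₂ => by ring]
      rw [integral_const_mul]
    simp_rw [h4]
    rw [show (fun u₁ : ℝ => ((t₁ - r₁) ^ p * (t₁ - u₁) ^ p * (t₂ ^ (p+1)/(p+1))) *
          (∫ r₂ in Set.Ioc (0:ℝ) t₂, ctil |r₁ - r₂| * (t₂ - r₂) ^ p))
        = fun u₁ : ℝ => (((t₁ - r₁) ^ p * (t₂ ^ (p+1)/(p+1))) *
          (∫ r₂ in Set.Ioc (0:ℝ) t₂, ctil |r₁ - r₂| * (t₂ - r₂) ^ p)) * (t₁ - u₁) ^ p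
      from funext fun u₁ => by ring]
    rw [integral_const_mul, S11.rpow_sub_int hp1 hp0 ht₁]
    ring
  -- the r₁-level bound
  have EB : ∀ t₁ t₂ : ℝ, 0 < t₁ → 0 < t₂ →
      (∫ r₁ in Set.Ioc (0:ℝ) t₁, ∫ u₁ in Set.Ioc (0:ℝ) t₁,
        ∫ r₂ in Set.Ioc (0:ℝ) t₂, ∫ u₂ in Set.Ioc (0:ℝ) t₂,
          ctil (|r₁ - r₂|) * ((t₁ - r₁) ^ p * (t₁ - u₁) ^ p *
            (t₂ - r₂) ^ p * (t₂ - u₂) ^ p))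
      ≤ ((t₁ ^ (p+1)/(p+1)) * (t₂ ^ (p+1)/(p+1))) *
          (KJ * KD * (max 1 |t₁ - t₂|) ^ (-(1/2) : ℝ)) := by
    intro t₁ t₂ ht₁ ht₂
    rw [setIntegral_congr_fun measurableSet_Ioc
      (fun r₁ _ => EA t₁ t₂ r₁ ht₁.le ht₂.le), integral_const_mul]
    refine mul_le_mul_of_nonneg_left ?_ (by positivity)
    have hmaj : IntegrableOn
        (fun r₁ : ℝ => KJ * ((t₁ - r₁) ^ p * (max 1 |t₂ - r₁|) ^ p))
        (Set.Ioc 0 t₁) :=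
      (S11.conv_integrand_intOn hp1 hp0.le ht₁.le (x := t₂)).const_mul KJ
    have step1 : (∫ r₁ in Set.Ioc (0:ℝ) t₁, (t₁ - r₁) ^ p *
        ∫ r₂ in Set.Ioc (0:ℝ) t₂, ctil |r₁ - r₂| * (t₂ - r₂) ^ p)
        ≤ ∫ r₁ in Set.Ioc (0:ℝ) t₁, KJ * ((t₁ - r₁) ^ p * (max 1 |t₂ - r₁|) ^ p) := by
      refine integral_mono_of_nonneg ?_ hmaj ?_
      · refine (ae_restrict_iff' measurableSet_Ioc).2
          (Filter.Eventually.of_forall fun r₁ hr₁ => ?_)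
        exact mul_nonneg (Real.rpow_nonneg (sub_nonneg.2 hr₁.2) _) (nnJ t₂ r₁)
      · refine (ae_restrict_iff' measurableSet_Ioc).2
          (Filter.Eventually.of_forall fun r₁ hr₁ => ?_)
        calc (t₁ - r₁) ^ p * ∫ r₂ in Set.Ioc (0:ℝ) t₂, ctil |r₁ - r₂| * (t₂ - r₂) ^ p
            ≤ (t₁ - r₁) ^ p * (KJ * (max 1 |t₂ - r₁|) ^ p) :=
              mul_le_mul_of_nonneg_left (hKJ ht₂.le r₁)
                (Real.rpow_nonneg (sub_nonneg.2 hr₁.2) _)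
          _ = KJ * ((t₁ - r₁) ^ p * (max 1 |t₂ - r₁|) ^ p) := by ring
    refine le_trans step1 ?_
    rw [integral_const_mul]
    refine le_trans (mul_le_mul_of_nonneg_left (hKD ht₁.le t₂) hKJ0) (le_of_eq (by ring))
  -- squeeze
  have hε : (0:ℝ) < 2*H - 1/2 := by linarith
  refine squeeze_zero'
    (g := fun T : ℝ => (4 * KJ * KD * ((1/(p+1)) * (1/(p+1)))) * T ^ (-(2*H - 1/2))) ?_ ?_ ?_
  · filter_upwards [Filter.eventually_ge_atTop (1:ℝ)] with T hT1
    have hT0 : (0:ℝ) ≤ T := by linarith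
    refine mul_nonneg (Real.rpow_nonneg hT0 _) ?_
    refine setIntegral_nonneg measurableSet_Ioc fun t₁ _ => ?_
    exact setIntegral_nonneg measurableSet_Ioc fun t₂ _ => nnQ t₁ t₂
  · -- upper bound
    filter_upwards [Filter.eventually_ge_atTop (1:ℝ)] with T hT1
    have hT0 : (0:ℝ) ≤ T := by linarith
    have hTq0 : (0:ℝ) ≤ T ^ (p+1) := Real.rpow_nonneg hT0 _
    set cT := (T ^ (p+1)/(p+1)) * (T ^ (p+1)/(p+1)) * (KJ * KD) with hcTd
    have hcT0 : 0 ≤ cT := by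
      rw [hcTd]
      exact mul_nonneg (mul_nonneg (div_nonneg hTq0 hq.le) (div_nonneg hTq0 hq.le))
        (mul_nonneg hKJ0 hKD0)
    have EC : ∀ t₁ : ℝ, t₁ ∈ Set.Ioc (0:ℝ) T →
        (∫ t₂ in Set.Ioc (0:ℝ) T, ∫ r₁ in Set.Ioc (0:ℝ) t₁, ∫ u₁ in Set.Ioc (0:ℝ) t₁,
          ∫ r₂ in Set.Ioc (0:ℝ) t₂, ∫ u₂ in Set.Ioc (0:ℝ) t₂,
            ctil (|r₁ - r₂|) * ((t₁ - r₁) ^ p * (t₁ - u₁) ^ p *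
              (t₂ - r₂) ^ p * (t₂ - u₂) ^ p))
        ≤ cT * (4 * T ^ ((1/2):ℝ)) := by
      intro t₁ ht₁
      have hmcont : Continuous (fun t₂ : ℝ => (max 1 |t₁ - t₂|) ^ (-(1/2) : ℝ)) := by
        refine Continuous.rpow_const
          (continuous_const.max ((continuous_const.sub continuous_id).abs))
          (fun u => Or.inl (ne_of_gt (lt_of_lt_of_le one_pos (le_max_left _ _))))
      have hmaj : IntegrableOn
          (fun t₂ : ℝ => cT * (max 1 |t₁ - t₂|) ^ (-(1/2) : ℝ)) (Set.Ioc 0 T) :=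
        (hmcont.integrableOn_Ioc).const_mul cT
      have hmono : (∫ t₂ in Set.Ioc (0:ℝ) T, ∫ r₁ in Set.Ioc (0:ℝ) t₁,
          ∫ u₁ in Set.Ioc (0:ℝ) t₁, ∫ r₂ in Set.Ioc (0:ℝ) t₂, ∫ u₂ in Set.Ioc (0:ℝ) t₂,
            ctil (|r₁ - r₂|) * ((t₁ - r₁) ^ p * (t₁ - u₁) ^ p *
              (t₂ - r₂) ^ p * (t₂ - u₂) ^ p))
          ≤ ∫ t₂ in Set.Ioc (0:ℝ) T, cT * (max 1 |t₁ - t₂|) ^ (-(1/2) : ℝ) := by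
        refine integral_mono_of_nonneg ?_ hmaj ?_
        · exact (ae_restrict_iff' measurableSet_Ioc).2
            (Filter.Eventually.of_forall fun t₂ _ => nnQ t₁ t₂)
        · refine (ae_restrict_iff' measurableSet_Ioc).2
            (Filter.Eventually.of_forall fun t₂ ht₂ => ?_)
          refine le_trans (EB t₁ t₂ ht₁.1 ht₂.1) ?_
          have hm0 : (0:ℝ) ≤ (max 1 |t₁ - t₂|) ^ (-(1/2) : ℝ) :=
            Real.rpow_nonneg (by positivity) _
          have h1 : t₁ ^ (p+1) ≤ T ^ (p+1) := Real.rpow_le_rpow ht₁.1.le ht₁.2 hq.le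
          have h2 : t₂ ^ (p+1) ≤ T ^ (p+1) := Real.rpow_le_rpow ht₂.1.le ht₂.2 hq.le
          have hprod : t₁ ^ (p+1) * t₂ ^ (p+1) ≤ T ^ (p+1) * T ^ (p+1) :=
            mul_le_mul h1 h2 (Real.rpow_nonneg ht₂.1.le _) hTq0
          calc (t₁ ^ (p+1)/(p+1)) * (t₂ ^ (p+1)/(p+1)) *
                (KJ * KD * (max 1 |t₁ - t₂|) ^ (-(1/2) : ℝ))
              = (t₁ ^ (p+1) * t₂ ^ (p+1)) *
                  ((KJ * KD * (max 1 |t₁ - t₂|) ^ (-(1/2) : ℝ)) * ((1/(p+1)) * (1/(p+1)))) := by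
                ring
            _ ≤ (T ^ (p+1) * T ^ (p+1)) *
                  ((KJ * KD * (max 1 |t₁ - t₂|) ^ (-(1/2) : ℝ)) * ((1/(p+1)) * (1/(p+1)))) := by
                refine mul_le_mul_of_nonneg_right hprod ?_
                exact mul_nonneg (mul_nonneg (mul_nonneg hKJ0 hKD0) hm0)
                  (mul_nonneg (div_nonneg zero_le_one hq.le) (div_nonneg zero_le_one hq.le))
            _ = cT * (max 1 |t₁ - t₂|) ^ (-(1/2) : ℝ) := by rw [hcTd]; ring
      refine le_trans hmono ?_
      rw [integral_const_mul]
      exact mul_le_mul_of_nonneg_left (S11.L4 hT1 ht₁.1.le ht₁.2) hcT0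
    have hconst : IntegrableOn (fun _ : ℝ => cT * (4 * T ^ ((1/2):ℝ)))
        (Set.Ioc (0:ℝ) T) :=
      integrableOn_const measure_Ioc_lt_top.ne
    have ED : (∫ t₁ in Set.Ioc (0:ℝ) T, ∫ t₂ in Set.Ioc (0:ℝ) T,
        ∫ r₁ in Set.Ioc (0:ℝ) t₁, ∫ u₁ in Set.Ioc (0:ℝ) t₁,
          ∫ r₂ in Set.Ioc (0:ℝ) t₂, ∫ u₂ in Set.Ioc (0:ℝ) t₂,
            ctil (|r₁ - r₂|) * ((t₁ - r₁) ^ p * (t₁ - u₁) ^ p *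
              (t₂ - r₂) ^ p * (t₂ - u₂) ^ p))
        ≤ T * (cT * (4 * T ^ ((1/2):ℝ))) := by
      have hmono := integral_mono_of_nonneg
        (f := fun t₁ : ℝ => ∫ t₂ in Set.Ioc (0:ℝ) T, ∫ r₁ in Set.Ioc (0:ℝ) t₁,
          ∫ u₁ in Set.Ioc (0:ℝ) t₁, ∫ r₂ in Set.Ioc (0:ℝ) t₂, ∫ u₂ in Set.Ioc (0:ℝ) t₂,
            ctil (|r₁ - r₂|) * ((t₁ - r₁) ^ p * (t₁ - u₁) ^ p *
              (t₂ - r₂) ^ p * (t₂ - u₂) ^ p))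
        (g := fun _ : ℝ => cT * (4 * T ^ ((1/2):ℝ)))
        (μ := volume.restrict (Set.Ioc (0:ℝ) T))
        ((ae_restrict_iff' measurableSet_Ioc).2 (Filter.Eventually.of_forall
          fun t₁ _ => setIntegral_nonneg measurableSet_Ioc fun t₂ _ => nnQ t₁ t₂))
        hconst
        ((ae_restrict_iff' measurableSet_Ioc).2 (Filter.Eventually.of_forall EC))
      refine le_trans hmono ?_
      rw [setIntegral_const, measureReal_def, Real.volume_Ioc, smul_eq_mul, sub_zero,
        ENNReal.toReal_ofReal hT0]
    have hT0' : (0:ℝ) < T := lt_of_lt_of_le one_pos hT1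
    have hfin : T ^ (-2:ℝ) * (T * (cT * (4 * T ^ ((1/2):ℝ))))
        = (4 * KJ * KD * ((1/(p+1)) * (1/(p+1)))) * T ^ (-(2*H - 1/2)) := by
      have e : T ^ (-(2*H - 1/2)) =
          T ^ (-2:ℝ) * T ^ (1:ℝ) * T ^ (p+1) * T ^ (p+1) * T ^ ((1/2):ℝ) := by
        rw [← Real.rpow_add hT0', ← Real.rpow_add hT0', ← Real.rpow_add hT0',
          ← Real.rpow_add hT0']
        congr 1
        rw [hpd]; ring
      rw [e, Real.rpow_one, hcTd]; ring
    calc T ^ (-2:ℝ) * (∫ t₁ in Set.Ioc (0:ℝ) T, ∫ t₂ in Set.Ioc (0:ℝ) T,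
          ∫ r₁ in Set.Ioc (0:ℝ) t₁, ∫ u₁ in Set.Ioc (0:ℝ) t₁,
            ∫ r₂ in Set.Ioc (0:ℝ) t₂, ∫ u₂ in Set.Ioc (0:ℝ) t₂,
              ctil (|r₁ - r₂|) * ((t₁ - r₁) ^ p * (t₁ - u₁) ^ p *
                (t₂ - r₂) ^ p * (t₂ - u₂) ^ p))
        ≤ T ^ (-2:ℝ) * (T * (cT * (4 * T ^ ((1/2):ℝ)))) :=
          mul_le_mul_of_nonneg_left ED (Real.rpow_nonneg hT0 _)
      _ = (4 * KJ * KD * ((1/(p+1)) * (1/(p+1)))) * T ^ (-(2*H - 1/2)) := hfin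
  · have := (tendsto_rpow_neg_atTop hε).const_mul (4 * KJ * KD * ((1/(p+1)) * (1/(p+1))))
    simpa using this
end
end

section
/- Let H ∈ (0,1/2) and let c̃ : [0,∞) → [0,∞) be measurable. Then for every T > 0, T^{−2} ∫₀^T ∫₀^T ∫₀^{t₁} ∫₀^{t₁} ∫₀^{t₂} ∫₀^{t₂} c̃(|r₁−r₂|) (t₁−r₁)^{−H−1/2} (t₁−u₁)^{−H−1/2} (t₂−r₂)^{−H−1/2} (t₂−u₂)^{−H−1/2} du₂ dr₂ du₁ dr₁ dt₂ dt₁ ≤ (1/2 − H)^{−4} · T^{−1−2H} ∫₀^T ∫₀^T c̃(|r₁−r₂|) (T−r₁)^{1/2−H} (T−r₂)^{1/2−H} dr₂ dr₁. -/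
open MeasureTheory Set

lemma lint_rpow_Ioc (a : ℝ) (ha : 0 ≤ a) (p : ℝ) (hp : -1 < p) :
    ∫⁻ s in Set.Ioc (0:ℝ) a, ENNReal.ofReal (s ^ p) = ENNReal.ofReal (a ^ (p+1) / (p+1)) := by
  have hint : IntervalIntegrable (fun s : ℝ => s ^ p) volume 0 a :=
    intervalIntegral.intervalIntegrable_rpow' hp
  have hIoc : MeasureTheory.IntegrableOn (fun s : ℝ => s ^ p) (Set.Ioc 0 a) :=
    (intervalIntegrable_iff_integrableOn_Ioc_of_le ha).mp hint
  rw [← MeasureTheory.ofReal_integral_eq_lintegral_ofReal hIoc ?_]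
  · congr 1
    rw [← intervalIntegral.integral_of_le ha, integral_rpow (Or.inl hp)]
    rw [Real.zero_rpow (by linarith : p + 1 ≠ 0)]
    ring
  · filter_upwards [ae_restrict_mem measurableSet_Ioc] with s hs
    exact Real.rpow_nonneg hs.1.le _

lemma lint_tsub (t : ℝ) (ht : 0 ≤ t) (p : ℝ) (hp : -1 < p) :
    ∫⁻ u in Set.Ioc (0:ℝ) t, ENNReal.ofReal ((t - u) ^ p)
      = ENNReal.ofReal (t ^ (p+1) / (p+1)) := by
  have hint : IntervalIntegrable (fun u : ℝ => (t - u) ^ p) volume 0 t := by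
    simpa using ((intervalIntegral.intervalIntegrable_rpow' hp (a := 0) (b := t)).comp_sub_left t).symm
  have hIoc : MeasureTheory.IntegrableOn (fun u : ℝ => (t - u) ^ p) (Set.Ioc 0 t) :=
    (intervalIntegrable_iff_integrableOn_Ioc_of_le ht).mp hint
  rw [← MeasureTheory.ofReal_integral_eq_lintegral_ofReal hIoc ?_]
  · congr 1
    rw [← intervalIntegral.integral_of_le ht,
      intervalIntegral.integral_comp_sub_left (fun x => x ^ p) t]
    simp only [sub_self, sub_zero]
    rw [integral_rpow (Or.inl hp), Real.zero_rpow (by linarith : p + 1 ≠ 0)]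
    ring
  · filter_upwards [ae_restrict_mem measurableSet_Ioc] with u hu
    exact Real.rpow_nonneg (by linarith [hu.2]) _

lemma lint_tsub2 (r T : ℝ) (hrT : r ≤ T) (p : ℝ) (hp : -1 < p) :
    ∫⁻ t in Set.Ioc r T, ENNReal.ofReal ((t - r) ^ p)
      = ENNReal.ofReal ((T - r) ^ (p+1) / (p+1)) := by
  have hint : IntervalIntegrable (fun t : ℝ => (t - r) ^ p) volume r T := by
    simpa using (intervalIntegral.intervalIntegrable_rpow' hp (a := 0) (b := T - r)).comp_sub_right r
  have hIoc : MeasureTheory.IntegrableOn (fun t : ℝ => (t - r) ^ p) (Set.Ioc r T) :=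
    (intervalIntegrable_iff_integrableOn_Ioc_of_le hrT).mp hint
  rw [← MeasureTheory.ofReal_integral_eq_lintegral_ofReal hIoc ?_]
  · congr 1
    rw [← intervalIntegral.integral_of_le hrT,
      intervalIntegral.integral_comp_sub_right (fun x => x ^ p) r]
    simp only [sub_self]
    rw [integral_rpow (Or.inl hp), Real.zero_rpow (by linarith : p + 1 ≠ 0)]
    ring
  · filter_upwards [ae_restrict_mem measurableSet_Ioc] with u hu
    exact Real.rpow_nonneg (by linarith [hu.1]) _

lemma swap_dep (f : ℝ → ℝ → ENNReal) (hf : Measurable (Function.uncurry f)) (T : ℝ) :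
    ∫⁻ t in Set.Ioc (0:ℝ) T, ∫⁻ r in Set.Ioc (0:ℝ) t, f t r
      = ∫⁻ r in Set.Ioc (0:ℝ) T, ∫⁻ t in Set.Ioc r T, f t r := by
  have hset : MeasurableSet {q : ℝ × ℝ | q.2 ≤ q.1} := measurableSet_le measurable_snd measurable_fst
  set g : ℝ × ℝ → ENNReal := ({q : ℝ × ℝ | q.2 ≤ q.1}).indicator (Function.uncurry f) with hg
  have hgm : Measurable g := hf.indicator hset
  have h1 : ∫⁻ t in Set.Ioc (0:ℝ) T, ∫⁻ r in Set.Ioc (0:ℝ) t, f t r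
      = ∫⁻ t in Set.Ioc (0:ℝ) T, ∫⁻ r in Set.Ioc (0:ℝ) T, g (t, r) := by
    refine setLIntegral_congr_fun measurableSet_Ioc (fun t ht => ?_)
    have : ∀ r : ℝ, g (t, r) = (Set.Iic t).indicator (f t) r := by
      intro r
      simp only [hg, Set.indicator, Set.mem_setOf_eq, Set.mem_Iic, Function.uncurry]
    simp only [this]
    rw [lintegral_indicator measurableSet_Iic, Measure.restrict_restrict measurableSet_Iic]
    have : Set.Iic t ∩ Set.Ioc 0 T = Set.Ioc 0 t := by
      ext x; simp only [Set.mem_inter_iff, Set.mem_Iic, Set.mem_Ioc]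
      constructor
      · rintro ⟨h1, h2, h3⟩; exact ⟨h2, h1⟩
      · rintro ⟨h1, h2⟩; exact ⟨h2, h1, h2.trans ht.2⟩
    rw [this]
  have h2 : ∫⁻ r in Set.Ioc (0:ℝ) T, ∫⁻ t in Set.Ioc r T, f t r
      = ∫⁻ r in Set.Ioc (0:ℝ) T, ∫⁻ t in Set.Ioc (0:ℝ) T, g (t, r) := by
    refine setLIntegral_congr_fun measurableSet_Ioc (fun r hr => ?_)
    have key : ∀ t : ℝ, g (t, r) = (Set.Ici r).indicator (fun t => f t r) t := by
      intro t
      simp only [hg, Set.indicator, Set.mem_setOf_eq, Set.mem_Ici, Function.uncurry]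
    simp only [key]
    rw [lintegral_indicator measurableSet_Ici, Measure.restrict_restrict measurableSet_Ici]
    have hIcc : Set.Ici r ∩ Set.Ioc 0 T = Set.Icc r T := by
      ext x; simp only [Set.mem_inter_iff, Set.mem_Ici, Set.mem_Ioc, Set.mem_Icc]
      constructor
      · rintro ⟨h1, _, h3⟩; exact ⟨h1, h3⟩
      · rintro ⟨h1, h2⟩; exact ⟨h1, hr.1.trans_le h1, h2⟩
    rw [hIcc, ← setLIntegral_congr (Ioc_ae_eq_Icc (α := ℝ) (a := r) (b := T))]
  rw [h1, h2]
  exact lintegral_lintegral_swap (f := fun t r => g (t, r)) hgm.aemeasurable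

lemma auxA (H : ℝ) (hH : H ∈ Set.Ioo (0:ℝ) (1/2)) (ctil : ℝ → ℝ) (hnn : ∀ t : ℝ, 0 ≤ ctil t)
    (T t₁ t₂ : ℝ) (ht₁ : t₁ ∈ Set.Ioc (0:ℝ) T) (ht₂ : t₂ ∈ Set.Ioc (0:ℝ) T) :
    ∫⁻ r₁ in Set.Ioc (0:ℝ) t₁, ∫⁻ u₁ in Set.Ioc (0:ℝ) t₁,
      ∫⁻ r₂ in Set.Ioc (0:ℝ) t₂, ∫⁻ u₂ in Set.Ioc (0:ℝ) t₂,
        ENNReal.ofReal (ctil (|r₁ - r₂|) * ((t₁ - r₁) ^ (-H - 1/2) *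
          (t₁ - u₁) ^ (-H - 1/2) * (t₂ - r₂) ^ (-H - 1/2) * (t₂ - u₂) ^ (-H - 1/2)))
    ≤ (ENNReal.ofReal (T ^ (1/2 - H) / (1/2 - H)))^2 *
        ∫⁻ r₁ in Set.Ioc (0:ℝ) t₁, ∫⁻ r₂ in Set.Ioc (0:ℝ) t₂,
          ENNReal.ofReal (ctil |r₁ - r₂|) * ENNReal.ofReal ((t₁ - r₁) ^ (-H - 1/2))
            * ENNReal.ofReal ((t₂ - r₂) ^ (-H - 1/2)) := by
  have hq : (-1:ℝ) < -H - 1/2 := by linarith [hH.2]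
  have hδ : (0:ℝ) < 1/2 - H := by linarith [hH.2]
  set Cst : ENNReal := ENNReal.ofReal (T ^ (1/2 - H) / (1/2 - H)) with hCst
  have hu : ∀ t : ℝ, t ∈ Set.Ioc (0:ℝ) T →
      ∫⁻ u in Set.Ioc (0:ℝ) t, ENNReal.ofReal ((t - u) ^ (-H - 1/2)) ≤ Cst := by
    intro t ht
    rw [lint_tsub t ht.1.le _ hq, show (-H - 1/2 + 1 : ℝ) = 1/2 - H by ring]
    apply ENNReal.ofReal_le_ofReal
    gcongr
    · exact ht.1.le
    · exact ht.2
  set E : ℝ → ENNReal := fun r₁ => ∫⁻ r₂ in Set.Ioc (0:ℝ) t₂,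
    ENNReal.ofReal (ctil |r₁ - r₂|) * ENNReal.ofReal ((t₁ - r₁) ^ (-H - 1/2)) *
      ENNReal.ofReal ((t₂ - r₂) ^ (-H - 1/2)) with hE
  have step_u2 : ∀ r₁ ∈ Set.Ioc (0:ℝ) t₁, ∀ u₁ ∈ Set.Ioc (0:ℝ) t₁, ∀ r₂ ∈ Set.Ioc (0:ℝ) t₂,
      ∫⁻ u₂ in Set.Ioc (0:ℝ) t₂,
        ENNReal.ofReal (ctil (|r₁ - r₂|) * ((t₁ - r₁) ^ (-H - 1/2) *
          (t₁ - u₁) ^ (-H - 1/2) * (t₂ - r₂) ^ (-H - 1/2) * (t₂ - u₂) ^ (-H - 1/2)))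
      ≤ ENNReal.ofReal (ctil |r₁ - r₂|) * ENNReal.ofReal ((t₁ - r₁) ^ (-H - 1/2)) *
          ENNReal.ofReal ((t₁ - u₁) ^ (-H - 1/2)) *
          ENNReal.ofReal ((t₂ - r₂) ^ (-H - 1/2)) * Cst := by
    intro r₁ hr₁ u₁ hu₁ r₂ hr₂
    have ha : (0:ℝ) ≤ (t₁ - r₁) ^ (-H - 1/2) := Real.rpow_nonneg (by linarith [hr₁.2]) _
    have hb : (0:ℝ) ≤ (t₁ - u₁) ^ (-H - 1/2) := Real.rpow_nonneg (by linarith [hu₁.2]) _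
    have hc : (0:ℝ) ≤ (t₂ - r₂) ^ (-H - 1/2) := Real.rpow_nonneg (by linarith [hr₂.2]) _
    have hC : (0:ℝ) ≤ ctil |r₁ - r₂| * ((t₁ - r₁) ^ (-H - 1/2) *
        (t₁ - u₁) ^ (-H - 1/2) * (t₂ - r₂) ^ (-H - 1/2)) :=
      mul_nonneg (hnn _) (mul_nonneg (mul_nonneg ha hb) hc)
    have e1 : ∫⁻ u₂ in Set.Ioc (0:ℝ) t₂,
        ENNReal.ofReal (ctil (|r₁ - r₂|) * ((t₁ - r₁) ^ (-H - 1/2) *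
          (t₁ - u₁) ^ (-H - 1/2) * (t₂ - r₂) ^ (-H - 1/2) * (t₂ - u₂) ^ (-H - 1/2)))
        = ENNReal.ofReal (ctil |r₁ - r₂| * ((t₁ - r₁) ^ (-H - 1/2) *
            (t₁ - u₁) ^ (-H - 1/2) * (t₂ - r₂) ^ (-H - 1/2))) *
          ∫⁻ u₂ in Set.Ioc (0:ℝ) t₂, ENNReal.ofReal ((t₂ - u₂) ^ (-H - 1/2)) := by
      rw [← lintegral_const_mul' _ _ ENNReal.ofReal_ne_top]
      refine lintegral_congr fun u₂ => ?_
      rw [← ENNReal.ofReal_mul hC]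
      congr 1; ring
    rw [e1, ENNReal.ofReal_mul (hnn _), ENNReal.ofReal_mul (mul_nonneg ha hb),
      ENNReal.ofReal_mul ha]
    calc ENNReal.ofReal (ctil |r₁ - r₂|) * (ENNReal.ofReal ((t₁ - r₁) ^ (-H - 1/2)) *
          ENNReal.ofReal ((t₁ - u₁) ^ (-H - 1/2)) * ENNReal.ofReal ((t₂ - r₂) ^ (-H - 1/2))) *
          ∫⁻ u₂ in Set.Ioc (0:ℝ) t₂, ENNReal.ofReal ((t₂ - u₂) ^ (-H - 1/2))
        ≤ ENNReal.ofReal (ctil |r₁ - r₂|) * (ENNReal.ofReal ((t₁ - r₁) ^ (-H - 1/2)) *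
          ENNReal.ofReal ((t₁ - u₁) ^ (-H - 1/2)) * ENNReal.ofReal ((t₂ - r₂) ^ (-H - 1/2))) *
          Cst := mul_le_mul_right (hu t₂ ht₂) _
      _ = ENNReal.ofReal (ctil |r₁ - r₂|) * ENNReal.ofReal ((t₁ - r₁) ^ (-H - 1/2)) *
          ENNReal.ofReal ((t₁ - u₁) ^ (-H - 1/2)) * ENNReal.ofReal ((t₂ - r₂) ^ (-H - 1/2)) *
          Cst := by ring
  have step_r2 : ∀ r₁ ∈ Set.Ioc (0:ℝ) t₁, ∀ u₁ ∈ Set.Ioc (0:ℝ) t₁,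
      ∫⁻ r₂ in Set.Ioc (0:ℝ) t₂, ∫⁻ u₂ in Set.Ioc (0:ℝ) t₂,
        ENNReal.ofReal (ctil (|r₁ - r₂|) * ((t₁ - r₁) ^ (-H - 1/2) *
          (t₁ - u₁) ^ (-H - 1/2) * (t₂ - r₂) ^ (-H - 1/2) * (t₂ - u₂) ^ (-H - 1/2)))
      ≤ ENNReal.ofReal ((t₁ - u₁) ^ (-H - 1/2)) * (Cst * E r₁) := by
    intro r₁ hr₁ u₁ hu₁
    calc ∫⁻ r₂ in Set.Ioc (0:ℝ) t₂, ∫⁻ u₂ in Set.Ioc (0:ℝ) t₂,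
          ENNReal.ofReal (ctil (|r₁ - r₂|) * ((t₁ - r₁) ^ (-H - 1/2) *
            (t₁ - u₁) ^ (-H - 1/2) * (t₂ - r₂) ^ (-H - 1/2) * (t₂ - u₂) ^ (-H - 1/2)))
        ≤ ∫⁻ r₂ in Set.Ioc (0:ℝ) t₂, ENNReal.ofReal (ctil |r₁ - r₂|) *
            ENNReal.ofReal ((t₁ - r₁) ^ (-H - 1/2)) *
            ENNReal.ofReal ((t₁ - u₁) ^ (-H - 1/2)) *
            ENNReal.ofReal ((t₂ - r₂) ^ (-H - 1/2)) * Cst :=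
        setLIntegral_mono' measurableSet_Ioc (fun r₂ hr₂ => step_u2 r₁ hr₁ u₁ hu₁ r₂ hr₂)
      _ = ∫⁻ r₂ in Set.Ioc (0:ℝ) t₂, (ENNReal.ofReal ((t₁ - u₁) ^ (-H - 1/2)) * Cst) *
            (ENNReal.ofReal (ctil |r₁ - r₂|) * ENNReal.ofReal ((t₁ - r₁) ^ (-H - 1/2)) *
              ENNReal.ofReal ((t₂ - r₂) ^ (-H - 1/2))) :=
        lintegral_congr fun r₂ => by ring
      _ = (ENNReal.ofReal ((t₁ - u₁) ^ (-H - 1/2)) * Cst) * E r₁ :=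
        lintegral_const_mul' _ _ (ENNReal.mul_ne_top ENNReal.ofReal_ne_top
          ENNReal.ofReal_ne_top)
      _ = ENNReal.ofReal ((t₁ - u₁) ^ (-H - 1/2)) * (Cst * E r₁) := by ring
  have step_u1 : ∀ r₁ ∈ Set.Ioc (0:ℝ) t₁,
      ∫⁻ u₁ in Set.Ioc (0:ℝ) t₁, ∫⁻ r₂ in Set.Ioc (0:ℝ) t₂, ∫⁻ u₂ in Set.Ioc (0:ℝ) t₂,
        ENNReal.ofReal (ctil (|r₁ - r₂|) * ((t₁ - r₁) ^ (-H - 1/2) *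
          (t₁ - u₁) ^ (-H - 1/2) * (t₂ - r₂) ^ (-H - 1/2) * (t₂ - u₂) ^ (-H - 1/2)))
      ≤ Cst * (Cst * E r₁) := by
    intro r₁ hr₁
    calc ∫⁻ u₁ in Set.Ioc (0:ℝ) t₁, ∫⁻ r₂ in Set.Ioc (0:ℝ) t₂, ∫⁻ u₂ in Set.Ioc (0:ℝ) t₂,
          ENNReal.ofReal (ctil (|r₁ - r₂|) * ((t₁ - r₁) ^ (-H - 1/2) *
            (t₁ - u₁) ^ (-H - 1/2) * (t₂ - r₂) ^ (-H - 1/2) * (t₂ - u₂) ^ (-H - 1/2)))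
        ≤ ∫⁻ u₁ in Set.Ioc (0:ℝ) t₁,
            ENNReal.ofReal ((t₁ - u₁) ^ (-H - 1/2)) * (Cst * E r₁) :=
        setLIntegral_mono' measurableSet_Ioc (fun u₁ hu₁ => step_r2 r₁ hr₁ u₁ hu₁)
      _ = (∫⁻ u₁ in Set.Ioc (0:ℝ) t₁, ENNReal.ofReal ((t₁ - u₁) ^ (-H - 1/2))) *
            (Cst * E r₁) := lintegral_mul_const _ (by fun_prop)
      _ ≤ Cst * (Cst * E r₁) := mul_le_mul_left (hu t₁ ht₁) _
  calc ∫⁻ r₁ in Set.Ioc (0:ℝ) t₁, ∫⁻ u₁ in Set.Ioc (0:ℝ) t₁,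
      ∫⁻ r₂ in Set.Ioc (0:ℝ) t₂, ∫⁻ u₂ in Set.Ioc (0:ℝ) t₂,
        ENNReal.ofReal (ctil (|r₁ - r₂|) * ((t₁ - r₁) ^ (-H - 1/2) *
          (t₁ - u₁) ^ (-H - 1/2) * (t₂ - r₂) ^ (-H - 1/2) * (t₂ - u₂) ^ (-H - 1/2)))
      ≤ ∫⁻ r₁ in Set.Ioc (0:ℝ) t₁, Cst * (Cst * E r₁) :=
      setLIntegral_mono' measurableSet_Ioc (fun r₁ hr₁ => step_u1 r₁ hr₁)
    _ = ∫⁻ r₁ in Set.Ioc (0:ℝ) t₁, Cst ^ 2 * E r₁ := lintegral_congr fun r₁ => by ring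
    _ = Cst ^ 2 * ∫⁻ r₁ in Set.Ioc (0:ℝ) t₁, E r₁ :=
      lintegral_const_mul' _ _ (ENNReal.pow_ne_top ENNReal.ofReal_ne_top)

lemma auxB (H : ℝ) (hH : H ∈ Set.Ioo (0:ℝ) (1/2)) (ctil : ℝ → ℝ) (hmeas : Measurable ctil)
    (T : ℝ) :
    ∫⁻ t₁ in Set.Ioc (0:ℝ) T, ∫⁻ t₂ in Set.Ioc (0:ℝ) T,
      ∫⁻ r₁ in Set.Ioc (0:ℝ) t₁, ∫⁻ r₂ in Set.Ioc (0:ℝ) t₂,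
        ENNReal.ofReal (ctil |r₁ - r₂|) * ENNReal.ofReal ((t₁ - r₁) ^ (-H - 1/2))
          * ENNReal.ofReal ((t₂ - r₂) ^ (-H - 1/2))
      = ∫⁻ r₁ in Set.Ioc (0:ℝ) T, ENNReal.ofReal ((T - r₁) ^ (1/2 - H) / (1/2 - H)) *
          ∫⁻ r₂ in Set.Ioc (0:ℝ) T, ENNReal.ofReal (ctil |r₁ - r₂|) *
            ENNReal.ofReal ((T - r₂) ^ (1/2 - H) / (1/2 - H)) := by
  have hq : (-1:ℝ) < -H - 1/2 := by linarith [hH.2]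
  set M : ℝ → ENNReal := fun r₁ => ∫⁻ r₂ in Set.Ioc (0:ℝ) T,
    ENNReal.ofReal (ctil |r₁ - r₂|) *
      ENNReal.ofReal ((T - r₂) ^ (1/2 - H) / (1/2 - H)) with hM
  have key : ∀ t₁ : ℝ, ∫⁻ t₂ in Set.Ioc (0:ℝ) T,
      ∫⁻ r₁ in Set.Ioc (0:ℝ) t₁, ∫⁻ r₂ in Set.Ioc (0:ℝ) t₂,
        ENNReal.ofReal (ctil |r₁ - r₂|) * ENNReal.ofReal ((t₁ - r₁) ^ (-H - 1/2))
          * ENNReal.ofReal ((t₂ - r₂) ^ (-H - 1/2))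
      = ∫⁻ r₁ in Set.Ioc (0:ℝ) t₁, ENNReal.ofReal ((t₁ - r₁) ^ (-H - 1/2)) * M r₁ := by
    intro t₁
    -- (i) swap r₁ ↔ r₂ for each t₂
    have h_i : ∀ t₂ : ℝ,
        (∫⁻ r₁ in Set.Ioc (0:ℝ) t₁, ∫⁻ r₂ in Set.Ioc (0:ℝ) t₂,
          ENNReal.ofReal (ctil |r₁ - r₂|) * ENNReal.ofReal ((t₁ - r₁) ^ (-H - 1/2))
            * ENNReal.ofReal ((t₂ - r₂) ^ (-H - 1/2)))
        = ∫⁻ r₂ in Set.Ioc (0:ℝ) t₂, ∫⁻ r₁ in Set.Ioc (0:ℝ) t₁,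
            ENNReal.ofReal (ctil |r₁ - r₂|) * ENNReal.ofReal ((t₁ - r₁) ^ (-H - 1/2))
              * ENNReal.ofReal ((t₂ - r₂) ^ (-H - 1/2)) := by
      intro t₂
      exact lintegral_lintegral_swap (by fun_prop)
    rw [setLIntegral_congr_fun measurableSet_Ioc (fun t₂ _ => h_i t₂)]
    -- (ii) dependent swap in (t₂, r₂)
    rw [swap_dep (fun t₂ r₂ => ∫⁻ r₁ in Set.Ioc (0:ℝ) t₁,
        ENNReal.ofReal (ctil |r₁ - r₂|) * ENNReal.ofReal ((t₁ - r₁) ^ (-H - 1/2))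
          * ENNReal.ofReal ((t₂ - r₂) ^ (-H - 1/2)))
      (by
        have : Measurable (fun x : (ℝ × ℝ) × ℝ => ENNReal.ofReal (ctil |x.2 - x.1.2|) *
            ENNReal.ofReal ((t₁ - x.2) ^ (-H - 1/2)) *
            ENNReal.ofReal ((x.1.1 - x.1.2) ^ (-H - 1/2))) := by fun_prop
        exact this.lintegral_prod_right') T]
    -- (iii)+(iv): inner t₂-integral
    have h_iii : ∀ r₂ ∈ Set.Ioc (0:ℝ) T,
        (∫⁻ t₂ in Set.Ioc r₂ T, ∫⁻ r₁ in Set.Ioc (0:ℝ) t₁,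
          ENNReal.ofReal (ctil |r₁ - r₂|) * ENNReal.ofReal ((t₁ - r₁) ^ (-H - 1/2))
            * ENNReal.ofReal ((t₂ - r₂) ^ (-H - 1/2)))
        = ∫⁻ r₁ in Set.Ioc (0:ℝ) t₁,
            ENNReal.ofReal (ctil |r₁ - r₂|) * ENNReal.ofReal ((t₁ - r₁) ^ (-H - 1/2))
              * ENNReal.ofReal ((T - r₂) ^ (1/2 - H) / (1/2 - H)) := by
      intro r₂ hr₂
      have e1 : ∀ t₂ : ℝ,
          (∫⁻ r₁ in Set.Ioc (0:ℝ) t₁,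
            ENNReal.ofReal (ctil |r₁ - r₂|) * ENNReal.ofReal ((t₁ - r₁) ^ (-H - 1/2))
              * ENNReal.ofReal ((t₂ - r₂) ^ (-H - 1/2)))
          = (∫⁻ r₁ in Set.Ioc (0:ℝ) t₁,
              ENNReal.ofReal (ctil |r₁ - r₂|) * ENNReal.ofReal ((t₁ - r₁) ^ (-H - 1/2)))
            * ENNReal.ofReal ((t₂ - r₂) ^ (-H - 1/2)) := fun t₂ =>
        lintegral_mul_const _ (by fun_prop)
      rw [setLIntegral_congr_fun measurableSet_Ioc (fun t₂ _ => e1 t₂),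
        lintegral_const_mul _ (by fun_prop), lint_tsub2 r₂ T hr₂.2 _ hq,
        show (-H - 1/2 + 1 : ℝ) = 1/2 - H by ring,
        ← lintegral_mul_const _ (show Measurable fun r₁ =>
          ENNReal.ofReal (ctil |r₁ - r₂|) * ENNReal.ofReal ((t₁ - r₁) ^ (-H - 1/2))
          by fun_prop)]
    rw [setLIntegral_congr_fun measurableSet_Ioc (fun r₂ hr₂ => h_iii r₂ hr₂)]
    -- (v) swap r₂ ↔ r₁ (independent)
    rw [lintegral_lintegral_swap (by fun_prop)]
    -- (vi) pull out the r₁-factor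
    refine setLIntegral_congr_fun measurableSet_Ioc (fun r₁ _ => ?_)
    rw [hM, ← lintegral_const_mul' _ _ ENNReal.ofReal_ne_top]
    exact lintegral_congr fun r₂ => by ring
  rw [setLIntegral_congr_fun measurableSet_Ioc (fun t₁ _ => key t₁)]
  rw [swap_dep (fun t₁ r₁ => ENNReal.ofReal ((t₁ - r₁) ^ (-H - 1/2)) * M r₁)
    (by
      have hMm : Measurable M := by
        have : Measurable (fun x : ℝ × ℝ => ENNReal.ofReal (ctil |x.1 - x.2|) *
            ENNReal.ofReal ((T - x.2) ^ (1/2 - H) / (1/2 - H))) := by fun_prop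
        exact this.lintegral_prod_right'
      exact Measurable.mul (by fun_prop) (hMm.comp measurable_snd)) T]
  refine setLIntegral_congr_fun measurableSet_Ioc (fun r₁ hr₁ => ?_)
  rw [lintegral_mul_const _ (by fun_prop), lint_tsub2 r₁ T hr₁.2 _ hq,
    show (-H - 1/2 + 1 : ℝ) = 1/2 - H by ring]


theorem stmt12 (H : ℝ) (hH : H ∈ Set.Ioo (0:ℝ) (1/2)) (ctil : ℝ → ℝ)
    (hmeas : Measurable ctil) (hnn : ∀ t : ℝ, 0 ≤ ctil t) :
    ∀ T : ℝ, 0 < T →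
      ENNReal.ofReal (T ^ (-2 : ℝ)) *
          ∫⁻ t₁ in Set.Ioc (0:ℝ) T, ∫⁻ t₂ in Set.Ioc (0:ℝ) T,
            ∫⁻ r₁ in Set.Ioc (0:ℝ) t₁, ∫⁻ u₁ in Set.Ioc (0:ℝ) t₁,
              ∫⁻ r₂ in Set.Ioc (0:ℝ) t₂, ∫⁻ u₂ in Set.Ioc (0:ℝ) t₂,
                ENNReal.ofReal (ctil (|r₁ - r₂|) * ((t₁ - r₁) ^ (-H - 1/2) *
                  (t₁ - u₁) ^ (-H - 1/2) * (t₂ - r₂) ^ (-H - 1/2) * (t₂ - u₂) ^ (-H - 1/2)))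
        ≤ ENNReal.ofReal ((1/2 - H) ^ (-4 : ℝ) * T ^ (-1 - 2*H)) *
          ∫⁻ r₁ in Set.Ioc (0:ℝ) T, ∫⁻ r₂ in Set.Ioc (0:ℝ) T,
            ENNReal.ofReal (ctil (|r₁ - r₂|) * (T - r₁) ^ (1/2 - H) * (T - r₂) ^ (1/2 - H)) := by
  intro T hT
  have hδ : (0:ℝ) < 1/2 - H := by linarith [hH.2]
  set Cst : ENNReal := ENNReal.ofReal (T ^ (1/2 - H) / (1/2 - H)) with hCst
  set M : ℝ → ENNReal := fun r₁ => ∫⁻ r₂ in Set.Ioc (0:ℝ) T,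
    ENNReal.ofReal (ctil |r₁ - r₂|) *
      ENNReal.ofReal ((T - r₂) ^ (1/2 - H) / (1/2 - H)) with hM
  have h1 : ∫⁻ t₁ in Set.Ioc (0:ℝ) T, ∫⁻ t₂ in Set.Ioc (0:ℝ) T,
      ∫⁻ r₁ in Set.Ioc (0:ℝ) t₁, ∫⁻ u₁ in Set.Ioc (0:ℝ) t₁,
        ∫⁻ r₂ in Set.Ioc (0:ℝ) t₂, ∫⁻ u₂ in Set.Ioc (0:ℝ) t₂,
          ENNReal.ofReal (ctil (|r₁ - r₂|) * ((t₁ - r₁) ^ (-H - 1/2) *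
            (t₁ - u₁) ^ (-H - 1/2) * (t₂ - r₂) ^ (-H - 1/2) * (t₂ - u₂) ^ (-H - 1/2)))
      ≤ Cst ^ 2 * ∫⁻ r₁ in Set.Ioc (0:ℝ) T,
          ENNReal.ofReal ((T - r₁) ^ (1/2 - H) / (1/2 - H)) * M r₁ := by
    calc ∫⁻ t₁ in Set.Ioc (0:ℝ) T, ∫⁻ t₂ in Set.Ioc (0:ℝ) T,
        ∫⁻ r₁ in Set.Ioc (0:ℝ) t₁, ∫⁻ u₁ in Set.Ioc (0:ℝ) t₁,
          ∫⁻ r₂ in Set.Ioc (0:ℝ) t₂, ∫⁻ u₂ in Set.Ioc (0:ℝ) t₂,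
            ENNReal.ofReal (ctil (|r₁ - r₂|) * ((t₁ - r₁) ^ (-H - 1/2) *
              (t₁ - u₁) ^ (-H - 1/2) * (t₂ - r₂) ^ (-H - 1/2) * (t₂ - u₂) ^ (-H - 1/2)))
        ≤ ∫⁻ t₁ in Set.Ioc (0:ℝ) T, ∫⁻ t₂ in Set.Ioc (0:ℝ) T, Cst ^ 2 *
            ∫⁻ r₁ in Set.Ioc (0:ℝ) t₁, ∫⁻ r₂ in Set.Ioc (0:ℝ) t₂,
              ENNReal.ofReal (ctil |r₁ - r₂|) * ENNReal.ofReal ((t₁ - r₁) ^ (-H - 1/2))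
                * ENNReal.ofReal ((t₂ - r₂) ^ (-H - 1/2)) :=
        setLIntegral_mono' measurableSet_Ioc fun t₁ ht₁ =>
          setLIntegral_mono' measurableSet_Ioc fun t₂ ht₂ =>
            auxA H hH ctil hnn T t₁ t₂ ht₁ ht₂
      _ = Cst ^ 2 * ∫⁻ t₁ in Set.Ioc (0:ℝ) T, ∫⁻ t₂ in Set.Ioc (0:ℝ) T,
            ∫⁻ r₁ in Set.Ioc (0:ℝ) t₁, ∫⁻ r₂ in Set.Ioc (0:ℝ) t₂,
              ENNReal.ofReal (ctil |r₁ - r₂|) * ENNReal.ofReal ((t₁ - r₁) ^ (-H - 1/2))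
                * ENNReal.ofReal ((t₂ - r₂) ^ (-H - 1/2)) := by
          rw [← lintegral_const_mul' _ _ (ENNReal.pow_ne_top ENNReal.ofReal_ne_top)]
          exact lintegral_congr fun t₁ =>
            lintegral_const_mul' _ _ (ENNReal.pow_ne_top ENNReal.ofReal_ne_top)
      _ = Cst ^ 2 * ∫⁻ r₁ in Set.Ioc (0:ℝ) T,
            ENNReal.ofReal ((T - r₁) ^ (1/2 - H) / (1/2 - H)) * M r₁ := by
          rw [auxB H hH ctil hmeas T]
  have h2 : ∫⁻ r₁ in Set.Ioc (0:ℝ) T,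
      ENNReal.ofReal ((T - r₁) ^ (1/2 - H) / (1/2 - H)) * M r₁
      = ENNReal.ofReal (1/(1/2 - H)) ^ 2 *
        ∫⁻ r₁ in Set.Ioc (0:ℝ) T, ∫⁻ r₂ in Set.Ioc (0:ℝ) T,
          ENNReal.ofReal (ctil (|r₁ - r₂|) * (T - r₁) ^ (1/2 - H) * (T - r₂) ^ (1/2 - H)) := by
    rw [← lintegral_const_mul' _ _ (ENNReal.pow_ne_top ENNReal.ofReal_ne_top)]
    refine setLIntegral_congr_fun measurableSet_Ioc (fun r₁ hr₁ => ?_)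
    have hTr₁ : (0:ℝ) ≤ T - r₁ := by linarith [hr₁.2]
    calc ENNReal.ofReal ((T - r₁) ^ (1/2 - H) / (1/2 - H)) * M r₁
        = ∫⁻ r₂ in Set.Ioc (0:ℝ) T,
            ENNReal.ofReal ((T - r₁) ^ (1/2 - H) / (1/2 - H)) *
              (ENNReal.ofReal (ctil |r₁ - r₂|) *
                ENNReal.ofReal ((T - r₂) ^ (1/2 - H) / (1/2 - H))) :=
          (lintegral_const_mul' _ _ ENNReal.ofReal_ne_top).symm
      _ = ∫⁻ r₂ in Set.Ioc (0:ℝ) T, ENNReal.ofReal (1/(1/2 - H)) ^ 2 *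
            ENNReal.ofReal (ctil (|r₁ - r₂|) * (T - r₁) ^ (1/2 - H) *
              (T - r₂) ^ (1/2 - H)) := by
          refine setLIntegral_congr_fun measurableSet_Ioc (fun r₂ hr₂ => ?_)
          have hTr₂ : (0:ℝ) ≤ T - r₂ := by linarith [hr₂.2]
          rw [show (T - r₁) ^ (1/2 - H) / (1/2 - H)
              = (T - r₁) ^ (1/2 - H) * (1/(1/2 - H)) by ring,
            show (T - r₂) ^ (1/2 - H) / (1/2 - H)
              = (T - r₂) ^ (1/2 - H) * (1/(1/2 - H)) by ring,
            ENNReal.ofReal_mul (Real.rpow_nonneg hTr₁ _),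
            ENNReal.ofReal_mul (Real.rpow_nonneg hTr₂ _),
            ENNReal.ofReal_mul (mul_nonneg (hnn _) (Real.rpow_nonneg hTr₁ _)),
            ENNReal.ofReal_mul (hnn _), sq]
          ring
      _ = ENNReal.ofReal (1/(1/2 - H)) ^ 2 *
            ∫⁻ r₂ in Set.Ioc (0:ℝ) T,
              ENNReal.ofReal (ctil (|r₁ - r₂|) * (T - r₁) ^ (1/2 - H) *
                (T - r₂) ^ (1/2 - H)) :=
          lintegral_const_mul' _ _ (ENNReal.pow_ne_top ENNReal.ofReal_ne_top)
  have hconst : ENNReal.ofReal (T ^ (-2:ℝ)) * Cst ^ 2 * ENNReal.ofReal (1/(1/2 - H)) ^ 2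
      = ENNReal.ofReal ((1/2 - H) ^ (-4 : ℝ) * T ^ (-1 - 2*H)) := by
    rw [hCst, ← ENNReal.ofReal_pow (by positivity), ← ENNReal.ofReal_pow (by positivity),
      ← ENNReal.ofReal_mul (by positivity), ← ENNReal.ofReal_mul (by positivity)]
    congr 1
    have e4 : ((1/2 - H):ℝ) ^ (-4:ℝ) = (((1/2 - H):ℝ) ^ (4:ℕ))⁻¹ := by
      rw [← Real.rpow_natCast (1/2 - H) 4, ← Real.rpow_neg hδ.le]
      norm_num
    have eT : T ^ (-2:ℝ) * T ^ ((1:ℝ)/2 - H) * T ^ ((1:ℝ)/2 - H) = T ^ (-1 - 2*H) := by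
      rw [← Real.rpow_add hT, ← Real.rpow_add hT]
      congr 1
      ring
    have emid : (T ^ ((1:ℝ)/2 - H) / (1/2 - H)) ^ 2 * (1/(1/2 - H)) ^ 2
        = (T ^ ((1:ℝ)/2 - H) * T ^ ((1:ℝ)/2 - H)) * (((1/2 - H):ℝ) ^ (4:ℕ))⁻¹ := by
      field_simp
    calc T ^ (-2:ℝ) * (T ^ ((1:ℝ)/2 - H) / (1/2 - H)) ^ 2 * (1/(1/2 - H)) ^ 2
        = T ^ (-2:ℝ) * ((T ^ ((1:ℝ)/2 - H) * T ^ ((1:ℝ)/2 - H))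
            * (((1/2 - H):ℝ) ^ (4:ℕ))⁻¹) := by rw [mul_assoc, emid]
      _ = (T ^ (-2:ℝ) * T ^ ((1:ℝ)/2 - H) * T ^ ((1:ℝ)/2 - H))
            * (((1/2 - H):ℝ) ^ (4:ℕ))⁻¹ := by ring
      _ = (1/2 - H) ^ (-4 : ℝ) * T ^ (-1 - 2*H) := by rw [eT, ← e4]; ring
  calc ENNReal.ofReal (T ^ (-2 : ℝ)) *
        ∫⁻ t₁ in Set.Ioc (0:ℝ) T, ∫⁻ t₂ in Set.Ioc (0:ℝ) T,
          ∫⁻ r₁ in Set.Ioc (0:ℝ) t₁, ∫⁻ u₁ in Set.Ioc (0:ℝ) t₁,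
            ∫⁻ r₂ in Set.Ioc (0:ℝ) t₂, ∫⁻ u₂ in Set.Ioc (0:ℝ) t₂,
              ENNReal.ofReal (ctil (|r₁ - r₂|) * ((t₁ - r₁) ^ (-H - 1/2) *
                (t₁ - u₁) ^ (-H - 1/2) * (t₂ - r₂) ^ (-H - 1/2) * (t₂ - u₂) ^ (-H - 1/2)))
      ≤ ENNReal.ofReal (T ^ (-2 : ℝ)) * (Cst ^ 2 * ∫⁻ r₁ in Set.Ioc (0:ℝ) T,
          ENNReal.ofReal ((T - r₁) ^ (1/2 - H) / (1/2 - H)) * M r₁) :=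
      mul_le_mul_right h1 _
    _ = (ENNReal.ofReal (T ^ (-2:ℝ)) * Cst ^ 2 * ENNReal.ofReal (1/(1/2 - H)) ^ 2) *
        ∫⁻ r₁ in Set.Ioc (0:ℝ) T, ∫⁻ r₂ in Set.Ioc (0:ℝ) T,
          ENNReal.ofReal (ctil (|r₁ - r₂|) * (T - r₁) ^ (1/2 - H) *
            (T - r₂) ^ (1/2 - H)) := by rw [h2]; ring
    _ = ENNReal.ofReal ((1/2 - H) ^ (-4 : ℝ) * T ^ (-1 - 2*H)) *
        ∫⁻ r₁ in Set.Ioc (0:ℝ) T, ∫⁻ r₂ in Set.Ioc (0:ℝ) T,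
          ENNReal.ofReal (ctil (|r₁ - r₂|) * (T - r₁) ^ (1/2 - H) *
            (T - r₂) ^ (1/2 - H)) := by rw [hconst]
end

section
/- Let H ∈ (0,1/2) and let c̃ : [0,∞) → [0,∞) be measurable with c̃(t) ≤ C for all t ≥ 0 and c̃(t) ≤ C·t^{H−3/2} for all t ≥ 1, for some C > 0. Then lim_{T→∞} T^{2H−3} ∫₀^T ∫₀^T ∫₀^{t₁} ∫₀^{t₂} (t₁−r₁)^{−H−1/2} r₁^{1/2−H} (t₂−r₂)^{−H−1/2} r₂^{1/2−H} · c̃(|r₁−r₂|) dr₂ dr₁ dt₂ dt₁ = 0. -/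
open MeasureTheory Set Filter

namespace Stmt14Helper


lemma ofReal_integral_le (f : ℝ → ℝ) (μ : Measure ℝ) :
    ENNReal.ofReal (∫ x, f x ∂μ) ≤ ∫⁻ x, ENNReal.ofReal (f x) ∂μ := by
  by_cases hf : Integrable f μ
  · have hg : Integrable (fun x => max (f x) 0) μ := hf.pos_part
    calc ENNReal.ofReal (∫ x, f x ∂μ)
        ≤ ENNReal.ofReal (∫ x, max (f x) 0 ∂μ) :=
          ENNReal.ofReal_le_ofReal (integral_mono hf hg fun x => le_max_left _ _)
      _ = ∫⁻ x, ENNReal.ofReal (max (f x) 0) ∂μ :=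
          ofReal_integral_eq_lintegral_ofReal hg
            (Filter.Eventually.of_forall fun x => le_max_right _ _)
      _ = ∫⁻ x, ENNReal.ofReal (f x) ∂μ := by
          refine lintegral_congr fun x => ?_
          rcases le_total 0 (f x) with h | h
          · rw [max_eq_left h]
          · simp [max_eq_right h, ENNReal.ofReal_of_nonpos h]
  · rw [integral_undef hf]
    simp

lemma kernelA {p : ℝ} (hp1 : -1 < p) (hp0 : p < 0) {b T : ℝ} (hb : 0 < b) (hbT : b ≤ T) :
    ∫⁻ x in Ioc (0:ℝ) b, ENNReal.ofReal ((b - x) ^ p) ≤ ENNReal.ofReal (T ^ (p+1) / (p+1)) := by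
  have hInt : IntegrableOn (fun x => (b - x) ^ p) (Ioc 0 b) volume := by
    have h1 : IntervalIntegrable (fun x : ℝ => x ^ p) volume b 0 :=
      intervalIntegral.intervalIntegrable_rpow' hp1
    have h2 := h1.comp_sub_left b
    rw [sub_self, sub_zero] at h2
    exact (intervalIntegrable_iff_integrableOn_Ioc_of_le hb.le).mp h2
  rw [← ofReal_integral_eq_lintegral_ofReal hInt ((ae_restrict_iff' measurableSet_Ioc).mpr
      (Filter.Eventually.of_forall fun x hx => Real.rpow_nonneg (by linarith [hx.2]) _))]
  apply ENNReal.ofReal_le_ofReal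
  have hval : ∫ x in Ioc (0:ℝ) b, (b - x) ^ p = b ^ (p+1)/(p+1) := by
    rw [← intervalIntegral.integral_of_le hb.le,
      intervalIntegral.integral_comp_sub_left (fun x => x ^ p) b,
      sub_self, sub_zero, integral_rpow (Or.inl hp1),
      Real.zero_rpow (ne_of_gt (by linarith : (0:ℝ) < p + 1))]
    ring
  rw [hval]
  gcongr <;> linarith

lemma kernelB {p : ℝ} (hp1 : -1 < p) (hp0 : p < 0) {r T : ℝ} (hr : 0 < r) (hrT : r ≤ T) :
    ∫⁻ t in Ioc (0:ℝ) T, ((if r ≤ t then (1:ENNReal) else 0) * ENNReal.ofReal ((t - r) ^ p))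
      ≤ ENNReal.ofReal (T ^ (p+1) / (p+1)) := by
  rw [← Set.Ioc_union_Ioc_eq_Ioc hr.le hrT,
    lintegral_union measurableSet_Ioc (Set.Ioc_disjoint_Ioc_of_le le_rfl)]
  have h1 : ∫⁻ t in Ioc (0:ℝ) r,
      ((if r ≤ t then (1:ENNReal) else 0) * ENNReal.ofReal ((t - r) ^ p)) = 0 := by
    rw [setLIntegral_congr_fun measurableSet_Ioc (g := fun _ => 0)
      (fun t ht => ?_), lintegral_zero]
    rcases le_or_gt r t with h | h
    · have : t = r := le_antisymm ht.2 h
      simp [this, Real.zero_rpow hp0.ne]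
    · simp [if_neg (not_le.mpr h)]
  rw [h1, zero_add]
  have h2 : ∫⁻ t in Ioc r T,
      ((if r ≤ t then (1:ENNReal) else 0) * ENNReal.ofReal ((t - r) ^ p))
      = ∫⁻ t in Ioc r T, ENNReal.ofReal ((t - r) ^ p) := by
    refine setLIntegral_congr_fun measurableSet_Ioc (fun t ht => ?_)
    rw [if_pos ht.1.le, one_mul]
  rw [h2]
  have hInt : IntegrableOn (fun t => (t - r) ^ p) (Ioc r T) volume := by
    have h1 : IntervalIntegrable (fun x : ℝ => x ^ p) volume 0 (T - r) :=
      intervalIntegral.intervalIntegrable_rpow' hp1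
    have h2 := h1.comp_sub_right r
    rw [zero_add, sub_add_cancel] at h2
    exact (intervalIntegrable_iff_integrableOn_Ioc_of_le hrT).mp h2
  rw [← ofReal_integral_eq_lintegral_ofReal hInt ((ae_restrict_iff' measurableSet_Ioc).mpr
      (Filter.Eventually.of_forall fun t ht => Real.rpow_nonneg (by linarith [ht.1]) _))]
  apply ENNReal.ofReal_le_ofReal
  have hval : ∫ t in Ioc r T, (t - r) ^ p = (T - r) ^ (p+1)/(p+1) := by
    rw [← intervalIntegral.integral_of_le hrT,
      intervalIntegral.integral_comp_sub_right (fun x => x ^ p) r,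
      sub_self, integral_rpow (Or.inl hp1),
      Real.zero_rpow (ne_of_gt (by linarith : (0:ℝ) < p + 1))]
    ring
  rw [hval]
  gcongr <;> linarith



lemma cbound {H C : ℝ} (hH0 : 0 < H) (hH2 : H < 1/2) {ctil : ℝ → ℝ}
    (hnn : ∀ t, 0 ≤ ctil t) (hC : 0 < C) (hb0 : ∀ t, 0 ≤ t → ctil t ≤ C)
    (hb1 : ∀ t, 1 ≤ t → ctil t ≤ C * t ^ (H - 3/2)) (T r₁ : ℝ) :
    ∫⁻ r₂ in Ioc (0:ℝ) T, ENNReal.ofReal (ctil |r₁ - r₂|) ≤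
      ENNReal.ofReal (2*C + 2*(C/(1/2 - H))) := by
  set ψ : ℝ → ℝ := fun u => C * min 1 (|u| ^ (H - 3/2)) with hψ
  have hq0 : (0:ℝ) < 1/2 - H := by linarith
  have hae : ∀ᵐ r₂ ∂(volume.restrict (Ioc (0:ℝ) T)),
      ENNReal.ofReal (ctil |r₁ - r₂|) ≤ ENNReal.ofReal (ψ (r₂ - r₁)) := by
    refine ae_restrict_of_ae ?_
    have hsing : ∀ᵐ r₂ : ℝ, r₂ ≠ r₁ := by
      rw [ae_iff]
      have h : {r₂ : ℝ | ¬ r₂ ≠ r₁} = {r₁} := by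
        ext x; simp
      rw [h]
      exact measure_singleton r₁
    filter_upwards [hsing] with r₂ hne
    apply ENNReal.ofReal_le_ofReal
    have habs : |r₁ - r₂| = |r₂ - r₁| := abs_sub_comm _ _
    have hu0 : 0 < |r₂ - r₁| := abs_pos.mpr (sub_ne_zero.mpr hne)
    rcases le_or_gt 1 |r₂ - r₁| with h | h
    · have hle : |r₂ - r₁| ^ (H - 3/2) ≤ 1 :=
        Real.rpow_le_one_of_one_le_of_nonpos h (by linarith)
      simp only [hψ]
      rw [min_eq_right hle, habs]
      exact hb1 _ h
    · have hge : 1 ≤ |r₂ - r₁| ^ (H - 3/2) :=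
        Real.one_le_rpow_of_pos_of_le_one_of_nonpos hu0 h.le (by linarith)
      simp only [hψ]
      rw [min_eq_left hge, mul_one, habs]
      exact hb0 _ (abs_nonneg _)
  refine (lintegral_mono_ae hae).trans ?_
  refine (setLIntegral_le_lintegral _ _).trans ?_
  have htrans : ∫⁻ r₂ : ℝ, ENNReal.ofReal (ψ (r₂ - r₁)) = ∫⁻ u : ℝ, ENNReal.ofReal (ψ u) :=
    lintegral_sub_right_eq_self (fun u => ENNReal.ofReal (ψ u)) r₁
  rw [htrans, ← lintegral_add_compl (fun u => ENNReal.ofReal (ψ u))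
    (measurableSet_Icc (a := (-1:ℝ)) (b := 1))]
  have hIcc : ∫⁻ u in Icc (-1:ℝ) 1, ENNReal.ofReal (ψ u) ≤ ENNReal.ofReal (2*C) := by
    calc ∫⁻ u in Icc (-1:ℝ) 1, ENNReal.ofReal (ψ u)
        ≤ ∫⁻ _u in Icc (-1:ℝ) 1, ENNReal.ofReal C := by
          refine lintegral_mono fun u => ENNReal.ofReal_le_ofReal ?_
          calc ψ u ≤ C * 1 := mul_le_mul_of_nonneg_left (min_le_left _ _) hC.le
            _ = C := mul_one C
      _ = ENNReal.ofReal C * volume (Icc (-1:ℝ) 1) := setLIntegral_const _ _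
      _ = ENNReal.ofReal (2*C) := by
          rw [Real.volume_Icc, ← ENNReal.ofReal_mul hC.le]
          norm_num
          rw [mul_comm]
          rw [ENNReal.ofReal_mul (by norm_num), ENNReal.ofReal_ofNat]
  have hIoi : ∫⁻ u in Ioi (1:ℝ), ENNReal.ofReal (ψ u) ≤ ENNReal.ofReal (C / (1/2 - H)) := by
    have hint : IntegrableOn (fun u : ℝ => C * u ^ (H - 3/2)) (Ioi 1) volume :=
      (integrableOn_Ioi_rpow_of_lt (by linarith) one_pos).const_mul C
    calc ∫⁻ u in Ioi (1:ℝ), ENNReal.ofReal (ψ u)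
        ≤ ∫⁻ u in Ioi (1:ℝ), ENNReal.ofReal (C * u ^ (H - 3/2)) := by
          refine lintegral_mono_ae ((ae_restrict_iff' measurableSet_Ioi).mpr
            (Filter.Eventually.of_forall fun u hu => ?_))
          apply ENNReal.ofReal_le_ofReal
          have habs : |u| = u := abs_of_pos (lt_trans one_pos hu)
          calc ψ u ≤ C * (|u| ^ (H - 3/2)) := mul_le_mul_of_nonneg_left (min_le_right _ _) hC.le
            _ = C * u ^ (H - 3/2) := by rw [habs]
      _ = ENNReal.ofReal (∫ u in Ioi (1:ℝ), C * u ^ (H - 3/2)) :=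
          (ofReal_integral_eq_lintegral_ofReal hint ((ae_restrict_iff' measurableSet_Ioi).mpr
            (Filter.Eventually.of_forall fun u hu => by
              have : (0:ℝ) < u := lt_trans one_pos hu
              positivity))).symm
      _ ≤ ENNReal.ofReal (C / (1/2 - H)) := by
          apply ENNReal.ofReal_le_ofReal
          rw [integral_const_mul, integral_Ioi_rpow_of_lt (by linarith) one_pos,
            Real.one_rpow]
          apply le_of_eq
          have h2 : H - 3/2 + 1 = -(1/2 - H) := by ring
          rw [h2, neg_div_neg_eq, mul_one_div]
  have hIio : ∫⁻ u in Iio (-1:ℝ), ENNReal.ofReal (ψ u) ≤ ENNReal.ofReal (C / (1/2 - H)) := by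
    have hmp : MeasurePreserving (fun x : ℝ => -x) volume volume :=
      Measure.measurePreserving_neg _
    have hemb : MeasurableEmbedding (fun x : ℝ => -x) :=
      (MeasurableEquiv.neg ℝ).measurableEmbedding
    have hpre : (fun x : ℝ => -x) ⁻¹' (Iio (-1:ℝ)) = Ioi 1 := by
      ext x
      simp only [mem_preimage, mem_Iio, mem_Ioi]
      constructor <;> intro h <;> linarith
    have heq := hmp.setLIntegral_comp_preimage_emb hemb (fun u => ENNReal.ofReal (ψ u))
      (Iio (-1:ℝ))
    rw [hpre] at heq
    rw [← heq]
    have hsymm : ∀ x : ℝ, ψ (-x) = ψ x := fun x => by simp only [hψ, abs_neg]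
    calc ∫⁻ x in Ioi (1:ℝ), ENNReal.ofReal (ψ (-x))
        = ∫⁻ x in Ioi (1:ℝ), ENNReal.ofReal (ψ x) := lintegral_congr fun x => by rw [hsymm]
      _ ≤ _ := hIoi
  have hcompl : ∫⁻ u in (Icc (-1:ℝ) 1)ᶜ, ENNReal.ofReal (ψ u)
      ≤ ENNReal.ofReal (C / (1/2 - H)) + ENNReal.ofReal (C / (1/2 - H)) := by
    have hc : (Icc (-1:ℝ) 1)ᶜ = Iio (-1) ∪ Ioi 1 := by
      ext x
      simp only [Set.mem_compl_iff, Set.mem_Icc, not_and_or, not_le, Set.mem_union,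
        Set.mem_Iio, Set.mem_Ioi]
    rw [hc]
    exact (lintegral_union_le _ _ _).trans (add_le_add hIio hIoi)
  refine (add_le_add hIcc hcompl).trans (le_of_eq ?_)
  rw [← ENNReal.ofReal_add (by positivity) (by positivity),
    ← ENNReal.ofReal_add (by positivity) (by positivity)]
  ring_nf
lemma mainBound (H : ℝ) (hH0 : 0 < H) (hH2 : H < 1/2) (ctil : ℝ → ℝ)
    (hmeas : Measurable ctil) (hnn : ∀ t, 0 ≤ ctil t) (C : ℝ) (hC : 0 < C)
    (hb0 : ∀ t, 0 ≤ t → ctil t ≤ C) (hb1 : ∀ t, 1 ≤ t → ctil t ≤ C * t ^ (H - 3/2))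
    (T : ℝ) (hT : 1 ≤ T) :
    (∫ t₁ in Set.Ioc (0:ℝ) T, ∫ t₂ in Set.Ioc (0:ℝ) T,
        ∫ r₁ in Set.Ioc (0:ℝ) t₁, ∫ r₂ in Set.Ioc (0:ℝ) t₂,
          (t₁ - r₁) ^ (-H - 1/2) * r₁ ^ (1/2 - H) * (t₂ - r₂) ^ (-H - 1/2) * r₂ ^ (1/2 - H) *
            ctil (|r₁ - r₂|))
      ≤ T ^ (1 - 2*H) * (T ^ (1/2 - H) / (1/2 - H) * (2*C + 2*(C/(1/2 - H)))
          * (T ^ (1/2 - H) / (1/2 - H))) * T := by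
  have hT0 : (0:ℝ) < T := lt_of_lt_of_le one_pos hT
  have hq0 : (0:ℝ) < 1/2 - H := by linarith
  have hp1 : (-1:ℝ) < -H - 1/2 := by linarith
  have hp0 : -H - 1/2 < (0:ℝ) := by linarith
  have hpq : -H - 1/2 + 1 = 1/2 - H := by ring
  -- measurability of the inner kernel as a function of ((t₂, r₁), r₂)
  have mg : Measurable (fun z : (ℝ × ℝ) × ℝ =>
      (if z.2 ≤ z.1.1 then (1:ENNReal) else 0) *
        ENNReal.ofReal ((z.1.1 - z.2) ^ (-H - 1/2)) *
        ENNReal.ofReal (ctil |z.1.2 - z.2|)) := by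
    refine ((Measurable.ite ?_ measurable_const measurable_const).mul ?_).mul ?_
    · exact measurableSet_le measurable_snd measurable_fst.fst
    · exact ((measurable_fst.fst.sub measurable_snd).pow measurable_const).ennreal_ofReal
    · exact (hmeas.comp ((measurable_fst.snd.sub measurable_snd).abs)).ennreal_ofReal
  -- uniform bound for the (t₂, r₂) double integral
  have hD : ∀ r₁ : ℝ,
      (∫⁻ t₂ in Ioc (0:ℝ) T, ∫⁻ r₂ in Ioc (0:ℝ) T,
        ((if r₂ ≤ t₂ then (1:ENNReal) else 0) * ENNReal.ofReal ((t₂ - r₂) ^ (-H - 1/2)) *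
          ENNReal.ofReal (ctil |r₁ - r₂|)))
      ≤ ENNReal.ofReal (T ^ (1/2 - H) / (1/2 - H)) *
          ENNReal.ofReal (2*C + 2*(C/(1/2 - H))) := by
    intro r₁
    have hmeas2 : AEMeasurable (Function.uncurry fun t₂ r₂ =>
        (if r₂ ≤ t₂ then (1:ENNReal) else 0) * ENNReal.ofReal ((t₂ - r₂) ^ (-H - 1/2)) *
          ENNReal.ofReal (ctil |r₁ - r₂|))
        ((volume.restrict (Ioc (0:ℝ) T)).prod (volume.restrict (Ioc (0:ℝ) T))) := by
      apply Measurable.aemeasurable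
      refine ((Measurable.ite ?_ measurable_const measurable_const).mul ?_).mul ?_
      · exact measurableSet_le measurable_snd measurable_fst
      · exact ((measurable_fst.sub measurable_snd).pow measurable_const).ennreal_ofReal
      · exact (hmeas.comp ((measurable_const.sub measurable_snd).abs)).ennreal_ofReal
    rw [lintegral_lintegral_swap hmeas2]
    calc ∫⁻ r₂ in Ioc (0:ℝ) T, ∫⁻ t₂ in Ioc (0:ℝ) T,
          ((if r₂ ≤ t₂ then (1:ENNReal) else 0) * ENNReal.ofReal ((t₂ - r₂) ^ (-H - 1/2)) *
            ENNReal.ofReal (ctil |r₁ - r₂|))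
        = ∫⁻ r₂ in Ioc (0:ℝ) T, (ENNReal.ofReal (ctil |r₁ - r₂|) *
            ∫⁻ t₂ in Ioc (0:ℝ) T,
              ((if r₂ ≤ t₂ then (1:ENNReal) else 0) *
                ENNReal.ofReal ((t₂ - r₂) ^ (-H - 1/2)))) := by
          refine lintegral_congr fun r₂ => ?_
          rw [← lintegral_const_mul' _ _ ENNReal.ofReal_ne_top]
          exact lintegral_congr fun t₂ => by ring
      _ ≤ ∫⁻ r₂ in Ioc (0:ℝ) T, (ENNReal.ofReal (ctil |r₁ - r₂|) *
            ENNReal.ofReal (T ^ (1/2 - H) / (1/2 - H))) := by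
          refine lintegral_mono_ae ?_
          filter_upwards [ae_restrict_mem measurableSet_Ioc] with r₂ hr₂
          have hker := kernelB hp1 hp0 hr₂.1 hr₂.2
          rw [hpq] at hker
          exact mul_le_mul_right hker _
      _ = ENNReal.ofReal (T ^ (1/2 - H) / (1/2 - H)) *
            ∫⁻ r₂ in Ioc (0:ℝ) T, ENNReal.ofReal (ctil |r₁ - r₂|) := by
          rw [← lintegral_const_mul' _ _ ENNReal.ofReal_ne_top]
          exact lintegral_congr fun r₂ => mul_comm _ _
      _ ≤ ENNReal.ofReal (T ^ (1/2 - H) / (1/2 - H)) *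
            ENNReal.ofReal (2*C + 2*(C/(1/2 - H))) :=
          mul_le_mul_right (cbound hH0 hH2 hnn hC hb0 hb1 T r₁) _
  -- the bound for fixed t₁
  have key_t₁ : ∀ t₁ ∈ Ioc (0:ℝ) T,
      (∫⁻ t₂ in Ioc (0:ℝ) T, ∫⁻ r₁ in Ioc (0:ℝ) t₁, ∫⁻ r₂ in Ioc (0:ℝ) t₂,
        ENNReal.ofReal ((t₁ - r₁) ^ (-H - 1/2) * r₁ ^ (1/2 - H) * (t₂ - r₂) ^ (-H - 1/2) *
          r₂ ^ (1/2 - H) * ctil (|r₁ - r₂|)))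
      ≤ ENNReal.ofReal (T ^ (1 - 2*H)) *
          (ENNReal.ofReal (T ^ (1/2 - H) / (1/2 - H)) *
            ENNReal.ofReal (2*C + 2*(C/(1/2 - H))) *
            ENNReal.ofReal (T ^ (1/2 - H) / (1/2 - H))) := by
    intro t₁ ht₁
    have hmeas1 : AEMeasurable (Function.uncurry fun t₂ r₁ =>
        ENNReal.ofReal ((t₁ - r₁) ^ (-H - 1/2)) *
          ∫⁻ r₂ in Ioc (0:ℝ) T,
            ((if r₂ ≤ t₂ then (1:ENNReal) else 0) *
              ENNReal.ofReal ((t₂ - r₂) ^ (-H - 1/2)) *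
              ENNReal.ofReal (ctil |r₁ - r₂|)))
        ((volume.restrict (Ioc (0:ℝ) T)).prod (volume.restrict (Ioc (0:ℝ) t₁))) := by
      apply Measurable.aemeasurable
      exact (((measurable_const.sub measurable_snd).pow measurable_const).ennreal_ofReal).mul
        (mg.lintegral_prod_right' (ν := volume.restrict (Ioc (0:ℝ) T)))
    calc (∫⁻ t₂ in Ioc (0:ℝ) T, ∫⁻ r₁ in Ioc (0:ℝ) t₁, ∫⁻ r₂ in Ioc (0:ℝ) t₂,
          ENNReal.ofReal ((t₁ - r₁) ^ (-H - 1/2) * r₁ ^ (1/2 - H) * (t₂ - r₂) ^ (-H - 1/2) *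
            r₂ ^ (1/2 - H) * ctil (|r₁ - r₂|)))
        ≤ ∫⁻ t₂ in Ioc (0:ℝ) T, (ENNReal.ofReal (T ^ (1 - 2*H)) *
            ∫⁻ r₁ in Ioc (0:ℝ) t₁, (ENNReal.ofReal ((t₁ - r₁) ^ (-H - 1/2)) *
              ∫⁻ r₂ in Ioc (0:ℝ) T,
                ((if r₂ ≤ t₂ then (1:ENNReal) else 0) *
                  ENNReal.ofReal ((t₂ - r₂) ^ (-H - 1/2)) *
                  ENNReal.ofReal (ctil |r₁ - r₂|)))) := by
          refine lintegral_mono_ae ?_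
          filter_upwards [ae_restrict_mem measurableSet_Ioc] with t₂ ht₂
          calc (∫⁻ r₁ in Ioc (0:ℝ) t₁, ∫⁻ r₂ in Ioc (0:ℝ) t₂,
                ENNReal.ofReal ((t₁ - r₁) ^ (-H - 1/2) * r₁ ^ (1/2 - H) *
                  (t₂ - r₂) ^ (-H - 1/2) * r₂ ^ (1/2 - H) * ctil (|r₁ - r₂|)))
              ≤ ∫⁻ r₁ in Ioc (0:ℝ) t₁, (ENNReal.ofReal (T ^ (1 - 2*H)) *
                  (ENNReal.ofReal ((t₁ - r₁) ^ (-H - 1/2)) *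
                    ∫⁻ r₂ in Ioc (0:ℝ) T,
                      ((if r₂ ≤ t₂ then (1:ENNReal) else 0) *
                        ENNReal.ofReal ((t₂ - r₂) ^ (-H - 1/2)) *
                        ENNReal.ofReal (ctil |r₁ - r₂|)))) := by
                refine lintegral_mono_ae ?_
                filter_upwards [ae_restrict_mem measurableSet_Ioc] with r₁ hr₁
                calc (∫⁻ r₂ in Ioc (0:ℝ) t₂,
                      ENNReal.ofReal ((t₁ - r₁) ^ (-H - 1/2) * r₁ ^ (1/2 - H) *
                        (t₂ - r₂) ^ (-H - 1/2) * r₂ ^ (1/2 - H) * ctil (|r₁ - r₂|)))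
                    ≤ ∫⁻ r₂ in Ioc (0:ℝ) t₂,
                        (ENNReal.ofReal (T ^ (1 - 2*H)) *
                          ENNReal.ofReal ((t₁ - r₁) ^ (-H - 1/2)) *
                          ((if r₂ ≤ t₂ then (1:ENNReal) else 0) *
                            ENNReal.ofReal ((t₂ - r₂) ^ (-H - 1/2)) *
                            ENNReal.ofReal (ctil |r₁ - r₂|))) := by
                      refine lintegral_mono_ae ?_
                      filter_upwards [ae_restrict_mem measurableSet_Ioc] with r₂ hr₂
                      have hd1 : (0:ℝ) ≤ t₁ - r₁ := by linarith [hr₁.2]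
                      have hd2 : (0:ℝ) ≤ t₂ - r₂ := by linarith [hr₂.2]
                      have ha : (0:ℝ) ≤ (t₁ - r₁) ^ (-H - 1/2) := Real.rpow_nonneg hd1 _
                      have hc : (0:ℝ) ≤ (t₂ - r₂) ^ (-H - 1/2) := Real.rpow_nonneg hd2 _
                      have he : (0:ℝ) ≤ ctil (|r₁ - r₂|) := hnn _
                      have e1 : r₁ ^ (1/2 - H) ≤ T ^ (1/2 - H) :=
                        Real.rpow_le_rpow hr₁.1.le (hr₁.2.trans ht₁.2) hq0.le
                      have e2 : r₂ ^ (1/2 - H) ≤ T ^ (1/2 - H) :=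
                        Real.rpow_le_rpow hr₂.1.le (hr₂.2.trans ht₂.2) hq0.le
                      have hTq : T ^ (1/2 - H) * T ^ (1/2 - H) = T ^ (1 - 2*H) := by
                        rw [← Real.rpow_add hT0]
                        congr 1
                        ring
                      have hreal : (t₁ - r₁) ^ (-H - 1/2) * r₁ ^ (1/2 - H) *
                            (t₂ - r₂) ^ (-H - 1/2) * r₂ ^ (1/2 - H) * ctil (|r₁ - r₂|)
                          ≤ T ^ (1 - 2*H) * ((t₁ - r₁) ^ (-H - 1/2) *
                              ((t₂ - r₂) ^ (-H - 1/2) * ctil (|r₁ - r₂|))) := by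
                        calc (t₁ - r₁) ^ (-H - 1/2) * r₁ ^ (1/2 - H) *
                              (t₂ - r₂) ^ (-H - 1/2) * r₂ ^ (1/2 - H) * ctil (|r₁ - r₂|)
                            = (r₁ ^ (1/2 - H) * r₂ ^ (1/2 - H)) *
                                ((t₁ - r₁) ^ (-H - 1/2) *
                                  ((t₂ - r₂) ^ (-H - 1/2) * ctil (|r₁ - r₂|))) := by ring
                          _ ≤ (T ^ (1/2 - H) * T ^ (1/2 - H)) *
                                ((t₁ - r₁) ^ (-H - 1/2) *
                                  ((t₂ - r₂) ^ (-H - 1/2) * ctil (|r₁ - r₂|))) := by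
                              refine mul_le_mul_of_nonneg_right ?_
                                (mul_nonneg ha (mul_nonneg hc he))
                              exact mul_le_mul e1 e2 (Real.rpow_nonneg hr₂.1.le _)
                                (Real.rpow_nonneg (by linarith) _)
                          _ = _ := by rw [hTq]
                      calc ENNReal.ofReal ((t₁ - r₁) ^ (-H - 1/2) * r₁ ^ (1/2 - H) *
                            (t₂ - r₂) ^ (-H - 1/2) * r₂ ^ (1/2 - H) * ctil (|r₁ - r₂|))
                          ≤ ENNReal.ofReal (T ^ (1 - 2*H) * ((t₁ - r₁) ^ (-H - 1/2) *
                              ((t₂ - r₂) ^ (-H - 1/2) * ctil (|r₁ - r₂|)))) :=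
                            ENNReal.ofReal_le_ofReal hreal
                        _ = ENNReal.ofReal (T ^ (1 - 2*H)) *
                              ENNReal.ofReal ((t₁ - r₁) ^ (-H - 1/2)) *
                              ((if r₂ ≤ t₂ then (1:ENNReal) else 0) *
                                ENNReal.ofReal ((t₂ - r₂) ^ (-H - 1/2)) *
                                ENNReal.ofReal (ctil (|r₁ - r₂|))) := by
                            rw [if_pos hr₂.2, one_mul,
                              ENNReal.ofReal_mul (by positivity : (0:ℝ) ≤ T ^ (1 - 2*H)),
                              ENNReal.ofReal_mul ha, ENNReal.ofReal_mul hc]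
                            ring
                  _ ≤ ∫⁻ r₂ in Ioc (0:ℝ) T,
                        (ENNReal.ofReal (T ^ (1 - 2*H)) *
                          ENNReal.ofReal ((t₁ - r₁) ^ (-H - 1/2)) *
                          ((if r₂ ≤ t₂ then (1:ENNReal) else 0) *
                            ENNReal.ofReal ((t₂ - r₂) ^ (-H - 1/2)) *
                            ENNReal.ofReal (ctil |r₁ - r₂|))) :=
                      lintegral_mono_set (Set.Ioc_subset_Ioc_right ht₂.2)
                  _ = ENNReal.ofReal (T ^ (1 - 2*H)) *
                        ENNReal.ofReal ((t₁ - r₁) ^ (-H - 1/2)) *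
                        ∫⁻ r₂ in Ioc (0:ℝ) T,
                          ((if r₂ ≤ t₂ then (1:ENNReal) else 0) *
                            ENNReal.ofReal ((t₂ - r₂) ^ (-H - 1/2)) *
                            ENNReal.ofReal (ctil |r₁ - r₂|)) :=
                      lintegral_const_mul' _ _
                        (ENNReal.mul_ne_top ENNReal.ofReal_ne_top ENNReal.ofReal_ne_top)
                  _ = ENNReal.ofReal (T ^ (1 - 2*H)) *
                        (ENNReal.ofReal ((t₁ - r₁) ^ (-H - 1/2)) *
                          ∫⁻ r₂ in Ioc (0:ℝ) T,
                            ((if r₂ ≤ t₂ then (1:ENNReal) else 0) *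
                              ENNReal.ofReal ((t₂ - r₂) ^ (-H - 1/2)) *
                              ENNReal.ofReal (ctil |r₁ - r₂|))) := mul_assoc _ _ _
            _ = ENNReal.ofReal (T ^ (1 - 2*H)) *
                  ∫⁻ r₁ in Ioc (0:ℝ) t₁, (ENNReal.ofReal ((t₁ - r₁) ^ (-H - 1/2)) *
                    ∫⁻ r₂ in Ioc (0:ℝ) T,
                      ((if r₂ ≤ t₂ then (1:ENNReal) else 0) *
                        ENNReal.ofReal ((t₂ - r₂) ^ (-H - 1/2)) *
                        ENNReal.ofReal (ctil |r₁ - r₂|))) :=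
                lintegral_const_mul' _ _ ENNReal.ofReal_ne_top
      _ = ENNReal.ofReal (T ^ (1 - 2*H)) *
            ∫⁻ t₂ in Ioc (0:ℝ) T, ∫⁻ r₁ in Ioc (0:ℝ) t₁,
              (ENNReal.ofReal ((t₁ - r₁) ^ (-H - 1/2)) *
                ∫⁻ r₂ in Ioc (0:ℝ) T,
                  ((if r₂ ≤ t₂ then (1:ENNReal) else 0) *
                    ENNReal.ofReal ((t₂ - r₂) ^ (-H - 1/2)) *
                    ENNReal.ofReal (ctil |r₁ - r₂|))) :=
          lintegral_const_mul' _ _ ENNReal.ofReal_ne_top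
      _ = ENNReal.ofReal (T ^ (1 - 2*H)) *
            ∫⁻ r₁ in Ioc (0:ℝ) t₁, ∫⁻ t₂ in Ioc (0:ℝ) T,
              (ENNReal.ofReal ((t₁ - r₁) ^ (-H - 1/2)) *
                ∫⁻ r₂ in Ioc (0:ℝ) T,
                  ((if r₂ ≤ t₂ then (1:ENNReal) else 0) *
                    ENNReal.ofReal ((t₂ - r₂) ^ (-H - 1/2)) *
                    ENNReal.ofReal (ctil |r₁ - r₂|))) := by
          rw [lintegral_lintegral_swap hmeas1]
      _ = ENNReal.ofReal (T ^ (1 - 2*H)) *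
            ∫⁻ r₁ in Ioc (0:ℝ) t₁,
              (ENNReal.ofReal ((t₁ - r₁) ^ (-H - 1/2)) *
                ∫⁻ t₂ in Ioc (0:ℝ) T, ∫⁻ r₂ in Ioc (0:ℝ) T,
                  ((if r₂ ≤ t₂ then (1:ENNReal) else 0) *
                    ENNReal.ofReal ((t₂ - r₂) ^ (-H - 1/2)) *
                    ENNReal.ofReal (ctil |r₁ - r₂|))) := by
          congr 1
          exact lintegral_congr fun r₁ => lintegral_const_mul' _ _ ENNReal.ofReal_ne_top
      _ ≤ ENNReal.ofReal (T ^ (1 - 2*H)) *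
            (ENNReal.ofReal (T ^ (1/2 - H) / (1/2 - H)) *
              ENNReal.ofReal (2*C + 2*(C/(1/2 - H))) *
              ENNReal.ofReal (T ^ (1/2 - H) / (1/2 - H))) := by
          refine mul_le_mul_right ?_ _
          calc (∫⁻ r₁ in Ioc (0:ℝ) t₁,
                (ENNReal.ofReal ((t₁ - r₁) ^ (-H - 1/2)) *
                  ∫⁻ t₂ in Ioc (0:ℝ) T, ∫⁻ r₂ in Ioc (0:ℝ) T,
                    ((if r₂ ≤ t₂ then (1:ENNReal) else 0) *
                      ENNReal.ofReal ((t₂ - r₂) ^ (-H - 1/2)) *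
                      ENNReal.ofReal (ctil |r₁ - r₂|))))
              ≤ ∫⁻ r₁ in Ioc (0:ℝ) t₁,
                  (ENNReal.ofReal ((t₁ - r₁) ^ (-H - 1/2)) *
                    (ENNReal.ofReal (T ^ (1/2 - H) / (1/2 - H)) *
                      ENNReal.ofReal (2*C + 2*(C/(1/2 - H))))) :=
                lintegral_mono fun r₁ => mul_le_mul_right (hD r₁) _
            _ = ∫⁻ r₁ in Ioc (0:ℝ) t₁,
                  ((ENNReal.ofReal (T ^ (1/2 - H) / (1/2 - H)) *
                      ENNReal.ofReal (2*C + 2*(C/(1/2 - H)))) *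
                    ENNReal.ofReal ((t₁ - r₁) ^ (-H - 1/2))) :=
                lintegral_congr fun r₁ => mul_comm _ _
            _ = (ENNReal.ofReal (T ^ (1/2 - H) / (1/2 - H)) *
                  ENNReal.ofReal (2*C + 2*(C/(1/2 - H)))) *
                  ∫⁻ r₁ in Ioc (0:ℝ) t₁, ENNReal.ofReal ((t₁ - r₁) ^ (-H - 1/2)) :=
                lintegral_const_mul' _ _
                  (ENNReal.mul_ne_top ENNReal.ofReal_ne_top ENNReal.ofReal_ne_top)
            _ ≤ (ENNReal.ofReal (T ^ (1/2 - H) / (1/2 - H)) *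
                  ENNReal.ofReal (2*C + 2*(C/(1/2 - H)))) *
                  ENNReal.ofReal (T ^ (1/2 - H) / (1/2 - H)) := by
                refine mul_le_mul_right ?_ _
                have hker := kernelA hp1 hp0 ht₁.1 ht₁.2
                rw [hpq] at hker
                exact hker
  -- pass from the Bochner integral to the lintegral
  have step1 : ENNReal.ofReal (∫ t₁ in Set.Ioc (0:ℝ) T, ∫ t₂ in Set.Ioc (0:ℝ) T,
        ∫ r₁ in Set.Ioc (0:ℝ) t₁, ∫ r₂ in Set.Ioc (0:ℝ) t₂,
          (t₁ - r₁) ^ (-H - 1/2) * r₁ ^ (1/2 - H) * (t₂ - r₂) ^ (-H - 1/2) * r₂ ^ (1/2 - H) *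
            ctil (|r₁ - r₂|))
      ≤ ∫⁻ t₁ in Ioc (0:ℝ) T, ∫⁻ t₂ in Ioc (0:ℝ) T, ∫⁻ r₁ in Ioc (0:ℝ) t₁,
          ∫⁻ r₂ in Ioc (0:ℝ) t₂,
            ENNReal.ofReal ((t₁ - r₁) ^ (-H - 1/2) * r₁ ^ (1/2 - H) *
              (t₂ - r₂) ^ (-H - 1/2) * r₂ ^ (1/2 - H) * ctil (|r₁ - r₂|)) := by
    refine (ofReal_integral_le _ _).trans (lintegral_mono fun t₁ => ?_)
    refine (ofReal_integral_le _ _).trans (lintegral_mono fun t₂ => ?_)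
    refine (ofReal_integral_le _ _).trans (lintegral_mono fun r₁ => ?_)
    exact ofReal_integral_le _ _
  have step2 : (∫⁻ t₁ in Ioc (0:ℝ) T, ∫⁻ t₂ in Ioc (0:ℝ) T, ∫⁻ r₁ in Ioc (0:ℝ) t₁,
          ∫⁻ r₂ in Ioc (0:ℝ) t₂,
            ENNReal.ofReal ((t₁ - r₁) ^ (-H - 1/2) * r₁ ^ (1/2 - H) *
              (t₂ - r₂) ^ (-H - 1/2) * r₂ ^ (1/2 - H) * ctil (|r₁ - r₂|)))
      ≤ ENNReal.ofReal (T ^ (1 - 2*H) * (T ^ (1/2 - H) / (1/2 - H) * (2*C + 2*(C/(1/2 - H)))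
          * (T ^ (1/2 - H) / (1/2 - H))) * T) := by
    calc (∫⁻ t₁ in Ioc (0:ℝ) T, ∫⁻ t₂ in Ioc (0:ℝ) T, ∫⁻ r₁ in Ioc (0:ℝ) t₁,
          ∫⁻ r₂ in Ioc (0:ℝ) t₂,
            ENNReal.ofReal ((t₁ - r₁) ^ (-H - 1/2) * r₁ ^ (1/2 - H) *
              (t₂ - r₂) ^ (-H - 1/2) * r₂ ^ (1/2 - H) * ctil (|r₁ - r₂|)))
        ≤ ∫⁻ _t₁ in Ioc (0:ℝ) T, (ENNReal.ofReal (T ^ (1 - 2*H)) *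
            (ENNReal.ofReal (T ^ (1/2 - H) / (1/2 - H)) *
              ENNReal.ofReal (2*C + 2*(C/(1/2 - H))) *
              ENNReal.ofReal (T ^ (1/2 - H) / (1/2 - H)))) := by
          refine lintegral_mono_ae ?_
          filter_upwards [ae_restrict_mem measurableSet_Ioc] with t₁ ht₁
          exact key_t₁ t₁ ht₁
      _ = ENNReal.ofReal (T ^ (1 - 2*H)) *
            (ENNReal.ofReal (T ^ (1/2 - H) / (1/2 - H)) *
              ENNReal.ofReal (2*C + 2*(C/(1/2 - H))) *
              ENNReal.ofReal (T ^ (1/2 - H) / (1/2 - H))) * volume (Ioc (0:ℝ) T) :=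
          setLIntegral_const _ _
      _ = ENNReal.ofReal (T ^ (1 - 2*H) * (T ^ (1/2 - H) / (1/2 - H) * (2*C + 2*(C/(1/2 - H)))
          * (T ^ (1/2 - H) / (1/2 - H))) * T) := by
          rw [Real.volume_Ioc, sub_zero]
          rw [← ENNReal.ofReal_mul (by positivity), ← ENNReal.ofReal_mul (by positivity),
            ← ENNReal.ofReal_mul (by positivity), ← ENNReal.ofReal_mul (by positivity)]
  have hcombined := step1.trans step2
  have hRnn : (0:ℝ) ≤ T ^ (1 - 2*H) * (T ^ (1/2 - H) / (1/2 - H) * (2*C + 2*(C/(1/2 - H)))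
      * (T ^ (1/2 - H) / (1/2 - H))) * T := by positivity
  exact (ENNReal.ofReal_le_ofReal_iff hRnn).mp hcombined


end Stmt14Helper

theorem stmt14 (H : ℝ) (hH : H ∈ Set.Ioo (0:ℝ) (1/2)) (ctil : ℝ → ℝ)
    (hmeas : Measurable ctil) (hnn : ∀ t : ℝ, 0 ≤ ctil t)
    (C : ℝ) (hC : 0 < C) (hb0 : ∀ t : ℝ, 0 ≤ t → ctil t ≤ C)
    (hb1 : ∀ t : ℝ, 1 ≤ t → ctil t ≤ C * t ^ (H - 3/2)) :
    Filter.Tendsto (fun T : ℝ => T ^ (2*H - 3) *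
        ∫ t₁ in Set.Ioc (0:ℝ) T, ∫ t₂ in Set.Ioc (0:ℝ) T,
          ∫ r₁ in Set.Ioc (0:ℝ) t₁, ∫ r₂ in Set.Ioc (0:ℝ) t₂,
            (t₁ - r₁) ^ (-H - 1/2) * r₁ ^ (1/2 - H) * (t₂ - r₂) ^ (-H - 1/2) * r₂ ^ (1/2 - H) *
              ctil (|r₁ - r₂|))
      Filter.atTop (nhds 0) := by
  obtain ⟨hH0, hH2⟩ := hH
  have hq0 : (0:ℝ) < 1/2 - H := by linarith
  set K : ℝ := (2*C + 2*(C/(1/2 - H))) / ((1/2 - H) * (1/2 - H)) with hK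
  have hBnn : ∀ T : ℝ, 0 ≤ ∫ t₁ in Set.Ioc (0:ℝ) T, ∫ t₂ in Set.Ioc (0:ℝ) T,
      ∫ r₁ in Set.Ioc (0:ℝ) t₁, ∫ r₂ in Set.Ioc (0:ℝ) t₂,
        (t₁ - r₁) ^ (-H - 1/2) * r₁ ^ (1/2 - H) * (t₂ - r₂) ^ (-H - 1/2) * r₂ ^ (1/2 - H) *
          ctil (|r₁ - r₂|) := by
    intro T
    refine setIntegral_nonneg measurableSet_Ioc fun t₁ _ => ?_
    refine setIntegral_nonneg measurableSet_Ioc fun t₂ _ => ?_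
    refine setIntegral_nonneg measurableSet_Ioc fun r₁ hr₁ => ?_
    refine setIntegral_nonneg measurableSet_Ioc fun r₂ hr₂ => ?_
    have h1 : (0:ℝ) ≤ t₁ - r₁ := by linarith [hr₁.2]
    have h2 : (0:ℝ) ≤ t₂ - r₂ := by linarith [hr₂.2]
    exact mul_nonneg (mul_nonneg (mul_nonneg (mul_nonneg (Real.rpow_nonneg h1 _)
      (Real.rpow_nonneg hr₁.1.le _)) (Real.rpow_nonneg h2 _))
      (Real.rpow_nonneg hr₂.1.le _)) (hnn _)
  have hub : ∀ᶠ T in atTop, T ^ (2*H - 3) *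
      (∫ t₁ in Set.Ioc (0:ℝ) T, ∫ t₂ in Set.Ioc (0:ℝ) T,
        ∫ r₁ in Set.Ioc (0:ℝ) t₁, ∫ r₂ in Set.Ioc (0:ℝ) t₂,
          (t₁ - r₁) ^ (-H - 1/2) * r₁ ^ (1/2 - H) * (t₂ - r₂) ^ (-H - 1/2) * r₂ ^ (1/2 - H) *
            ctil (|r₁ - r₂|)) ≤ K * T ^ (-(2*H)) := by
    filter_upwards [eventually_ge_atTop (1:ℝ)] with T hT
    have hT0 : (0:ℝ) < T := lt_of_lt_of_le one_pos hT
    have hmb := Stmt14Helper.mainBound H hH0 hH2 ctil hmeas hnn C hC hb0 hb1 T hT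
    have hR : T ^ (1 - 2*H) * (T ^ (1/2 - H) / (1/2 - H) * (2*C + 2*(C/(1/2 - H)))
        * (T ^ (1/2 - H) / (1/2 - H))) * T = K * T ^ (3 - 4*H) := by
      have h4 : T ^ (1 - 2*H) * T ^ (1/2 - H) * T ^ (1/2 - H) * T ^ (1:ℝ) = T ^ (3 - 4*H) := by
        rw [← Real.rpow_add hT0, ← Real.rpow_add hT0, ← Real.rpow_add hT0]
        congr 1
        ring
      rw [Real.rpow_one] at h4
      rw [hK, ← h4]
      have hne : (1/2 - H) ≠ 0 := ne_of_gt hq0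
      field_simp
    rw [hR] at hmb
    calc T ^ (2*H - 3) * (∫ t₁ in Set.Ioc (0:ℝ) T, ∫ t₂ in Set.Ioc (0:ℝ) T,
          ∫ r₁ in Set.Ioc (0:ℝ) t₁, ∫ r₂ in Set.Ioc (0:ℝ) t₂,
            (t₁ - r₁) ^ (-H - 1/2) * r₁ ^ (1/2 - H) * (t₂ - r₂) ^ (-H - 1/2) *
              r₂ ^ (1/2 - H) * ctil (|r₁ - r₂|))
        ≤ T ^ (2*H - 3) * (K * T ^ (3 - 4*H)) :=
          mul_le_mul_of_nonneg_left hmb (Real.rpow_nonneg hT0.le _)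
      _ = K * (T ^ (2*H - 3) * T ^ (3 - 4*H)) := by ring
      _ = K * T ^ (-(2*H)) := by
          rw [← Real.rpow_add hT0]
          congr 1
          ring
  have hlb : ∀ᶠ T in atTop, (0:ℝ) ≤ T ^ (2*H - 3) *
      (∫ t₁ in Set.Ioc (0:ℝ) T, ∫ t₂ in Set.Ioc (0:ℝ) T,
        ∫ r₁ in Set.Ioc (0:ℝ) t₁, ∫ r₂ in Set.Ioc (0:ℝ) t₂,
          (t₁ - r₁) ^ (-H - 1/2) * r₁ ^ (1/2 - H) * (t₂ - r₂) ^ (-H - 1/2) * r₂ ^ (1/2 - H) *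
            ctil (|r₁ - r₂|)) := by
    filter_upwards [eventually_ge_atTop (1:ℝ)] with T hT
    have hT0 : (0:ℝ) < T := lt_of_lt_of_le one_pos hT
    exact mul_nonneg (Real.rpow_nonneg hT0.le _) (hBnn T)
  have hlim : Tendsto (fun T : ℝ => K * T ^ (-(2*H))) atTop (nhds 0) := by
    have h := (tendsto_rpow_neg_atTop (y := 2*H) (by linarith)).const_mul K
    simpa using h
  exact tendsto_of_tendsto_of_tendsto_of_le_of_le' tendsto_const_nhds hlim hlb hub
end

section
/- Let H ∈ (0,1/2) and θ > 0. For x > 0 and T ≥ 1, the improper integral g_T(x) := lim_{R→∞} ∫_T^R u^{−2H} cos(ux) du exists, and there exists a constant C > 0, depending only on H and θ, such that for all T ≥ 1: (i) | ∫₀^∞ (x^{1−2H}/(θ²+x²)) · g_T(x) dx | ≤ C·T^{−2H}, and (ii) | ∫₀^∞ (x^{1−2H}/(θ²+x²)) · ( ∫₀^T cos(ux)·( ∫_T^∞ r^{−H−1/2}(r−u)^{−H−1/2} dr ) du ) dx | ≤ C·T^{−2H}. -/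
open MeasureTheory Set Real Filter

-- aux: integrability of x^q/(θ²+x²) on (0,∞)
lemma aux_ratio {q θ : ℝ} (h1 : -1 < q) (h2 : q < 1) (hθ : 0 < θ) :
    IntegrableOn (fun x : ℝ => x ^ q / (θ ^ 2 + x ^ 2)) (Set.Ioi 0) := by
  have hmeas : ∀ s : Set ℝ, AEStronglyMeasurable (fun x : ℝ => x ^ q / (θ ^ 2 + x ^ 2))
      (volume.restrict s) := by
    intro s
    exact (by fun_prop : Measurable fun x : ℝ => x ^ q / (θ ^ 2 + x ^ 2)).aestronglyMeasurable
  have hsplit : Set.Ioc (0:ℝ) 1 ∪ Set.Ioi 1 = Set.Ioi 0 := Set.Ioc_union_Ioi_eq_Ioi zero_le_one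
  rw [← hsplit]
  apply IntegrableOn.union
  · have hb : IntegrableOn (fun x : ℝ => x ^ q / θ ^ 2) (Set.Ioc 0 1) := by
      have h0 := intervalIntegral.intervalIntegrable_rpow' (a := (0:ℝ)) (b := 1) h1
      rw [intervalIntegrable_iff_integrableOn_Ioc_of_le zero_le_one] at h0
      exact h0.div_const _
    refine Integrable.mono' hb (hmeas _) ?_
    filter_upwards [ae_restrict_mem measurableSet_Ioc] with x hx
    have hx0 : 0 < x := hx.1
    have hnum : 0 ≤ x ^ q := Real.rpow_nonneg hx0.le q
    rw [Real.norm_eq_abs, abs_of_nonneg (by positivity)]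
    gcongr <;> nlinarith
  · have hb : IntegrableOn (fun x : ℝ => x ^ (q - 2)) (Set.Ioi 1) :=
      integrableOn_Ioi_rpow_of_lt (by linarith) one_pos
    refine Integrable.mono' hb (hmeas _) ?_
    filter_upwards [ae_restrict_mem measurableSet_Ioi] with x hx
    have hx0 : (0:ℝ) < x := lt_trans one_pos hx
    have hnum : 0 ≤ x ^ q := Real.rpow_nonneg hx0.le q
    rw [Real.norm_eq_abs, abs_of_nonneg (by positivity)]
    have : x ^ (q - 2) = x ^ q / x ^ 2 := by
      rw [← Real.rpow_natCast x 2, ← Real.rpow_sub hx0]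
      norm_num
    rw [this]
    gcongr <;> nlinarith

noncomputable def cB (H : ℝ) : ℝ := 1/(1/2 - H) + 2 ^ (H + 1/2) * 2 ^ (-2*H) / (2*H)

lemma aux_tail {H T : ℝ} (hH : H ∈ Set.Ioo (0:ℝ) (1/2)) (hT : 1 ≤ T) :
    IntegrableOn (fun r : ℝ => r ^ (-H - 1/2) * (r - T) ^ (-H - 1/2)) (Set.Ioi T) ∧
    ∫ r in Set.Ioi T, r ^ (-H - 1/2) * (r - T) ^ (-H - 1/2) ≤ cB H * T ^ (-2*H) := by
  unfold cB
  obtain ⟨hH0, hH1⟩ := hH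
  have hT0 : (0:ℝ) < T := lt_of_lt_of_le one_pos hT
  have h2T : T ≤ 2 * T := by linarith
  have ha : (-1:ℝ) < -H - 1/2 := by linarith
  have hanp : (-H - 1/2 : ℝ) ≤ 0 := by linarith
  have hmeas : ∀ s : Set ℝ, AEStronglyMeasurable
      (fun r : ℝ => r ^ (-H - 1/2) * (r - T) ^ (-H - 1/2)) (volume.restrict s) := fun s =>
    (by fun_prop : Measurable fun r : ℝ => r ^ (-H - 1/2) * (r - T) ^ (-H - 1/2)).aestronglyMeasurable
  -- bound 1 integrable on Ioc T (2T)
  have hbint1 : IntegrableOn (fun r : ℝ => T ^ (-H - 1/2) * (r - T) ^ (-H - 1/2))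
      (Set.Ioc T (2*T)) := by
    have i0 : IntervalIntegrable (fun s : ℝ => s ^ (-H - 1/2)) volume 0 T :=
      intervalIntegral.intervalIntegrable_rpow' ha
    have i1 := (i0.comp_sub_right T).const_mul (T ^ (-H - 1/2))
    rw [zero_add] at i1
    have i2 : IntervalIntegrable (fun r : ℝ => T ^ (-H - 1/2) * (r - T) ^ (-H - 1/2))
        volume T (2*T) := by
      have : T + T = 2 * T := by ring
      rwa [this] at i1
    rwa [intervalIntegrable_iff_integrableOn_Ioc_of_le h2T] at i2
  -- pointwise bound on Ioc T 2T
  have hpt1 : ∀ r ∈ Set.Ioc T (2*T), r ^ (-H - 1/2) * (r - T) ^ (-H - 1/2) ≤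
      T ^ (-H - 1/2) * (r - T) ^ (-H - 1/2) := by
    intro r hr
    have h1 : r ^ (-H - 1/2) ≤ T ^ (-H - 1/2) :=
      Real.rpow_le_rpow_of_nonpos hT0 hr.1.le hanp
    have h2 : (0:ℝ) ≤ (r - T) ^ (-H - 1/2) := Real.rpow_nonneg (by linarith [hr.1]) _
    exact mul_le_mul_of_nonneg_right h1 h2
  have hint1 : IntegrableOn (fun r : ℝ => r ^ (-H - 1/2) * (r - T) ^ (-H - 1/2))
      (Set.Ioc T (2*T)) := by
    refine Integrable.mono' hbint1 (hmeas _) ?_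
    filter_upwards [ae_restrict_mem measurableSet_Ioc] with r hr
    rw [Real.norm_eq_abs, abs_of_nonneg (mul_nonneg (Real.rpow_nonneg (by linarith [hr.1]) _)
      (Real.rpow_nonneg (by linarith [hr.1]) _))]
    exact hpt1 r hr
  -- bound 2 integrable on Ioi (2T)
  have hbint2 : IntegrableOn (fun r : ℝ => 2 ^ (H + 1/2) * r ^ (-2*H - 1)) (Set.Ioi (2*T)) :=
    (integrableOn_Ioi_rpow_of_lt (by linarith) (by linarith)).const_mul _
  have hpt2 : ∀ r ∈ Set.Ioi (2*T), r ^ (-H - 1/2) * (r - T) ^ (-H - 1/2) ≤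
      2 ^ (H + 1/2) * r ^ (-2*H - 1) := by
    intro r hr
    have hr2 : 2 * T < r := hr
    have hr0 : (0:ℝ) < r := by linarith
    have hhalf : (0:ℝ) < r / 2 := by linarith
    have hle : r / 2 ≤ r - T := by linarith
    have h1 : (r - T) ^ (-H - 1/2) ≤ (r / 2) ^ (-H - 1/2) :=
      Real.rpow_le_rpow_of_nonpos hhalf hle hanp
    have h2 : (r / 2) ^ (-H - 1/2) = r ^ (-H - 1/2) / 2 ^ (-H - 1/2) :=
      Real.div_rpow hr0.le (by norm_num : (0:ℝ) ≤ 2) _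
    have h3 : r ^ (-H - 1/2) * (r ^ (-H - 1/2) / 2 ^ (-H - 1/2)) =
        2 ^ (H + 1/2) * r ^ (-2*H - 1) := by
      calc r ^ (-H - 1/2) * (r ^ (-H - 1/2) / 2 ^ (-H - 1/2))
          = (r ^ (-H - 1/2) * r ^ (-H - 1/2)) * ((2:ℝ) ^ (-H - 1/2))⁻¹ := by ring
        _ = r ^ (-2*H - 1) * ((2:ℝ) ^ (-H - 1/2))⁻¹ := by
            rw [← Real.rpow_add hr0, show (-H - 1/2) + (-H - 1/2) = -2*H - 1 by ring]
        _ = r ^ (-2*H - 1) * (2:ℝ) ^ (-(-H - 1/2)) := by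
            rw [Real.rpow_neg (by norm_num : (0:ℝ) ≤ 2)]
        _ = 2 ^ (H + 1/2) * r ^ (-2*H - 1) := by
            rw [show -(-H - 1/2) = H + 1/2 by ring]; ring
    calc r ^ (-H - 1/2) * (r - T) ^ (-H - 1/2)
        ≤ r ^ (-H - 1/2) * (r ^ (-H - 1/2) / 2 ^ (-H - 1/2)) := by
          rw [← h2]; exact mul_le_mul_of_nonneg_left h1 (Real.rpow_nonneg hr0.le _)
      _ = 2 ^ (H + 1/2) * r ^ (-2*H - 1) := h3
  have hint2 : IntegrableOn (fun r : ℝ => r ^ (-H - 1/2) * (r - T) ^ (-H - 1/2))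
      (Set.Ioi (2*T)) := by
    refine Integrable.mono' hbint2 (hmeas _) ?_
    filter_upwards [ae_restrict_mem measurableSet_Ioi] with r hr
    have hr2 : 2 * T < r := hr
    rw [Real.norm_eq_abs, abs_of_nonneg (mul_nonneg (Real.rpow_nonneg (by linarith) _)
      (Real.rpow_nonneg (by linarith) _))]
    exact hpt2 r hr
  have hunion : Set.Ioc T (2*T) ∪ Set.Ioi (2*T) = Set.Ioi T := Set.Ioc_union_Ioi_eq_Ioi h2T
  have hint : IntegrableOn (fun r : ℝ => r ^ (-H - 1/2) * (r - T) ^ (-H - 1/2)) (Set.Ioi T) := by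
    rw [← hunion]; exact hint1.union hint2
  refine ⟨hint, ?_⟩
  rw [← hunion, setIntegral_union (Set.Ioc_disjoint_Ioi le_rfl) measurableSet_Ioi hint1 hint2]
  -- value of first integral bound
  have hval1 : ∫ r in Set.Ioc T (2*T), T ^ (-H - 1/2) * (r - T) ^ (-H - 1/2) =
      T ^ (-H - 1/2) * (T ^ ((-H - 1/2) + 1) / ((-H - 1/2) + 1)) := by
    rw [MeasureTheory.integral_const_mul]
    congr 1
    rw [← intervalIntegral.integral_of_le h2T,
      intervalIntegral.integral_comp_sub_right (fun s => s ^ (-H - 1/2)) T]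
    rw [sub_self, show 2*T - T = T by ring, integral_rpow (Or.inl ha)]
    rw [Real.zero_rpow (by linarith : (-H - 1/2) + 1 ≠ 0)]
    ring
  have hb1 : ∫ r in Set.Ioc T (2*T), r ^ (-H - 1/2) * (r - T) ^ (-H - 1/2) ≤
      1/(1/2 - H) * T ^ (-2*H) := by
    calc ∫ r in Set.Ioc T (2*T), r ^ (-H - 1/2) * (r - T) ^ (-H - 1/2)
        ≤ ∫ r in Set.Ioc T (2*T), T ^ (-H - 1/2) * (r - T) ^ (-H - 1/2) :=
          setIntegral_mono_on hint1 hbint1 measurableSet_Ioc hpt1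
      _ = T ^ (-H - 1/2) * (T ^ ((-H - 1/2) + 1) / ((-H - 1/2) + 1)) := hval1
      _ = 1/(1/2 - H) * T ^ (-2*H) := by
          rw [mul_div_assoc', ← Real.rpow_add hT0,
            show (-H - 1/2) + ((-H - 1/2) + 1) = -2*H by ring]
          rw [show (-H - 1/2) + 1 = 1/2 - H by ring]
          ring
  have hval2 : ∫ r in Set.Ioi (2*T), 2 ^ (H + 1/2) * r ^ (-2*H - 1) =
      2 ^ (H + 1/2) * (2 ^ (-2*H) * T ^ (-2*H) / (2*H)) := by
    rw [MeasureTheory.integral_const_mul, integral_Ioi_rpow_of_lt (by linarith) (by linarith)]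
    rw [show (-2*H - 1) + 1 = -2*H by ring]
    rw [Real.mul_rpow (by norm_num : (0:ℝ) ≤ 2) hT0.le]
    congr 1
    field_simp
  have hb2 : ∫ r in Set.Ioi (2*T), r ^ (-H - 1/2) * (r - T) ^ (-H - 1/2) ≤
      2 ^ (H + 1/2) * 2 ^ (-2*H) / (2*H) * T ^ (-2*H) := by
    calc ∫ r in Set.Ioi (2*T), r ^ (-H - 1/2) * (r - T) ^ (-H - 1/2)
        ≤ ∫ r in Set.Ioi (2*T), 2 ^ (H + 1/2) * r ^ (-2*H - 1) :=
          setIntegral_mono_on hint2 hbint2 measurableSet_Ioi hpt2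
      _ = 2 ^ (H + 1/2) * (2 ^ (-2*H) * T ^ (-2*H) / (2*H)) := hval2
      _ = 2 ^ (H + 1/2) * 2 ^ (-2*H) / (2*H) * T ^ (-2*H) := by ring
  linarith [hb1, hb2]

lemma osc_bound {H T x r : ℝ} (hH : H ∈ Set.Ioo (0:ℝ) (1/2)) (hT : 1 ≤ T) (hx : 0 < x)
    (hr : T < r) :
    |∫ u in Set.Ioc (0:ℝ) T, Real.cos (u * x) * (r - u) ^ (-H - 1/2)| ≤
      2 * (r - T) ^ (-H - 1/2) / x := by
  obtain ⟨hH0, hH1⟩ := hH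
  have h0T : (0:ℝ) ≤ T := le_trans zero_le_one hT
  have hrT : (0:ℝ) < r - T := by linarith
  have hxne : x ≠ 0 := ne_of_gt hx
  set p : ℝ := -H - 1/2 with hp
  have hu : ∀ t ∈ Set.uIcc (0:ℝ) T, HasDerivAt (fun t : ℝ => (r - t) ^ p)
      ((H + 1/2) * (r - t) ^ (p - 1)) t := by
    intro t ht
    rw [Set.uIcc_of_le h0T] at ht
    have htr : r - t ≠ 0 := ne_of_gt (by linarith [ht.2])
    have hd : HasDerivAt (fun t : ℝ => r - t) (-1) t := (hasDerivAt_id t).const_sub r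
    have := hd.rpow_const (p := p) (Or.inl htr)
    convert this using 1
    rw [hp]; ring
  have hv : ∀ t ∈ Set.uIcc (0:ℝ) T, HasDerivAt (fun t : ℝ => Real.sin (t * x) / x)
      (Real.cos (t * x)) t := by
    intro t _
    have h1 : HasDerivAt (fun t : ℝ => t * x) x t := by
      simpa using (hasDerivAt_id t).mul_const x
    have h2 := (Real.hasDerivAt_sin (t * x)).comp t h1
    have h3 := h2.div_const x
    rw [mul_div_cancel_right₀ _ hxne] at h3
    exact h3
  have huc : ContinuousOn (fun t : ℝ => (H + 1/2) * (r - t) ^ (p - 1)) (Set.uIcc 0 T) := by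
    apply ContinuousOn.mul continuousOn_const
    apply ContinuousOn.rpow_const (continuousOn_const.sub continuousOn_id)
    intro t ht
    rw [Set.uIcc_of_le h0T] at ht
    refine Or.inl (ne_of_gt ?_)
    show (0:ℝ) < r - t
    linarith [ht.2]
  have hu'int : IntervalIntegrable (fun t : ℝ => (H + 1/2) * (r - t) ^ (p - 1)) volume 0 T :=
    huc.intervalIntegrable
  have hv'int : IntervalIntegrable (fun t : ℝ => Real.cos (t * x)) volume 0 T :=
    (Real.continuous_cos.comp (continuous_id.mul continuous_const)).intervalIntegrable 0 T
  have key := intervalIntegral.integral_mul_deriv_eq_deriv_mul hu hv hu'int hv'int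
  have ftc := intervalIntegral.integral_eq_sub_of_hasDerivAt hu hu'int
  have hvint : IntervalIntegrable (fun t : ℝ =>
      ((H + 1/2) * (r - t) ^ (p - 1)) * (Real.sin (t * x) / x)) volume 0 T := by
    apply ContinuousOn.intervalIntegrable
    exact huc.mul
      ((Real.continuous_sin.comp (continuous_id.mul continuous_const)).continuousOn.div_const x)
  have hJ : |∫ t in (0:ℝ)..T, ((H + 1/2) * (r - t) ^ (p - 1)) * (Real.sin (t * x) / x)| ≤
      ((r - T) ^ p - (r - 0) ^ p) / x := by
    have h1 := intervalIntegral.abs_integral_le_integral_abs (μ := volume)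
      (f := fun t : ℝ => ((H + 1/2) * (r - t) ^ (p - 1)) * (Real.sin (t * x) / x)) h0T
    have h2 : (∫ t in (0:ℝ)..T, |((H + 1/2) * (r - t) ^ (p - 1)) * (Real.sin (t * x) / x)|) ≤
        ∫ t in (0:ℝ)..T, ((H + 1/2) * (r - t) ^ (p - 1)) * (1 / x) := by
      apply intervalIntegral.integral_mono_on h0T (hvint.abs) (hu'int.mul_const _)
      intro t ht
      have hrt : (0:ℝ) < r - t := by linarith [ht.2]
      have hnn : (0:ℝ) ≤ (H + 1/2) * (r - t) ^ (p - 1) :=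
        mul_nonneg (by linarith) (Real.rpow_nonneg hrt.le _)
      rw [abs_mul, abs_of_nonneg hnn]
      apply mul_le_mul_of_nonneg_left _ hnn
      rw [abs_div, abs_of_pos hx]
      gcongr
      exact abs_le.2 ⟨Real.neg_one_le_sin _, Real.sin_le_one _⟩
    have h3 : (∫ t in (0:ℝ)..T, ((H + 1/2) * (r - t) ^ (p - 1)) * (1 / x)) =
        ((r - T) ^ p - (r - 0) ^ p) * (1 / x) := by
      rw [intervalIntegral.integral_mul_const, ftc]
    calc |∫ t in (0:ℝ)..T, ((H + 1/2) * (r - t) ^ (p - 1)) * (Real.sin (t * x) / x)|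
        ≤ _ := h1
      _ ≤ _ := h2
      _ = ((r - T) ^ p - (r - 0) ^ p) / x := by rw [h3, mul_one_div]
  -- rewrite goal
  rw [← intervalIntegral.integral_of_le h0T]
  have hcomm : (∫ t in (0:ℝ)..T, Real.cos (t * x) * (r - t) ^ p) =
      ∫ t in (0:ℝ)..T, (r - t) ^ p * Real.cos (t * x) :=
    intervalIntegral.integral_congr (fun t _ => mul_comm _ _)
  rw [hcomm, key]
  simp only [zero_mul, Real.sin_zero, zero_div, mul_zero, sub_zero]
  have hA : |(r - T) ^ p * (Real.sin (T * x) / x)| ≤ (r - T) ^ p / x := by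
    rw [abs_mul, abs_of_nonneg (Real.rpow_nonneg hrT.le _), abs_div, abs_of_pos hx]
    calc (r - T) ^ p * (|Real.sin (T * x)| / x)
        ≤ (r - T) ^ p * (1 / x) := by
          gcongr
          exact abs_le.2 ⟨Real.neg_one_le_sin _, Real.sin_le_one _⟩
      _ = (r - T) ^ p / x := by ring
  calc |(r - T) ^ p * (Real.sin (T * x) / x) -
        ∫ t in (0:ℝ)..T, (H + 1/2) * (r - t) ^ (p - 1) * (Real.sin (t * x) / x)|
      ≤ |(r - T) ^ p * (Real.sin (T * x) / x)| +
        |∫ t in (0:ℝ)..T, (H + 1/2) * (r - t) ^ (p - 1) * (Real.sin (t * x) / x)| :=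
        abs_sub _ _
    _ ≤ (r - T) ^ p / x + ((r - T) ^ p - (r - 0) ^ p) / x := add_le_add hA hJ
    _ ≤ 2 * (r - T) ^ p / x := by
        rw [← add_div]
        gcongr
        have : (0:ℝ) ≤ (r - 0) ^ p := Real.rpow_nonneg (by linarith) _
        linarith

noncomputable def gaux (H : ℝ) : ℝ → ℝ → ℝ := fun T x =>
  -(T ^ (-2*H) * Real.sin (T*x) / x) +
    (2*H/x) * ∫ u in Set.Ioi T, u ^ (-2*H - 1) * Real.sin (u*x)

lemma tail_sin_int {H T : ℝ} (x : ℝ) (hH0 : 0 < H) (hT0 : 0 < T) :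
    IntegrableOn (fun u : ℝ => u ^ (-2*H - 1) * Real.sin (u*x)) (Set.Ioi T) := by
  refine Integrable.mono' (integrableOn_Ioi_rpow_of_lt (by linarith : -2*H - 1 < -1) hT0)
    ((by fun_prop : Measurable fun u : ℝ => u ^ (-2*H - 1) * Real.sin (u*x)).aestronglyMeasurable)
    ?_
  filter_upwards [ae_restrict_mem measurableSet_Ioi] with u hu
  have hu0 : (0:ℝ) < u := lt_trans hT0 hu
  rw [Real.norm_eq_abs, abs_mul, abs_of_nonneg (Real.rpow_nonneg hu0.le _)]
  calc u ^ (-2*H - 1) * |Real.sin (u*x)| ≤ u ^ (-2*H - 1) * 1 := by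
        gcongr
        exact abs_le.2 ⟨Real.neg_one_le_sin _, Real.sin_le_one _⟩
    _ = u ^ (-2*H - 1) := mul_one _

lemma tendsto_gaux {H T x : ℝ} (hH : H ∈ Set.Ioo (0:ℝ) (1/2)) (hT : 1 ≤ T) (hx : 0 < x) :
    Filter.Tendsto (fun R : ℝ => ∫ u in T..R, u ^ (-2*H) * Real.cos (u * x))
      Filter.atTop (nhds (gaux H T x)) := by
  obtain ⟨hH0, hH1⟩ := hH
  have hT0 : (0:ℝ) < T := lt_of_lt_of_le one_pos hT
  have hxne : x ≠ 0 := ne_of_gt hx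
  have hIBP : ∀ R : ℝ, T ≤ R → (∫ u in T..R, u ^ (-2*H) * Real.cos (u * x)) =
      R ^ (-2*H) * Real.sin (R*x) / x - T ^ (-2*H) * Real.sin (T*x) / x +
        (2*H/x) * ∫ u in T..R, u ^ (-2*H - 1) * Real.sin (u*x) := by
    intro R hR
    have hu : ∀ t ∈ Set.uIcc T R, HasDerivAt (fun t : ℝ => t ^ (-2*H))
        ((-2*H) * t ^ (-2*H - 1)) t := by
      intro t ht
      rw [Set.uIcc_of_le hR] at ht
      have ht0 : (0:ℝ) < t := lt_of_lt_of_le hT0 ht.1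
      have := Real.hasDerivAt_rpow_const (x := t) (p := -2*H) (Or.inl (ne_of_gt ht0))
      convert this using 1
    have hv : ∀ t ∈ Set.uIcc T R, HasDerivAt (fun t : ℝ => Real.sin (t * x) / x)
        (Real.cos (t * x)) t := by
      intro t _
      have h1 : HasDerivAt (fun t : ℝ => t * x) x t := by
        simpa using (hasDerivAt_id t).mul_const x
      have h2 := ((Real.hasDerivAt_sin (t * x)).comp t h1).div_const x
      rw [mul_div_cancel_right₀ _ hxne] at h2
      exact h2
    have hu'int : IntervalIntegrable (fun t : ℝ => (-2*H) * t ^ (-2*H - 1)) volume T R := by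
      apply ContinuousOn.intervalIntegrable
      apply ContinuousOn.mul continuousOn_const
      apply ContinuousOn.rpow_const continuousOn_id
      intro t ht
      rw [Set.uIcc_of_le hR] at ht
      exact Or.inl (by simp only [id_eq]; exact ne_of_gt (lt_of_lt_of_le hT0 ht.1))
    have hv'int : IntervalIntegrable (fun t : ℝ => Real.cos (t * x)) volume T R :=
      (Real.continuous_cos.comp (continuous_id.mul continuous_const)).intervalIntegrable T R
    have key := intervalIntegral.integral_mul_deriv_eq_deriv_mul hu hv hu'int hv'int
    rw [key]
    have hJ : (∫ t in T..R, ((-2*H) * t ^ (-2*H - 1)) * (Real.sin (t * x) / x)) =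
        (-(2*H/x)) * ∫ t in T..R, t ^ (-2*H - 1) * Real.sin (t * x) := by
      rw [← intervalIntegral.integral_const_mul]
      apply intervalIntegral.integral_congr
      intro t _
      simp only [div_eq_mul_inv]
      ring
    rw [hJ]
    ring
  have t1 : Filter.Tendsto (fun R : ℝ => R ^ (-2*H) * Real.sin (R*x) / x)
      Filter.atTop (nhds 0) := by
    have hg : Filter.Tendsto (fun R : ℝ => R ^ (-2*H) / x) Filter.atTop (nhds 0) := by
      have := (tendsto_rpow_neg_atTop (by linarith : (0:ℝ) < 2*H)).div_const x
      simpa using this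
    apply squeeze_zero_norm' _ hg
    filter_upwards [eventually_ge_atTop (0:ℝ)] with R hR
    rw [Real.norm_eq_abs, abs_div, abs_of_pos hx, abs_mul,
      abs_of_nonneg (Real.rpow_nonneg hR _)]
    gcongr
    calc R ^ (-2*H) * |Real.sin (R*x)| ≤ R ^ (-2*H) * 1 := by
          gcongr
          exact abs_le.2 ⟨Real.neg_one_le_sin _, Real.sin_le_one _⟩
      _ = R ^ (-2*H) := mul_one _
  have t2 : Filter.Tendsto (fun R : ℝ => ∫ u in T..R, u ^ (-2*H - 1) * Real.sin (u*x))
      Filter.atTop (nhds (∫ u in Set.Ioi T, u ^ (-2*H - 1) * Real.sin (u*x))) :=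
    intervalIntegral_tendsto_integral_Ioi T (tail_sin_int x hH0 hT0) tendsto_id
  have tcomb := (t1.sub_const (T ^ (-2*H) * Real.sin (T*x) / x)).add (t2.const_mul (2*H/x))
  rw [zero_sub] at tcomb
  have : -(T ^ (-2*H) * Real.sin (T*x) / x) +
      (2*H/x) * ∫ u in Set.Ioi T, u ^ (-2*H - 1) * Real.sin (u*x) = gaux H T x := rfl
  rw [← this]
  apply tcomb.congr'
  filter_upwards [eventually_ge_atTop T] with R hR
  rw [hIBP R hR]
lemma gaux_bound {H T x : ℝ} (hH : H ∈ Set.Ioo (0:ℝ) (1/2)) (hT : 1 ≤ T) (hx : 0 < x) :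
    |gaux H T x| ≤ 2 * T ^ (-2*H) / x := by
  obtain ⟨hH0, hH1⟩ := hH
  have hT0 : (0:ℝ) < T := lt_of_lt_of_le one_pos hT
  have hJ : |∫ u in Set.Ioi T, u ^ (-2*H - 1) * Real.sin (u*x)| ≤ T ^ (-2*H) / (2*H) := by
    have hb := MeasureTheory.norm_integral_le_of_norm_le
      (f := fun u : ℝ => u ^ (-2*H - 1) * Real.sin (u*x))
      (g := fun u : ℝ => u ^ (-2*H - 1))
      (μ := volume.restrict (Set.Ioi T))
      (integrableOn_Ioi_rpow_of_lt (by linarith : -2*H - 1 < -1) hT0) ?_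
    · rw [Real.norm_eq_abs] at hb
      refine hb.trans ?_
      rw [integral_Ioi_rpow_of_lt (by linarith : -2*H - 1 < -1) hT0,
        show (-2*H - 1) + 1 = -2*H by ring]
      have h2H : (2*H) ≠ 0 := by positivity
      exact le_of_eq (by field_simp)
    · filter_upwards [ae_restrict_mem measurableSet_Ioi] with u hu
      have hu0 : (0:ℝ) < u := lt_trans hT0 hu
      rw [Real.norm_eq_abs, abs_mul, abs_of_nonneg (Real.rpow_nonneg hu0.le _)]
      calc u ^ (-2*H - 1) * |Real.sin (u*x)| ≤ u ^ (-2*H - 1) * 1 := by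
            gcongr
            exact abs_le.2 ⟨Real.neg_one_le_sin _, Real.sin_le_one _⟩
        _ = u ^ (-2*H - 1) := mul_one _
  have h1 : |(T ^ (-2*H) * Real.sin (T*x) / x)| ≤ T ^ (-2*H) / x := by
    rw [abs_div, abs_of_pos hx, abs_mul, abs_of_nonneg (Real.rpow_nonneg hT0.le _)]
    gcongr
    calc T ^ (-2*H) * |Real.sin (T*x)| ≤ T ^ (-2*H) * 1 := by
          gcongr
          exact abs_le.2 ⟨Real.neg_one_le_sin _, Real.sin_le_one _⟩
      _ = T ^ (-2*H) := mul_one _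
  have h2 : |(2*H/x) * ∫ u in Set.Ioi T, u ^ (-2*H - 1) * Real.sin (u*x)| ≤ T ^ (-2*H) / x := by
    rw [abs_mul, abs_div, abs_of_pos hx, abs_of_nonneg (by linarith : (0:ℝ) ≤ 2*H)]
    calc 2*H/x * |∫ u in Set.Ioi T, u ^ (-2*H - 1) * Real.sin (u*x)|
        ≤ 2*H/x * (T ^ (-2*H) / (2*H)) := by gcongr
      _ = T ^ (-2*H) / x := by field_simp
  calc |gaux H T x|
      = |(-(T ^ (-2*H) * Real.sin (T*x) / x)) +
        (2*H/x) * ∫ u in Set.Ioi T, u ^ (-2*H - 1) * Real.sin (u*x)| := rfl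
    _ ≤ |(-(T ^ (-2*H) * Real.sin (T*x) / x))| +
        |(2*H/x) * ∫ u in Set.Ioi T, u ^ (-2*H - 1) * Real.sin (u*x)| := abs_add_le _ _
    _ = |(T ^ (-2*H) * Real.sin (T*x) / x)| +
        |(2*H/x) * ∫ u in Set.Ioi T, u ^ (-2*H - 1) * Real.sin (u*x)| := by rw [abs_neg]
    _ ≤ T ^ (-2*H) / x + T ^ (-2*H) / x := add_le_add h1 h2
    _ = 2 * T ^ (-2*H) / x := by ring

lemma inner_bound {H T x : ℝ} (hH : H ∈ Set.Ioo (0:ℝ) (1/2)) (hT : 1 ≤ T) (hx : 0 < x) :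
    |∫ u in Set.Ioc (0:ℝ) T, Real.cos (u * x) *
        ∫ r in Set.Ioi T, r ^ (-H - 1/2) * (r - u) ^ (-H - 1/2)| ≤
      2 / x * (cB H * T ^ (-2*H)) := by
  obtain ⟨hH0, hH1⟩ := hH
  have hT0 : (0:ℝ) < T := lt_of_lt_of_le one_pos hT
  have hanp : (-H - 1/2 : ℝ) ≤ 0 := by linarith
  -- product integrability
  have hmeas : AEStronglyMeasurable
      (fun p : ℝ × ℝ => Real.cos (p.1 * x) * (p.2 ^ (-H - 1/2) * (p.2 - p.1) ^ (-H - 1/2)))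
      ((volume.restrict (Set.Ioc (0:ℝ) T)).prod (volume.restrict (Set.Ioi T))) := by
    apply Measurable.aestronglyMeasurable
    fun_prop
  have hbddint : Integrable
      (fun p : ℝ × ℝ => (1:ℝ) * (p.2 ^ (-H - 1/2) * (p.2 - T) ^ (-H - 1/2)))
      ((volume.restrict (Set.Ioc (0:ℝ) T)).prod (volume.restrict (Set.Ioi T))) := by
    exact Integrable.mul_prod (f := fun _ : ℝ => (1:ℝ))
      (g := fun r : ℝ => r ^ (-H - 1/2) * (r - T) ^ (-H - 1/2))
      (integrableOn_const measure_Ioc_lt_top.ne) (aux_tail ⟨hH0, hH1⟩ hT).1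
  have hprod : Integrable
      (fun p : ℝ × ℝ => Real.cos (p.1 * x) * (p.2 ^ (-H - 1/2) * (p.2 - p.1) ^ (-H - 1/2)))
      ((volume.restrict (Set.Ioc (0:ℝ) T)).prod (volume.restrict (Set.Ioi T))) := by
    refine Integrable.mono' hbddint hmeas ?_
    rw [Measure.prod_restrict]
    filter_upwards [ae_restrict_mem (measurableSet_Ioc.prod measurableSet_Ioi)] with p hp
    obtain ⟨hp1, hp2⟩ := hp
    have hu0 : (0:ℝ) < p.1 := hp1.1
    have huT : p.1 ≤ T := hp1.2
    have hrT : T < p.2 := hp2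
    have hru : (0:ℝ) < p.2 - p.1 := by linarith
    have hrT0 : (0:ℝ) < p.2 - T := by linarith
    rw [Real.norm_eq_abs, abs_mul, abs_mul, abs_of_nonneg (Real.rpow_nonneg (by linarith) _),
      abs_of_nonneg (Real.rpow_nonneg hru.le _), one_mul]
    have h1 : |Real.cos (p.1 * x)| ≤ 1 := abs_le.2 ⟨Real.neg_one_le_cos _, Real.cos_le_one _⟩
    have h2 : (p.2 - p.1) ^ (-H - 1/2) ≤ (p.2 - T) ^ (-H - 1/2) :=
      Real.rpow_le_rpow_of_nonpos hrT0 (by linarith) hanp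
    calc |Real.cos (p.1 * x)| * (p.2 ^ (-H - 1/2) * (p.2 - p.1) ^ (-H - 1/2))
        ≤ 1 * (p.2 ^ (-H - 1/2) * (p.2 - T) ^ (-H - 1/2)) := by
          apply mul_le_mul h1 _ (mul_nonneg (Real.rpow_nonneg (by linarith) _)
            (Real.rpow_nonneg hru.le _)) one_pos.le
          exact mul_le_mul_of_nonneg_left h2 (Real.rpow_nonneg (by linarith) _)
      _ = p.2 ^ (-H - 1/2) * (p.2 - T) ^ (-H - 1/2) := one_mul _
  -- rewrite inner integral: pull cos inside
  have hre : (∫ u in Set.Ioc (0:ℝ) T, Real.cos (u * x) *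
        ∫ r in Set.Ioi T, r ^ (-H - 1/2) * (r - u) ^ (-H - 1/2)) =
      ∫ u in Set.Ioc (0:ℝ) T, ∫ r in Set.Ioi T,
        Real.cos (u * x) * (r ^ (-H - 1/2) * (r - u) ^ (-H - 1/2)) := by
    congr 1
    funext u
    rw [MeasureTheory.integral_const_mul]
  have hswap := MeasureTheory.integral_integral_swap
    (f := fun u r => Real.cos (u * x) * (r ^ (-H - 1/2) * (r - u) ^ (-H - 1/2))) hprod
  rw [hre, hswap]
  -- now bound the outer (r) integral
  have hGint : IntegrableOn
      (fun r : ℝ => (r ^ (-H - 1/2) * (r - T) ^ (-H - 1/2)) * (2 / x)) (Set.Ioi T) :=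
    ((aux_tail ⟨hH0, hH1⟩ hT).1).mul_const _
  have hb := MeasureTheory.norm_integral_le_of_norm_le
    (f := fun r : ℝ => ∫ u in Set.Ioc (0:ℝ) T,
      Real.cos (u * x) * (r ^ (-H - 1/2) * (r - u) ^ (-H - 1/2)))
    (g := fun r : ℝ => (r ^ (-H - 1/2) * (r - T) ^ (-H - 1/2)) * (2 / x))
    (μ := volume.restrict (Set.Ioi T)) hGint ?_
  · rw [Real.norm_eq_abs] at hb
    refine hb.trans ?_
    rw [MeasureTheory.integral_mul_const]
    have := (aux_tail ⟨hH0, hH1⟩ hT).2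
    calc (∫ r in Set.Ioi T, r ^ (-H - 1/2) * (r - T) ^ (-H - 1/2)) * (2/x)
        ≤ (cB H * T ^ (-2*H)) * (2/x) := by
          apply mul_le_mul_of_nonneg_right this (by positivity)
      _ = 2 / x * (cB H * T ^ (-2*H)) := by ring
  · filter_upwards [ae_restrict_mem measurableSet_Ioi] with r hr
    have hrT : T < r := hr
    have hr0 : (0:ℝ) < r := lt_trans hT0 hrT
    -- pull r^a out of the u integral
    have hpull : (∫ u in Set.Ioc (0:ℝ) T,
        Real.cos (u * x) * (r ^ (-H - 1/2) * (r - u) ^ (-H - 1/2))) =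
        r ^ (-H - 1/2) * ∫ u in Set.Ioc (0:ℝ) T,
          Real.cos (u * x) * (r - u) ^ (-H - 1/2) := by
      rw [← MeasureTheory.integral_const_mul]
      congr 1
      funext u
      ring
    rw [Real.norm_eq_abs, hpull, abs_mul, abs_of_nonneg (Real.rpow_nonneg hr0.le _)]
    calc r ^ (-H - 1/2) * |∫ u in Set.Ioc (0:ℝ) T, Real.cos (u * x) * (r - u) ^ (-H - 1/2)|
        ≤ r ^ (-H - 1/2) * (2 * (r - T) ^ (-H - 1/2) / x) := by
          apply mul_le_mul_of_nonneg_left (osc_bound ⟨hH0, hH1⟩ hT hx hrT)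
            (Real.rpow_nonneg hr0.le _)
      _ = (r ^ (-H - 1/2) * (r - T) ^ (-H - 1/2)) * (2 / x) := by ring

theorem stmt16 (H θ : ℝ) (hH : H ∈ Set.Ioo (0:ℝ) (1/2)) (hθ : 0 < θ) :
    ∃ g : ℝ → ℝ → ℝ,
      (∀ T : ℝ, 1 ≤ T → ∀ x : ℝ, 0 < x →
        Filter.Tendsto (fun R : ℝ => ∫ u in T..R, u ^ (-2*H) * Real.cos (u * x))
          Filter.atTop (nhds (g T x))) ∧
      ∃ C : ℝ, 0 < C ∧ ∀ T : ℝ, 1 ≤ T →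
        |∫ x in Set.Ioi (0:ℝ), x ^ (1 - 2*H) / (θ ^ 2 + x ^ 2) * g T x| ≤ C * T ^ (-2*H) ∧
        |∫ x in Set.Ioi (0:ℝ), x ^ (1 - 2*H) / (θ ^ 2 + x ^ 2) *
            ∫ u in Set.Ioc (0:ℝ) T, Real.cos (u * x) *
              ∫ r in Set.Ioi T, r ^ (-H - 1/2) * (r - u) ^ (-H - 1/2)| ≤ C * T ^ (-2*H) := by
  obtain ⟨hH0, hH1⟩ := hH
  refine ⟨gaux H, fun T hT x hx => tendsto_gaux ⟨hH0, hH1⟩ hT hx, ?_⟩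
  set K : ℝ := ∫ x in Set.Ioi (0:ℝ), x ^ (-2*H) / (θ ^ 2 + x ^ 2) with hKdef
  have hKint : IntegrableOn (fun x : ℝ => x ^ (-2*H) / (θ ^ 2 + x ^ 2)) (Set.Ioi 0) :=
    aux_ratio (by linarith) (by linarith) hθ
  have hK0 : 0 ≤ K := by
    apply setIntegral_nonneg measurableSet_Ioi
    intro x hx
    have hx0 : (0:ℝ) < x := hx
    positivity
  have hcB0 : 0 ≤ cB H := by
    unfold cB
    have h1 : (0:ℝ) < 1/2 - H := by linarith
    positivity
  refine ⟨2*K*(1 + cB H) + 1, by nlinarith, ?_⟩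
  intro T hT
  have hT0 : (0:ℝ) < T := lt_of_lt_of_le one_pos hT
  have hTp : (0:ℝ) < T ^ (-2*H) := Real.rpow_pos_of_pos hT0 _
  have hxkey : ∀ x : ℝ, 0 < x → ∀ c : ℝ, 0 ≤ c →
      x ^ (1 - 2*H) / (θ ^ 2 + x ^ 2) * (c / x) = c * (x ^ (-2*H) / (θ ^ 2 + x ^ 2)) := by
    intro x hx c _
    have hxx : x ^ (1 - 2*H) = x * x ^ (-2*H) := by
      rw [show (1 - 2*H) = 1 + (-2*H) by ring, Real.rpow_add hx, Real.rpow_one]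
    have hne : θ ^ 2 + x ^ 2 ≠ 0 := by positivity
    rw [hxx]
    field_simp
  constructor
  · -- first estimate
    have hb := MeasureTheory.norm_integral_le_of_norm_le
      (f := fun x : ℝ => x ^ (1 - 2*H) / (θ ^ 2 + x ^ 2) * gaux H T x)
      (g := fun x : ℝ => 2 * T ^ (-2*H) * (x ^ (-2*H) / (θ ^ 2 + x ^ 2)))
      (μ := volume.restrict (Set.Ioi 0)) (hKint.const_mul _) ?_
    · rw [Real.norm_eq_abs] at hb
      refine hb.trans ?_
      rw [MeasureTheory.integral_const_mul, ← hKdef]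
      nlinarith [mul_nonneg hTp.le (by nlinarith : (0:ℝ) ≤ 2*K*cB H + 1)]
    · filter_upwards [ae_restrict_mem measurableSet_Ioi] with x hx0
      have hx : (0:ℝ) < x := hx0
      have hfrac : (0:ℝ) ≤ x ^ (1 - 2*H) / (θ ^ 2 + x ^ 2) := by positivity
      rw [Real.norm_eq_abs, abs_mul, abs_of_nonneg hfrac]
      calc x ^ (1 - 2*H) / (θ ^ 2 + x ^ 2) * |gaux H T x|
          ≤ x ^ (1 - 2*H) / (θ ^ 2 + x ^ 2) * (2 * T ^ (-2*H) / x) :=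
            mul_le_mul_of_nonneg_left (gaux_bound ⟨hH0, hH1⟩ hT hx) hfrac
        _ = 2 * T ^ (-2*H) * (x ^ (-2*H) / (θ ^ 2 + x ^ 2)) :=
            hxkey x hx _ (by positivity)
  · -- second estimate
    have hb := MeasureTheory.norm_integral_le_of_norm_le
      (f := fun x : ℝ => x ^ (1 - 2*H) / (θ ^ 2 + x ^ 2) *
        ∫ u in Set.Ioc (0:ℝ) T, Real.cos (u * x) *
          ∫ r in Set.Ioi T, r ^ (-H - 1/2) * (r - u) ^ (-H - 1/2))
      (g := fun x : ℝ => 2 * (cB H * T ^ (-2*H)) * (x ^ (-2*H) / (θ ^ 2 + x ^ 2)))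
      (μ := volume.restrict (Set.Ioi 0)) (hKint.const_mul _) ?_
    · rw [Real.norm_eq_abs] at hb
      refine hb.trans ?_
      rw [MeasureTheory.integral_const_mul, ← hKdef]
      nlinarith [mul_nonneg hTp.le (by nlinarith : (0:ℝ) ≤ 2*K + 1)]
    · filter_upwards [ae_restrict_mem measurableSet_Ioi] with x hx0
      have hx : (0:ℝ) < x := hx0
      have hfrac : (0:ℝ) ≤ x ^ (1 - 2*H) / (θ ^ 2 + x ^ 2) := by positivity
      rw [Real.norm_eq_abs, abs_mul, abs_of_nonneg hfrac]
      calc x ^ (1 - 2*H) / (θ ^ 2 + x ^ 2) *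
            |∫ u in Set.Ioc (0:ℝ) T, Real.cos (u * x) *
              ∫ r in Set.Ioi T, r ^ (-H - 1/2) * (r - u) ^ (-H - 1/2)|
          ≤ x ^ (1 - 2*H) / (θ ^ 2 + x ^ 2) * (2 * (cB H * T ^ (-2*H)) / x) := by
            apply mul_le_mul_of_nonneg_left _ hfrac
            have := inner_bound ⟨hH0, hH1⟩ hT hx
            calc |∫ u in Set.Ioc (0:ℝ) T, Real.cos (u * x) *
                  ∫ r in Set.Ioi T, r ^ (-H - 1/2) * (r - u) ^ (-H - 1/2)|
                ≤ 2 / x * (cB H * T ^ (-2*H)) := this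
              _ = 2 * (cB H * T ^ (-2*H)) / x := by ring
        _ = 2 * (cB H * T ^ (-2*H)) * (x ^ (-2*H) / (θ ^ 2 + x ^ 2)) :=
            hxkey x hx _ (by positivity)
end

section
/- Let H ∈ (0,1/2) and α > 0. Then ∫₀^∞ ( t^{H−1/2} ∫₀^t (t−s)^{−1/2−H} s^{1/2−H} e^{−αs} ds )² dt < ∞. -/
open MeasureTheory Set Real

section helpers

lemma h_sub_rpow {a t : ℝ} (ha : 0 < a) (ht : 0 ≤ t) :
    IntegrableOn (fun s => (t - s) ^ (a - 1)) (Set.Ioc 0 t) := by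
  have h := (intervalIntegral.intervalIntegrable_rpow' (a := 0) (b := t)
    (show (-1:ℝ) < a - 1 by linarith)).comp_sub_left t
  simp only [sub_zero, sub_self] at h
  exact (intervalIntegrable_iff_integrableOn_Ioc_of_le ht).mp h.symm

open intervalIntegral in
lemma h_sub_rpow_val {a t : ℝ} (ha : 0 < a) (ht : 0 ≤ t) :
    ∫ s in Set.Ioc 0 t, (t - s) ^ (a - 1) = t ^ a / a := by
  rw [← intervalIntegral.integral_of_le ht]
  rw [intervalIntegral.integral_comp_sub_left (fun u => u ^ (a-1)) t]
  simp only [sub_self, sub_zero]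
  rw [integral_rpow (Or.inl (by linarith))]
  rw [sub_add_cancel, Real.zero_rpow (ne_of_gt ha)]
  ring

open intervalIntegral in
lemma h_rpow_val {a t : ℝ} (ha : 0 < a) (ht : 0 ≤ t) :
    ∫ s in Set.Ioc 0 t, s ^ a = t ^ (a+1) / (a+1) := by
  rw [← intervalIntegral.integral_of_le ht, integral_rpow (Or.inl (by linarith)),
    Real.zero_rpow (by positivity)]
  ring

lemma h_gamma {a α : ℝ} (ha : -1 < a) (hα : 0 < α) :
    IntegrableOn (fun s : ℝ => s ^ a * Real.exp (-α * s)) (Set.Ioi 0) := by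
  have h := integrableOn_rpow_mul_exp_neg_mul_rpow ha zero_lt_one hα
  refine h.congr_fun (fun x hx => ?_) measurableSet_Ioi
  simp only [Real.rpow_one]

lemma h_bound (a α : ℝ) (ha : 0 < a) (ha1 : a < 1) (hα : 0 < α) {t : ℝ} (ht : 0 < t) :
    ‖∫ s in Set.Ioc (0:ℝ) t, (t - s) ^ (a - 1) * s ^ a * Real.exp (-α * s)‖ ≤
      (t/2) ^ (a - 1) *
        min (∫ s in Set.Ioi (0:ℝ), s ^ a * Real.exp (-α * s)) (t ^ (a+1) / (a+1))
      + (t ^ a / a) * (t ^ a * Real.exp (-(α/2) * t)) := by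
  have hIk : IntegrableOn (fun s : ℝ => s ^ a * Real.exp (-α * s)) (Set.Ioi 0) :=
    h_gamma (by linarith) hα
  have hIk' : IntegrableOn (fun s : ℝ => s ^ a * Real.exp (-α * s)) (Set.Ioc 0 t) :=
    hIk.mono_set Set.Ioc_subset_Ioi_self
  set g : ℝ → ℝ := fun s =>
    (t/2) ^ (a - 1) * (s ^ a * Real.exp (-α * s))
      + (t - s) ^ (a - 1) * (t ^ a * Real.exp (-(α/2) * t)) with hg_def
  have hg : IntegrableOn g (Set.Ioc 0 t) :=
    (hIk'.const_mul _).add ((h_sub_rpow ha ht.le).mul_const _)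
  have hbd : ∀ᵐ s ∂(volume.restrict (Set.Ioc (0:ℝ) t)),
      ‖(t - s) ^ (a - 1) * s ^ a * Real.exp (-α * s)‖ ≤ g s := by
    rw [ae_restrict_iff' measurableSet_Ioc]
    refine Filter.Eventually.of_forall fun s hs => ?_
    obtain ⟨hs0, hst⟩ := hs
    have hts : 0 ≤ t - s := by linarith
    have hF0 : 0 ≤ (t - s) ^ (a - 1) * s ^ a * Real.exp (-α * s) := by positivity
    rw [Real.norm_eq_abs, abs_of_nonneg hF0]
    rcases le_or_gt s (t/2) with h | h
    · have h1 : (t - s) ^ (a - 1) ≤ (t/2) ^ (a - 1) :=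
        Real.rpow_le_rpow_of_nonpos (by linarith) (by linarith) (by linarith)
      have h2 : (t - s) ^ (a - 1) * s ^ a * Real.exp (-α * s) ≤
          (t/2) ^ (a - 1) * (s ^ a * Real.exp (-α * s)) := by
        rw [← mul_assoc]
        have := mul_le_mul_of_nonneg_right h1 (Real.rpow_nonneg hs0.le a)
        exact mul_le_mul_of_nonneg_right this (Real.exp_nonneg _)
      have h3 : 0 ≤ (t - s) ^ (a - 1) * (t ^ a * Real.exp (-(α/2) * t)) := by positivity
      simp only [hg_def]; linarith
    · have h2 : s ^ a ≤ t ^ a := Real.rpow_le_rpow hs0.le hst ha.le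
      have h3 : Real.exp (-α * s) ≤ Real.exp (-(α/2) * t) := by
        apply Real.exp_le_exp.mpr; nlinarith
      have h4 : (t - s) ^ (a - 1) * s ^ a * Real.exp (-α * s) ≤
          (t - s) ^ (a - 1) * (t ^ a * Real.exp (-(α/2) * t)) := by
        rw [mul_assoc]
        refine mul_le_mul_of_nonneg_left ?_ (Real.rpow_nonneg hts _)
        exact mul_le_mul h2 h3 (Real.exp_nonneg _) (Real.rpow_nonneg ht.le _)
      have h5 : 0 ≤ (t/2) ^ (a - 1) * (s ^ a * Real.exp (-α * s)) := by positivity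
      simp only [hg_def]; linarith
  calc ‖∫ s in Set.Ioc (0:ℝ) t, (t - s) ^ (a - 1) * s ^ a * Real.exp (-α * s)‖
      ≤ ∫ s in Set.Ioc (0:ℝ) t, g s := norm_integral_le_of_norm_le hg hbd
    _ = (t/2) ^ (a - 1) * (∫ s in Set.Ioc (0:ℝ) t, s ^ a * Real.exp (-α * s))
        + (∫ s in Set.Ioc (0:ℝ) t, (t - s) ^ (a - 1)) * (t ^ a * Real.exp (-(α/2) * t)) := by
        rw [integral_add (hIk'.const_mul _) ((h_sub_rpow ha ht.le).mul_const _),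
          integral_const_mul, integral_mul_const]
    _ ≤ (t/2) ^ (a - 1) *
          min (∫ s in Set.Ioi (0:ℝ), s ^ a * Real.exp (-α * s)) (t ^ (a+1) / (a+1))
        + (t ^ a / a) * (t ^ a * Real.exp (-(α/2) * t)) := by
        rw [h_sub_rpow_val ha ht.le]
        refine add_le_add (mul_le_mul_of_nonneg_left (le_min ?_ ?_) (by positivity)) le_rfl
        · refine setIntegral_mono_set hIk ?_ (HasSubset.Subset.eventuallyLE Set.Ioc_subset_Ioi_self)
          rw [Filter.EventuallyLE, ae_restrict_iff' measurableSet_Ioi]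
          refine Filter.Eventually.of_forall fun s hs => ?_
          exact mul_nonneg (Real.rpow_nonneg (le_of_lt hs) a) (Real.exp_nonneg _)
        · calc (∫ s in Set.Ioc (0:ℝ) t, s ^ a * Real.exp (-α * s))
              ≤ ∫ s in Set.Ioc (0:ℝ) t, s ^ a := by
                refine setIntegral_mono_on hIk'
                  ((Real.continuous_rpow_const ha.le).integrableOn_Ioc)
                  measurableSet_Ioc fun s hs => ?_
                have h1 : Real.exp (-α * s) ≤ 1 :=
                  Real.exp_le_one_iff.mpr (by nlinarith [hs.1])
                nlinarith [Real.rpow_nonneg (le_of_lt hs.1) a, Real.exp_nonneg (-α * s)]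
            _ = t ^ (a+1) / (a+1) := h_rpow_val ha ht.le

lemma h_meas (a α : ℝ) :
    StronglyMeasurable (fun t : ℝ =>
      ∫ s in Set.Ioc (0:ℝ) t, (t - s) ^ (a - 1) * s ^ a * Real.exp (-α * s)) := by
  have hS : MeasurableSet {q : ℝ × ℝ | 0 < q.2 ∧ q.2 ≤ q.1} :=
    (measurableSet_lt measurable_const measurable_snd).inter
      (measurableSet_le measurable_snd measurable_fst)
  have hF : Measurable (fun q : ℝ × ℝ =>
      (q.1 - q.2) ^ (a - 1) * q.2 ^ a * Real.exp (-α * q.2)) :=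
    (((measurable_fst.sub measurable_snd).pow measurable_const).mul
      (measurable_snd.pow measurable_const)).mul
      ((measurable_snd.const_mul (-α)).exp)
  have hind : Measurable (fun q : ℝ × ℝ =>
      Set.indicator {q : ℝ × ℝ | 0 < q.2 ∧ q.2 ≤ q.1}
        (fun q : ℝ × ℝ => (q.1 - q.2) ^ (a - 1) * q.2 ^ a * Real.exp (-α * q.2)) q) :=
    hF.indicator hS
  have := StronglyMeasurable.integral_prod_right' (ν := (volume : Measure ℝ)) hind.stronglyMeasurable
  convert this using 1
  funext t
  rw [← integral_indicator measurableSet_Ioc]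
  refine integral_congr_ae (Filter.Eventually.of_forall fun s => ?_)
  by_cases hs : 0 < s ∧ s ≤ t
  · rw [Set.indicator_of_mem (Set.mem_Ioc.mpr hs)
      (fun s => (t - s) ^ (a - 1) * s ^ a * Real.exp (-α * s))]
    exact (Set.indicator_of_mem (show (t,s) ∈ {q : ℝ × ℝ | 0 < q.2 ∧ q.2 ≤ q.1} from hs)
      (fun q : ℝ × ℝ => (q.1 - q.2) ^ (a - 1) * q.2 ^ a * Real.exp (-α * q.2))).symm
  · rw [Set.indicator_of_notMem (fun h => hs (Set.mem_Ioc.mp h))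
      (fun s => (t - s) ^ (a - 1) * s ^ a * Real.exp (-α * s))]
    exact (Set.indicator_of_notMem
      (show (t,s) ∉ {q : ℝ × ℝ | 0 < q.2 ∧ q.2 ≤ q.1} from hs)
      (fun q : ℝ × ℝ => (q.1 - q.2) ^ (a - 1) * q.2 ^ a * Real.exp (-α * q.2))).symm

lemma aux_main (a α : ℝ) (ha : 0 < a) (ha1 : a < 1) (hα : 0 < α) :
    IntegrableOn
      (fun t : ℝ => (t ^ (-a) *
        ∫ s in Set.Ioc (0:ℝ) t, (t - s) ^ (a - 1) * s ^ a * Real.exp (-α * s)) ^ 2)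
      (Set.Ioi (0:ℝ)) := by
  set K : ℝ := ∫ s in Set.Ioi (0:ℝ), s ^ a * Real.exp (-α * s) with hK_def
  have hK0 : 0 ≤ K :=
    setIntegral_nonneg measurableSet_Ioi fun s hs =>
      mul_nonneg (Real.rpow_nonneg (le_of_lt hs) a) (Real.exp_nonneg _)
  set M : ℝ → ℝ := fun t => min K (t ^ (a+1) / (a+1)) with hM_def
  have hMmeas : Measurable M :=
    measurable_const.min ((measurable_id.pow measurable_const).div_const _)
  set D : ℝ → ℝ := fun t =>
    2 * ((2:ℝ) ^ (1-a) * t ^ (-1:ℝ) * M t) ^ 2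
      + 2 * ((1/a) * (t ^ a * Real.exp (-(α/2) * t))) ^ 2 with hD_def
  -- integrability of D on Ioi 0
  have hD2 : IntegrableOn
      (fun t : ℝ => 2 * ((1/a) * (t ^ a * Real.exp (-(α/2) * t))) ^ 2) (Set.Ioi 0) := by
    have base := integrableOn_rpow_mul_exp_neg_mul_rpow
      (show (-1:ℝ) < 2*a by linarith) zero_lt_one hα
    refine IntegrableOn.congr_fun (show IntegrableOn (fun x : ℝ => 2/a^2 * (x ^ (2*a) * Real.exp (-α * x ^ (1:ℝ)))) (Set.Ioi 0) volume from base.const_mul (2/a^2)) (fun x hx => ?_) measurableSet_Ioi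
    have hx0 : (0:ℝ) < x := hx
    rw [Real.rpow_one, show (2:ℝ)*a = a + a by ring, Real.rpow_add hx0]
    rw [show -α * x = (-(α/2) * x) + (-(α/2) * x) by ring, Real.exp_add]
    field_simp
    try ring
  have hD1 : IntegrableOn
      (fun t : ℝ => 2 * ((2:ℝ) ^ (1-a) * t ^ (-1:ℝ) * M t) ^ 2) (Set.Ioi 0) := by
    have hmeas : Measurable (fun t : ℝ => 2 * ((2:ℝ) ^ (1-a) * t ^ (-1:ℝ) * M t) ^ 2) :=
      ((((measurable_const.mul (measurable_id.pow measurable_const)).mul hMmeas).pow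
        measurable_const).const_mul 2)
    rw [show Set.Ioi (0:ℝ) = Set.Ioc 0 1 ∪ Set.Ioi 1 from (Set.Ioc_union_Ioi_eq_Ioi zero_le_one).symm]
    refine IntegrableOn.union ?_ ?_
    · -- on Ioc 0 1, dominate by c * t ^ (2a)
      have hdom : IntegrableOn
          (fun t : ℝ => 2 * ((2:ℝ) ^ (1-a) / (a+1)) ^ 2 * t ^ (2*a)) (Set.Ioc 0 1) := by
        have := (intervalIntegral.intervalIntegrable_rpow' (a := 0) (b := 1)
          (show (-1:ℝ) < 2*a by linarith))
        exact ((intervalIntegrable_iff_integrableOn_Ioc_of_le zero_le_one).mp this).const_mul _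
      refine Integrable.mono hdom hmeas.aestronglyMeasurable.restrict ?_
      rw [ae_restrict_iff' measurableSet_Ioc]
      refine Filter.Eventually.of_forall fun t htm => ?_
      obtain ⟨ht0, ht1⟩ := htm
      have hXpos : 0 ≤ (2:ℝ) ^ (1-a) * t ^ (-1:ℝ) * M t := by
        have : 0 ≤ M t := le_min hK0 (by positivity)
        have h1 : (0:ℝ) ≤ (2:ℝ) ^ (1-a) := Real.rpow_nonneg (by norm_num) _
        have h2 : (0:ℝ) ≤ t ^ (-1:ℝ) := Real.rpow_nonneg ht0.le _
        positivity
      have hXle : (2:ℝ) ^ (1-a) * t ^ (-1:ℝ) * M t ≤ (2:ℝ) ^ (1-a) / (a+1) * t ^ a := by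
        have h1 : M t ≤ t ^ (a+1) / (a+1) := min_le_right _ _
        have h2 : (2:ℝ) ^ (1-a) * t ^ (-1:ℝ) * M t ≤
            (2:ℝ) ^ (1-a) * t ^ (-1:ℝ) * (t ^ (a+1) / (a+1)) := by
          refine mul_le_mul_of_nonneg_left h1 ?_
          exact mul_nonneg (Real.rpow_nonneg (by norm_num) _) (Real.rpow_nonneg ht0.le _)
        refine h2.trans (le_of_eq ?_)
        rw [div_eq_mul_inv, div_eq_mul_inv]
        rw [show (2:ℝ) ^ (1-a) * t ^ (-1:ℝ) * (t ^ (a+1) * (a+1)⁻¹)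
            = (2:ℝ) ^ (1-a) * (a+1)⁻¹ * (t ^ (-1:ℝ) * t ^ (a+1)) by ring]
        rw [← Real.rpow_add ht0, show (-1:ℝ) + (a+1) = a by ring]
        try ring
      have hsq : ((2:ℝ) ^ (1-a) * t ^ (-1:ℝ) * M t) ^ 2 ≤
          ((2:ℝ) ^ (1-a) / (a+1)) ^ 2 * (t ^ a) ^ 2 := by
        rw [← mul_pow]
        exact pow_le_pow_left₀ hXpos hXle 2
      have hta : (t ^ a) ^ 2 = t ^ (2*a) := by
        rw [show (2:ℝ)*a = a + a by ring, Real.rpow_add ht0]; ring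
      rw [Real.norm_eq_abs, Real.norm_eq_abs, abs_of_nonneg (by positivity),
        abs_of_nonneg (by positivity : (0:ℝ) ≤ 2 * ((2:ℝ) ^ (1-a) / (a+1)) ^ 2 * t ^ (2*a))]
      rw [← hta]
      nlinarith [hsq]
    · -- on Ioi 1, dominate by c * t ^ (-2)
      have hdom : IntegrableOn
          (fun t : ℝ => 2 * ((2:ℝ) ^ (1-a) * K) ^ 2 * t ^ (-2:ℝ)) (Set.Ioi 1) :=
        (integrableOn_Ioi_rpow_of_lt (by norm_num) one_pos).const_mul _
      refine Integrable.mono hdom hmeas.aestronglyMeasurable.restrict ?_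
      rw [ae_restrict_iff' measurableSet_Ioi]
      refine Filter.Eventually.of_forall fun t htm => ?_
      have ht0 : (0:ℝ) < t := lt_trans one_pos htm
      have hXpos : 0 ≤ (2:ℝ) ^ (1-a) * t ^ (-1:ℝ) * M t := by
        have h0 : 0 ≤ M t := le_min hK0 (by positivity)
        have h1 : (0:ℝ) ≤ (2:ℝ) ^ (1-a) := Real.rpow_nonneg (by norm_num) _
        have h2 : (0:ℝ) ≤ t ^ (-1:ℝ) := Real.rpow_nonneg ht0.le _
        positivity
      have hXle : (2:ℝ) ^ (1-a) * t ^ (-1:ℝ) * M t ≤ (2:ℝ) ^ (1-a) * K * t ^ (-1:ℝ) := by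
        have h1 : M t ≤ K := min_le_left _ _
        calc (2:ℝ) ^ (1-a) * t ^ (-1:ℝ) * M t
            = (2:ℝ) ^ (1-a) * t ^ (-1:ℝ) * M t := rfl
          _ ≤ (2:ℝ) ^ (1-a) * t ^ (-1:ℝ) * K := by
              refine mul_le_mul_of_nonneg_left h1 ?_
              exact mul_nonneg (Real.rpow_nonneg (by norm_num) _) (Real.rpow_nonneg ht0.le _)
          _ = (2:ℝ) ^ (1-a) * K * t ^ (-1:ℝ) := by ring
      have hsq : ((2:ℝ) ^ (1-a) * t ^ (-1:ℝ) * M t) ^ 2 ≤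
          ((2:ℝ) ^ (1-a) * K) ^ 2 * (t ^ (-1:ℝ)) ^ 2 := by
        rw [← mul_pow]
        exact pow_le_pow_left₀ hXpos hXle 2
      have hta : (t ^ (-1:ℝ)) ^ 2 = t ^ (-2:ℝ) := by
        rw [show (-2:ℝ) = (-1) + (-1) by ring, Real.rpow_add ht0]; ring
      rw [Real.norm_eq_abs, Real.norm_eq_abs, abs_of_nonneg (by positivity),
        abs_of_nonneg (show (0:ℝ) ≤ 2 * ((2:ℝ) ^ (1-a) * K) ^ 2 * t ^ (-2:ℝ) by positivity)]
      rw [← hta]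
      nlinarith [hsq]
  have hD : IntegrableOn D (Set.Ioi 0) := hD1.add hD2
  -- measurability of the main function
  have hfmeas : Measurable (fun t : ℝ => (t ^ (-a) *
      ∫ s in Set.Ioc (0:ℝ) t, (t - s) ^ (a - 1) * s ^ a * Real.exp (-α * s)) ^ 2) :=
    (((measurable_id.pow measurable_const).mul (h_meas a α).measurable).pow measurable_const)
  -- pointwise bound
  refine Integrable.mono hD hfmeas.aestronglyMeasurable.restrict ?_
  rw [ae_restrict_iff' measurableSet_Ioi]
  refine Filter.Eventually.of_forall fun t htm => ?_
  have ht0 : (0:ℝ) < t := htm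
  have hB := h_bound a α ha ha1 hα ht0
  set I : ℝ := ∫ s in Set.Ioc (0:ℝ) t, (t - s) ^ (a - 1) * s ^ a * Real.exp (-α * s) with hI_def
  have e1 : t ^ (-a) * (t/2) ^ (a-1) = (2:ℝ) ^ (1-a) * t ^ (-1:ℝ) := by
    rw [Real.div_rpow ht0.le (by norm_num : (0:ℝ) ≤ 2), div_eq_mul_inv,
      show t ^ (-a) * (t ^ (a-1) * ((2:ℝ) ^ (a-1))⁻¹)
        = (t ^ (-a) * t ^ (a-1)) * ((2:ℝ) ^ (a-1))⁻¹ by ring,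
      ← Real.rpow_add ht0, show -a + (a-1) = (-1:ℝ) by ring,
      show (1-a:ℝ) = -(a-1) by ring, Real.rpow_neg (by norm_num : (0:ℝ) ≤ 2)]
    ring
  have e2 : t ^ (-a) * (t ^ a / a) = 1/a := by
    rw [div_eq_mul_inv, ← mul_assoc, ← Real.rpow_add ht0, neg_add_cancel,
      Real.rpow_zero, one_mul, one_div]
  have hXY : |t ^ (-a) * I| ≤
      (2:ℝ) ^ (1-a) * t ^ (-1:ℝ) * M t + (1/a) * (t ^ a * Real.exp (-(α/2) * t)) := by
    rw [abs_mul, abs_of_nonneg (Real.rpow_nonneg ht0.le _)]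
    calc t ^ (-a) * |I|
        ≤ t ^ (-a) * ((t/2) ^ (a-1) * M t + (t ^ a / a) * (t ^ a * Real.exp (-(α/2) * t))) := by
          refine mul_le_mul_of_nonneg_left ?_ (Real.rpow_nonneg ht0.le _)
          rw [← Real.norm_eq_abs]
          exact hB
      _ = (2:ℝ) ^ (1-a) * t ^ (-1:ℝ) * M t + (1/a) * (t ^ a * Real.exp (-(α/2) * t)) := by
          rw [mul_add, ← mul_assoc, ← mul_assoc, e1, e2]
  have hXY0 : 0 ≤ (2:ℝ) ^ (1-a) * t ^ (-1:ℝ) * M t := by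
    have h0 : 0 ≤ M t := le_min hK0 (by positivity)
    have h1 : (0:ℝ) ≤ (2:ℝ) ^ (1-a) := Real.rpow_nonneg (by norm_num) _
    have h2 : (0:ℝ) ≤ t ^ (-1:ℝ) := Real.rpow_nonneg ht0.le _
    positivity
  have hY0 : 0 ≤ (1/a) * (t ^ a * Real.exp (-(α/2) * t)) := by
    have h2 : (0:ℝ) ≤ t ^ a := Real.rpow_nonneg ht0.le _
    positivity
  rw [Real.norm_eq_abs, Real.norm_eq_abs, abs_of_nonneg (sq_nonneg _)]
  have hsq : (t ^ (-a) * I) ^ 2 ≤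
      ((2:ℝ) ^ (1-a) * t ^ (-1:ℝ) * M t + (1/a) * (t ^ a * Real.exp (-(α/2) * t))) ^ 2 := by
    rw [← sq_abs]
    exact pow_le_pow_left₀ (abs_nonneg _) hXY 2
  have hDnn : 0 ≤ D t := by positivity
  rw [abs_of_nonneg hDnn]
  simp only [hD_def]
  nlinarith [sq_nonneg ((2:ℝ) ^ (1-a) * t ^ (-1:ℝ) * M t - (1/a) * (t ^ a * Real.exp (-(α/2) * t)))]

end helpers

theorem stmt18 (H α : ℝ) (hH : H ∈ Set.Ioo (0:ℝ) (1/2)) (hα : 0 < α) :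
    IntegrableOn
      (fun t : ℝ => (t ^ (H - 1/2) *
        ∫ s in Set.Ioc (0:ℝ) t, (t - s) ^ (-1/2 - H) * s ^ (1/2 - H) * Real.exp (-α * s)) ^ 2)
      (Set.Ioi (0:ℝ)) := by
  obtain ⟨h1, h2⟩ := hH
  have := aux_main (1/2 - H) α (by linarith) (by linarith) hα
  simpa only [show H - 1/2 = -(1/2 - H) by ring, show -1/2 - H = (1/2 - H) - 1 by ring] using this
end
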